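/- arXiv:1605.05421 — 8 statements merged into one kernel-verified Lean document; each statement's English description precedes it below -/
import Mathlib

section
/- If a connected k-regular graph on n ≥ 4 vertices has exactly four distinct adjacency eigenvalues k > λ₂ > λ₃ > λ₄ with multiplicities 1, 1, 1, n−3 respectively, then no such graph exists; i.e., there is no connected regular graph with four distinct eigenvalues of which at least three are simple. -/
open Polynomial

noncomputable def adjm {V : Type*} [Fintype V] [DecidableEq V] (G : SimpleGraph V) :
    Matrix V V ℝ :=
  @SimpleGraph.adjMatrix ℝ V G (Classical.decRel _) _ _

/-- The adjacency spectrum of `G`, as a multiset of real roots of the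
characteristic polynomial (so multiplicities are counted). -/
noncomputable def spec {V : Type*} [Fintype V] [DecidableEq V] (G : SimpleGraph V) :
    Multiset ℝ :=
  (adjm G).charpoly.roots

/-- `G` is `k`-regular: every vertex has exactly `k` neighbours. -/
def IsReg {V : Type*} (G : SimpleGraph V) (k : ℕ) : Prop :=
  ∀ v : V, (G.neighborSet v).ncard = k

section helpers
open Matrix Finset

lemma aux_charpoly_conj {m : Type*} [Fintype m] [DecidableEq m] {R : Type*} [CommRing R]
    (U V D : Matrix m m R) (hUV : U * V = 1) :
    (U * D * V).charpoly = D.charpoly := by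
  unfold Matrix.charpoly
  have hmap : ∀ (P Q : Matrix m m R),
      (C : R →+* R[X]).mapMatrix (P * Q) =
        (C : R →+* R[X]).mapMatrix P * (C : R →+* R[X]).mapMatrix Q := fun P Q =>
    _root_.map_mul (RingHom.mapMatrix (C : R →+* R[X])) P Q
  have hscal : (scalar m) (X : R[X]) = (C : R →+* R[X]).mapMatrix U * (scalar m) X *
      (C : R →+* R[X]).mapMatrix V := by
    have comm : (C : R →+* R[X]).mapMatrix U * (scalar m) X =
        (scalar m) X * (C : R →+* R[X]).mapMatrix U :=
      ((scalar_commute (X : R[X]) (fun r => (Commute.all _ _)) _)).eq.symm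
    rw [comm, mul_assoc, ← hmap, hUV]
    simp
  have key : charmatrix (U * D * V) =
      (C : R →+* R[X]).mapMatrix U * charmatrix D * (C : R →+* R[X]).mapMatrix V := by
    unfold charmatrix
    rw [mul_sub, sub_mul, hmap, hmap, ← hscal]
  rw [key, det_mul, det_mul]
  have h1 : ((C : R →+* R[X]).mapMatrix U).det * ((C : R →+* R[X]).mapMatrix V).det = 1 := by
    rw [← det_mul, ← hmap, hUV]; simp
  calc ((C : R →+* R[X]).mapMatrix U).det * (charmatrix D).det * ((C : R →+* R[X]).mapMatrix V).det
      = (charmatrix D).det *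
        (((C : R →+* R[X]).mapMatrix U).det * ((C : R →+* R[X]).mapMatrix V).det) := by ring
    _ = (charmatrix D).det := by rw [h1, mul_one]

lemma aux_charpoly_diagonal {m : Type*} [Fintype m] [DecidableEq m] {R : Type*} [CommRing R]
    (d : m → R) : (Matrix.diagonal d).charpoly = ∏ i, (X - C (d i)) := by
  unfold Matrix.charpoly
  have : charmatrix (Matrix.diagonal d) = Matrix.diagonal fun i => X - C (d i) := by
    ext i j
    by_cases h : i = j
    · subst h; simp [charmatrix_apply_eq]
    · simp [charmatrix_apply_ne _ _ _ h, Matrix.diagonal_apply_ne _ h]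
  rw [this, det_diagonal]

set_option maxHeartbeats 2000000 in
theorem main_contra {n : ℕ} (k : ℕ) (G : SimpleGraph (Fin n)) (a b c : ℝ)
    (hn4 : 4 ≤ n) (hreg : IsReg G k)
    (hka : (k:ℝ) ≠ a) (hkb : (k:ℝ) ≠ b) (hkc : (k:ℝ) ≠ c)
    (hab : a ≠ b) (hac : a ≠ c) (hbc : b ≠ c)
    (hspec : spec G = {(k : ℝ), a, b} + Multiset.replicate (n - 3) c) : False := by
  classical
  set A : Matrix (Fin n) (Fin n) ℝ := adjm G with hA_def
  have hn0 : (0:ℝ) < (n:ℝ) := by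
    have : 0 < n := by omega
    exact_mod_cast this
  have hnne : (n:ℝ) ≠ 0 := ne_of_gt hn0
  -- basic facts about A
  have h01 : ∀ x y, A x y = 0 ∨ A x y = 1 := by
    intro x y
    by_cases h : G.Adj x y
    · right; simp [hA_def, adjm, SimpleGraph.adjMatrix_apply, h]
    · left; simp [hA_def, adjm, SimpleGraph.adjMatrix_apply, h]
  have hsymm : ∀ x y, A x y = A y x := by
    intro x y
    simp [hA_def, adjm, SimpleGraph.adjMatrix_apply, SimpleGraph.adj_comm]
  have hd0 : ∀ x, A x x = 0 := by
    intro x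
    simp [hA_def, adjm, SimpleGraph.adjMatrix_apply]
  have hdeg : ∀ x, ((G.degree x : ℕ) : ℝ) = (k:ℝ) := by
    intro x
    have h1 : (G.neighborSet x).ncard = G.degree x := by
      rw [Set.ncard_eq_toFinset_card']
      congr 1
    rw [← h1, hreg x]
  have hrow : ∀ x, ∑ y, A x y = (k:ℝ) := by
    intro x
    have : ∑ y, A x y = ((G.neighborFinset x).card : ℝ) := by
      rw [SimpleGraph.neighborFinset_eq_filter]
      simp [hA_def, adjm, SimpleGraph.adjMatrix_apply, Finset.sum_boole]
    rw [this, SimpleGraph.card_neighborFinset_eq_degree]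
    exact hdeg x
  have hA2 : ∀ x, ∑ y, A x y * A y x = (k:ℝ) := by
    intro x
    have : ∀ y, A x y * A y x = A x y := by
      intro y
      rw [← hsymm x y]
      rcases h01 x y with h | h <;> rw [h] <;> ring
    rw [Finset.sum_congr rfl fun y _ => this y, hrow]
  -- spectral theorem
  have hherm : A.IsHermitian := by
    unfold Matrix.IsHermitian
    ext x y
    simp [Matrix.conjTranspose_apply, hsymm x y]
  set μ : Fin n → ℝ := hherm.eigenvalues with hμ_def
  set U : Matrix (Fin n) (Fin n) ℝ := (hherm.eigenvectorUnitary : Matrix (Fin n) (Fin n) ℝ)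
    with hU_def
  have hU1 : U * star U = 1 := by
    have := hherm.eigenvectorUnitary.prop
    exact this.2
  have hU2 : star U * U = 1 := by
    have := hherm.eigenvectorUnitary.prop
    exact this.1
  have hst : A = U * Matrix.diagonal μ * star U := by
    have h := hherm.spectral_theorem
    rw [Unitary.conjStarAlgAut_apply] at h
    exact h
  -- charpoly and roots
  have hcp : A.charpoly = ∏ j, (X - C (μ j)) := by
    rw [hst, aux_charpoly_conj U (star U) _ hU1, aux_charpoly_diagonal]
  have hroots : (Finset.univ.val.map μ) =
      {(k : ℝ), a, b} + Multiset.replicate (n - 3) c := by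
    have h1 : A.charpoly.roots = Finset.univ.val.map μ := by
      rw [hcp]
      have : (∏ j, (X - C (μ j))) =
          ((Finset.univ.val.map μ).map fun r => X - C r).prod := by
        rw [Multiset.map_map]
        rfl
      rw [this, Polynomial.roots_multiset_prod_X_sub_C]
    rw [← h1]
    exact hspec
  -- membership and uniqueness
  have hμmem : ∀ j, μ j = (k:ℝ) ∨ μ j = a ∨ μ j = b ∨ μ j = c := by
    intro j
    have h1 : μ j ∈ Finset.univ.val.map μ :=
      Multiset.mem_map_of_mem μ (by rw [Finset.mem_val]; exact Finset.mem_univ j)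
    rw [hroots] at h1
    rcases Multiset.mem_add.1 h1 with h | h
    · simp only [Multiset.insert_eq_cons, Multiset.mem_cons, Multiset.mem_singleton] at h
      tauto
    · exact Or.inr (Or.inr (Or.inr (Multiset.eq_of_mem_replicate h)))
  have hcount : ∀ r : ℝ, (Finset.univ.filter (fun j => r = μ j)).card =
      Multiset.count r ({(k : ℝ), a, b} + Multiset.replicate (n - 3) c) := by
    intro r
    rw [← hroots, Multiset.count_map]
    rfl
  have hcard : ∀ r : ℝ, r ≠ c →
      (Finset.univ.filter (fun j => r = μ j)).card =
        (if r = (k:ℝ) then 1 else 0) + (if r = a then 1 else 0) +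
          (if r = b then 1 else 0) := by
    intro r hrc
    rw [hcount r]
    have hrepl : Multiset.count r (Multiset.replicate (n - 3) c) = 0 := by
      simp only [Multiset.count_replicate]
      split
      · next h => exact ((hrc h.symm).elim)
      · rfl
    simp only [Multiset.insert_eq_cons, Multiset.count_add, hrepl, add_zero,
      Multiset.count_cons, Multiset.count_singleton]
    by_cases h1 : r = (k:ℝ) <;> by_cases h2 : r = a <;> by_cases h3 : r = b <;>
      simp [h1, h2, h3] <;> ring
  -- indices
  have hgetone : ∀ r : ℝ, (Finset.univ.filter (fun j => r = μ j)).card = 1 →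
      ∃ i, μ i = r ∧ ∀ j, μ j = r → j = i := by
    intro r hr
    obtain ⟨i, hi⟩ := Finset.card_eq_one.1 hr
    refine ⟨i, ?_, ?_⟩
    · have : i ∈ Finset.univ.filter (fun j => r = μ j) := by rw [hi]; exact Finset.mem_singleton_self i
      exact ((Finset.mem_filter.1 this).2).symm
    · intro j hj
      have : j ∈ Finset.univ.filter (fun j => r = μ j) :=
        Finset.mem_filter.2 ⟨Finset.mem_univ _, hj.symm⟩
      rw [hi] at this
      exact Finset.mem_singleton.1 this
  obtain ⟨i0, hμi0, huniq0⟩ := hgetone (k:ℝ) (by rw [hcard _ hkc]; simp [hka, hkb])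
  obtain ⟨i1, hμi1, huniq1⟩ := hgetone a (by rw [hcard _ hac]; simp [hka.symm, hab])
  obtain ⟨i2, hμi2, huniq2⟩ := hgetone b (by rw [hcard _ hbc]; simp [hkb.symm, hab.symm])
  have hne01 : i0 ≠ i1 := fun h => hka (by rw [← hμi0, h, hμi1])
  have hne02 : i0 ≠ i2 := fun h => hkb (by rw [← hμi0, h, hμi2])
  have hne12 : i1 ≠ i2 := fun h => hab (by rw [← hμi1, h, hμi2])

  -- entrywise spectral expansion
  have hENT : ∀ x y, A x y = ∑ j, μ j * (U x j * U y j) := by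
    intro x y
    conv_lhs => rw [hst]
    rw [Matrix.mul_apply]
    refine Finset.sum_congr rfl fun j _ => ?_
    rw [Matrix.mul_diagonal]
    rw [Matrix.star_apply, star_trivial]
    ring
  have hAA : A * A = U * Matrix.diagonal (fun j => μ j * μ j) * star U := by
    rw [hst]
    rw [show (U * Matrix.diagonal μ * star U) * (U * Matrix.diagonal μ * star U)
        = U * (Matrix.diagonal μ * ((star U * U) * Matrix.diagonal μ)) * star U by
      simp only [Matrix.mul_assoc]]
    rw [hU2, Matrix.one_mul, Matrix.diagonal_mul_diagonal]
  have hENT2 : ∀ x, ∑ j, μ j * μ j * (U x j * U x j) = (k:ℝ) := by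
    intro x
    have h1 : (A * A) x x = ∑ j, μ j * μ j * (U x j * U x j) := by
      rw [hAA, Matrix.mul_apply]
      refine Finset.sum_congr rfl fun j _ => ?_
      rw [Matrix.mul_diagonal, Matrix.star_apply, star_trivial]
      ring
    rw [← h1, Matrix.mul_apply]
    exact hA2 x
  have hD0 : ∀ x, ∑ j, μ j * (U x j * U x j) = 0 := by
    intro x
    rw [← hENT x x]
    exact hd0 x
  have hrowU : ∀ x, ∑ j, U x j * U x j = 1 := by
    intro x
    have h1 : (U * star U) x x = ∑ j, U x j * U x j := by
      rw [Matrix.mul_apply]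
      exact Finset.sum_congr rfl fun j _ => by rw [Matrix.star_apply, star_trivial]
    rw [← h1, hU1, Matrix.one_apply_eq]
  have hrowU' : ∀ x y, x ≠ y → ∑ j, U x j * U y j = 0 := by
    intro x y hxy
    have h1 : (U * star U) x y = ∑ j, U x j * U y j := by
      rw [Matrix.mul_apply]
      exact Finset.sum_congr rfl fun j _ => by rw [Matrix.star_apply, star_trivial]
    rw [← h1, hU1, Matrix.one_apply_ne hxy]
  have hcolU : ∀ j, ∑ x, U x j * U x j = 1 := by
    intro j
    have h1 : (star U * U) j j = ∑ x, U x j * U x j := by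
      rw [Matrix.mul_apply]
      exact Finset.sum_congr rfl fun x _ => by rw [Matrix.star_apply, star_trivial]
    rw [← h1, hU2, Matrix.one_apply_eq]
  have hcolU' : ∀ j j', j ≠ j' → ∑ x, U x j * U x j' = 0 := by
    intro j j' hjj
    have h1 : (star U * U) j j' = ∑ x, U x j * U x j' := by
      rw [Matrix.mul_apply]
      exact Finset.sum_congr rfl fun x _ => by rw [Matrix.star_apply, star_trivial]
    rw [← h1, hU2, Matrix.one_apply_ne hjj]
  -- eigen-equation
  have hAU : A * U = U * Matrix.diagonal μ := by
    rw [hst, Matrix.mul_assoc, Matrix.mul_assoc, hU2, Matrix.mul_one]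
  have hEIG : ∀ x j, ∑ y, A x y * U y j = μ j * U x j := by
    intro x j
    have h1 := congrFun (congrFun hAU x) j
    rw [Matrix.mul_apply, Matrix.mul_apply] at h1
    rw [h1]
    rw [Finset.sum_eq_single j]
    · rw [Matrix.diagonal_apply_eq]; ring
    · intro y _ hy
      rw [Matrix.diagonal_apply_ne _ hy, mul_zero]
    · intro h; exact absurd (Finset.mem_univ j) h
  -- column sums
  set g : Fin n → ℝ := fun j => ∑ x, U x j with hg_def
  have hCOL : ∀ j, j ≠ i0 → g j = 0 := by
    intro j hj
    have h1 : μ j * g j = (k:ℝ) * g j := by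
      calc μ j * g j = ∑ x, μ j * U x j := by rw [hg_def]; rw [Finset.mul_sum]
        _ = ∑ x, ∑ y, A x y * U y j := Finset.sum_congr rfl fun x _ => (hEIG x j).symm
        _ = ∑ y, (∑ x, A x y) * U y j := by
            rw [Finset.sum_comm]
            exact Finset.sum_congr rfl fun y _ => by rw [Finset.sum_mul]
        _ = ∑ y, (k:ℝ) * U y j := Finset.sum_congr rfl fun y _ => by
            rw [show ∑ x, A x y = (k:ℝ) from by
              rw [Finset.sum_congr rfl fun x _ => hsymm x y]; exact hrow y]
        _ = (k:ℝ) * g j := by rw [hg_def, Finset.mul_sum]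
    have h2 : (μ j - (k:ℝ)) * g j = 0 := by rw [sub_mul, h1]; ring
    rcases mul_eq_zero.1 h2 with h | h
    · exfalso
      exact hj (huniq0 j (by linarith [sub_eq_zero.1 h]))
    · exact h
  have hGONE : ∀ x, U x i0 * g i0 = 1 := by
    intro x
    have h1 : ∑ j, U x j * g j = U x i0 * g i0 := by
      rw [Finset.sum_eq_single i0]
      · intro j _ hj
        rw [hCOL j hj, mul_zero]
      · intro h; exact absurd (Finset.mem_univ i0) h
    have h2 : ∑ j, U x j * g j = 1 := by
      calc ∑ j, U x j * g j = ∑ j, ∑ y, U x j * U y j := by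
            refine Finset.sum_congr rfl fun j _ => ?_
            rw [hg_def, Finset.mul_sum]
        _ = ∑ y, ∑ j, U x j * U y j := Finset.sum_comm
        _ = ∑ y, if x = y then (1:ℝ) else 0 := by
            refine Finset.sum_congr rfl fun y _ => ?_
            by_cases h : x = y
            · subst h; rw [hrowU x, if_pos rfl]
            · rw [hrowU' x y h, if_neg h]
        _ = 1 := by simp
    rw [← h1, h2]
  set γ : ℝ := g i0 with hγ_def
  have hnpos : 0 < n := by omega
  have hγne : γ ≠ 0 := by
    intro h
    have := hGONE ⟨0, hnpos⟩
    rw [h, mul_zero] at this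
    exact zero_ne_one this
  have hE : ∀ x, U x i0 = 1 / γ := by
    intro x
    have := hGONE x
    field_simp
    linarith [this]
  have hγsq : (n:ℝ) * (1/γ * (1/γ)) = 1 := by
    have := hcolU i0
    rw [Finset.sum_congr rfl fun x _ => by rw [hE x]] at this
    rw [Finset.sum_const, Finset.card_univ, Fintype.card_fin, nsmul_eq_mul] at this
    exact this
  have hEn : ∀ x y, U x i0 * U y i0 = 1 / (n:ℝ) := by
    intro x y
    rw [hE x, hE y]
    field_simp
    field_simp at hγsq
    linarith [hγsq]

  -- constancy of squared eigenvector entries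
  have hquad : ∀ (x : Fin n) (r s : ℝ),
      ∑ j, (μ j - r) * (μ j - s) * (U x j * U x j) = (k:ℝ) + r * s := by
    intro x r s
    have e1 : ∀ j : Fin n, (μ j - r) * (μ j - s) * (U x j * U x j) =
        μ j * μ j * (U x j * U x j) - (r + s) * (μ j * (U x j * U x j)) +
          r * s * (U x j * U x j) := fun j => by ring
    rw [Finset.sum_congr rfl fun j _ => e1 j]
    rw [Finset.sum_add_distrib, Finset.sum_sub_distrib, ← Finset.mul_sum, ← Finset.mul_sum]
    rw [hENT2 x, hD0 x, hrowU x]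
    ring
  have hW1 : ∀ x, (a - b) * (a - c) * (U x i1 * U x i1) =
      (k:ℝ) + b * c - ((k:ℝ) - b) * ((k:ℝ) - c) * (1 / (n:ℝ)) := by
    intro x
    have hvan : ∀ j ∈ Finset.univ, j ∉ ({i0, i1} : Finset (Fin n)) →
        (μ j - b) * (μ j - c) * (U x j * U x j) = 0 := by
      intro j _ hj
      simp only [Finset.mem_insert, Finset.mem_singleton, not_or] at hj
      rcases hμmem j with h | h | h | h
      · exact absurd (huniq0 j h) hj.1
      · exact absurd (huniq1 j h) hj.2
      · rw [h]; ring
      · rw [h]; ring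
    have h2 : ∑ j ∈ ({i0, i1} : Finset (Fin n)), (μ j - b) * (μ j - c) * (U x j * U x j)
        = ∑ j, (μ j - b) * (μ j - c) * (U x j * U x j) :=
      Finset.sum_subset (Finset.subset_univ _) hvan
    have h3 : ∑ j ∈ ({i0, i1} : Finset (Fin n)), (μ j - b) * (μ j - c) * (U x j * U x j)
        = ((k:ℝ) - b) * ((k:ℝ) - c) * (U x i0 * U x i0) +
          (a - b) * (a - c) * (U x i1 * U x i1) := by
      rw [Finset.sum_insert (by simp [hne01]), Finset.sum_singleton, hμi0, hμi1]
    rw [hquad x b c] at h2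
    rw [h3, hEn x x] at h2
    linarith [h2]
  have hW2 : ∀ x, (b - a) * (b - c) * (U x i2 * U x i2) =
      (k:ℝ) + a * c - ((k:ℝ) - a) * ((k:ℝ) - c) * (1 / (n:ℝ)) := by
    intro x
    have hvan : ∀ j ∈ Finset.univ, j ∉ ({i0, i2} : Finset (Fin n)) →
        (μ j - a) * (μ j - c) * (U x j * U x j) = 0 := by
      intro j _ hj
      simp only [Finset.mem_insert, Finset.mem_singleton, not_or] at hj
      rcases hμmem j with h | h | h | h
      · exact absurd (huniq0 j h) hj.1
      · rw [h]; ring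
      · exact absurd (huniq2 j h) hj.2
      · rw [h]; ring
    have h2 : ∑ j ∈ ({i0, i2} : Finset (Fin n)), (μ j - a) * (μ j - c) * (U x j * U x j)
        = ∑ j, (μ j - a) * (μ j - c) * (U x j * U x j) :=
      Finset.sum_subset (Finset.subset_univ _) hvan
    have h3 : ∑ j ∈ ({i0, i2} : Finset (Fin n)), (μ j - a) * (μ j - c) * (U x j * U x j)
        = ((k:ℝ) - a) * ((k:ℝ) - c) * (U x i0 * U x i0) +
          (b - a) * (b - c) * (U x i2 * U x i2) := by
      rw [Finset.sum_insert (by simp [hne02]), Finset.sum_singleton, hμi0, hμi2]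
    rw [hquad x a c] at h2
    rw [h3, hEn x x] at h2
    linarith [h2]
  -- conclude squares are 1/n
  have hconst : ∀ (i : Fin n) (P : ℝ), P ≠ 0 →
      (∀ x, P * (U x i * U x i) = P * (1/(n:ℝ))) → ∀ x, U x i * U x i = 1/(n:ℝ) := by
    intro i P hP h x
    exact mul_left_cancel₀ hP (h x)
  have hw1sum : (a - b) * (a - c) =
      (n:ℝ) * ((k:ℝ) + b * c - ((k:ℝ) - b) * ((k:ℝ) - c) * (1 / (n:ℝ))) := by
    have h1 : ∑ x, (a - b) * (a - c) * (U x i1 * U x i1) =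
        ∑ x, ((k:ℝ) + b * c - ((k:ℝ) - b) * ((k:ℝ) - c) * (1 / (n:ℝ))) :=
      Finset.sum_congr rfl fun x _ => by rw [hW1 x]
    rw [← Finset.mul_sum, hcolU i1, Finset.sum_const, Finset.card_univ,
      Fintype.card_fin, nsmul_eq_mul] at h1
    rw [mul_one] at h1
    exact h1
  have hw2sum : (b - a) * (b - c) =
      (n:ℝ) * ((k:ℝ) + a * c - ((k:ℝ) - a) * ((k:ℝ) - c) * (1 / (n:ℝ))) := by
    have h1 : ∑ x, (b - a) * (b - c) * (U x i2 * U x i2) =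
        ∑ x, ((k:ℝ) + a * c - ((k:ℝ) - a) * ((k:ℝ) - c) * (1 / (n:ℝ))) :=
      Finset.sum_congr rfl fun x _ => by rw [hW2 x]
    rw [← Finset.mul_sum, hcolU i2, Finset.sum_const, Finset.card_univ,
      Fintype.card_fin, nsmul_eq_mul] at h1
    rw [mul_one] at h1
    exact h1
  have hP1 : (a - b) * (a - c) ≠ 0 :=
    mul_ne_zero (sub_ne_zero.2 hab) (sub_ne_zero.2 hac)
  have hP2 : (b - a) * (b - c) ≠ 0 :=
    mul_ne_zero (sub_ne_zero.2 (Ne.symm hab)) (sub_ne_zero.2 hbc)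
  have hw1 : ∀ x, U x i1 * U x i1 = 1/(n:ℝ) := by
    refine hconst i1 _ hP1 fun x => ?_
    rw [hW1 x, hw1sum]
    field_simp
  have hw2 : ∀ x, U x i2 * U x i2 = 1/(n:ℝ) := by
    refine hconst i2 _ hP2 fun x => ?_
    rw [hW2 x, hw2sum]
    field_simp
  -- off-diagonal entry formula
  have hOFF : ∀ x y, x ≠ y → A x y = ((k:ℝ) - c) * (1/(n:ℝ)) +
      (a - c) * (U x i1 * U y i1) + (b - c) * (U x i2 * U y i2) := by
    intro x y hxy
    have hS : ∑ j, (μ j - c) * (U x j * U y j) = A x y := by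
      have e1 : ∀ j : Fin n, (μ j - c) * (U x j * U y j) =
          μ j * (U x j * U y j) - c * (U x j * U y j) := fun j => by ring
      rw [Finset.sum_congr rfl fun j _ => e1 j, Finset.sum_sub_distrib, ← Finset.mul_sum]
      rw [hrowU' x y hxy, ← hENT x y]
      ring
    have hvan : ∀ j ∈ Finset.univ, j ∉ ({i0, i1, i2} : Finset (Fin n)) →
        (μ j - c) * (U x j * U y j) = 0 := by
      intro j _ hj
      simp only [Finset.mem_insert, Finset.mem_singleton, not_or] at hj
      rcases hμmem j with h | h | h | h
      · exact absurd (huniq0 j h) hj.1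
      · exact absurd (huniq1 j h) hj.2.1
      · exact absurd (huniq2 j h) hj.2.2
      · rw [h]; ring
    have h2 : ∑ j ∈ ({i0, i1, i2} : Finset (Fin n)), (μ j - c) * (U x j * U y j)
        = ∑ j, (μ j - c) * (U x j * U y j) :=
      Finset.sum_subset (Finset.subset_univ _) hvan
    have h3 : ∑ j ∈ ({i0, i1, i2} : Finset (Fin n)), (μ j - c) * (U x j * U y j)
        = ((k:ℝ) - c) * (U x i0 * U y i0) + (a - c) * (U x i1 * U y i1) +
          (b - c) * (U x i2 * U y i2) := by
      rw [Finset.sum_insert (by simp [hne01, hne02]),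
        Finset.sum_insert (by simp [hne12]), Finset.sum_singleton, hμi0, hμi1, hμi2]
      ring
    rw [hS, h3, hEn x y] at h2
    linarith [h2]
  -- sign dichotomy
  have hsgn : ∀ (i : Fin n), (∀ x, U x i * U x i = 1/(n:ℝ)) → ∀ x y,
      U x i * U y i = 1/(n:ℝ) ∨ U x i * U y i = -(1/(n:ℝ)) := by
    intro i hi x y
    have h1 : (U x i * U y i - 1/(n:ℝ)) * (U x i * U y i + 1/(n:ℝ)) = 0 := by
      have : (U x i * U y i) * (U x i * U y i) = (U x i * U x i) * (U y i * U y i) := by ring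
      have h2 : (U x i * U y i) * (U x i * U y i) = 1/(n:ℝ) * (1/(n:ℝ)) := by
        rw [this, hi x, hi y]
      calc (U x i * U y i - 1/(n:ℝ)) * (U x i * U y i + 1/(n:ℝ))
          = (U x i * U y i) * (U x i * U y i) - 1/(n:ℝ) * (1/(n:ℝ)) := by ring
        _ = 0 := by rw [h2]; ring
    rcases mul_eq_zero.1 h1 with h | h
    · left; linarith [sub_eq_zero.1 h]
    · right; linarith [h]
  have hsgn1 := hsgn i1 hw1
  have hsgn2 := hsgn i2 hw2
  -- class sums
  have hSa : ∑ y, U y i1 = 0 := by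
    have h1 := hcolU' i1 i0 (Ne.symm hne01)
    have h2 : ∑ y, U y i1 * U y i0 = (∑ y, U y i1) * (1/γ) := by
      rw [Finset.sum_mul]
      exact Finset.sum_congr rfl fun y _ => by rw [hE y]
    rw [h2] at h1
    rcases mul_eq_zero.1 h1 with h | h
    · exact h
    · exact absurd h (one_div_ne_zero hγne)
  have hSb : ∑ y, U y i2 = 0 := by
    have h1 := hcolU' i2 i0 (Ne.symm hne02)
    have h2 : ∑ y, U y i2 * U y i0 = (∑ y, U y i2) * (1/γ) := by
      rw [Finset.sum_mul]
      exact Finset.sum_congr rfl fun y _ => by rw [hE y]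
    rw [h2] at h1
    rcases mul_eq_zero.1 h1 with h | h
    · exact h
    · exact absurd h (one_div_ne_zero hγne)
  have hSab : ∑ y, U y i1 * U y i2 = 0 := hcolU' i1 i2 hne12
  -- pick base vertex and three class representatives
  set x0 : Fin n := ⟨0, hnpos⟩ with hx0_def
  have hclass : ∀ (ε δ : ℝ), ε = 1 ∨ ε = -1 → δ = 1 ∨ δ = -1 →
      ∑ y, (1/(n:ℝ) + ε * (U x0 i1 * U y i1)) * (1/(n:ℝ) + δ * (U x0 i2 * U y i2))
        = 1/(n:ℝ) := by
    intro ε δ _ _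
    have e1 : ∀ y : Fin n,
        (1/(n:ℝ) + ε * (U x0 i1 * U y i1)) * (1/(n:ℝ) + δ * (U x0 i2 * U y i2)) =
          1/(n:ℝ) * (1/(n:ℝ)) + (1/(n:ℝ) * ε * U x0 i1) * U y i1 +
            (1/(n:ℝ) * δ * U x0 i2) * U y i2 +
            (ε * δ * (U x0 i1 * U x0 i2)) * (U y i1 * U y i2) := fun y => by ring
    rw [Finset.sum_congr rfl fun y _ => e1 y]
    rw [Finset.sum_add_distrib, Finset.sum_add_distrib, Finset.sum_add_distrib]
    have t1 : ∑ _y : Fin n, 1/(n:ℝ) * (1/(n:ℝ)) = (n:ℝ) * (1/(n:ℝ) * (1/(n:ℝ))) := by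
      rw [Finset.sum_const, Finset.card_univ, Fintype.card_fin, nsmul_eq_mul]
    have t2 : ∑ y, (1/(n:ℝ) * ε * U x0 i1) * U y i1 = 0 := by
      rw [← Finset.mul_sum, hSa, mul_zero]
    have t3 : ∑ y, (1/(n:ℝ) * δ * U x0 i2) * U y i2 = 0 := by
      rw [← Finset.mul_sum, hSb, mul_zero]
    have t4 : ∑ y, (ε * δ * (U x0 i1 * U x0 i2)) * (U y i1 * U y i2) = 0 := by
      rw [← Finset.mul_sum, hSab, mul_zero]
    rw [t1, t2, t3, t4]
    field_simp
    ring
  have hpick : ∀ (ε δ : ℝ), ε = 1 ∨ ε = -1 → δ = 1 ∨ δ = -1 →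
      ∃ y, U x0 i1 * U y i1 = ε * (1/(n:ℝ)) ∧ U x0 i2 * U y i2 = δ * (1/(n:ℝ)) := by
    intro ε δ hε hδ
    have hsum := hclass ε δ hε hδ
    have hne : ∑ y, (1/(n:ℝ) + ε * (U x0 i1 * U y i1)) *
        (1/(n:ℝ) + δ * (U x0 i2 * U y i2)) ≠ 0 := by
      rw [hsum]; exact one_div_ne_zero hnne
    obtain ⟨y, -, hy⟩ := Finset.exists_ne_zero_of_sum_ne_zero hne
    have hf1 : 1/(n:ℝ) + ε * (U x0 i1 * U y i1) ≠ 0 := fun h => hy (by rw [h]; ring)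
    have hf2 : 1/(n:ℝ) + δ * (U x0 i2 * U y i2) ≠ 0 := fun h => hy (by rw [h]; ring)
    refine ⟨y, ?_, ?_⟩
    · rcases hsgn1 x0 y with h | h
      · rcases hε with hε | hε
        · rw [h, hε]; ring
        · exfalso; apply hf1; rw [h, hε]; ring
      · rcases hε with hε | hε
        · exfalso; apply hf1; rw [h, hε]; ring
        · rw [h, hε]; ring
    · rcases hsgn2 x0 y with h | h
      · rcases hδ with hδ | hδ
        · rw [h, hδ]; ring
        · exfalso; apply hf2; rw [h, hδ]; ring
      · rcases hδ with hδ | hδ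
        · exfalso; apply hf2; rw [h, hδ]; ring
        · rw [h, hδ]; ring
  obtain ⟨y1, hy1a, hy1b⟩ := hpick 1 (-1) (Or.inl rfl) (Or.inr rfl)
  obtain ⟨y2, hy2a, hy2b⟩ := hpick (-1) 1 (Or.inr rfl) (Or.inl rfl)
  obtain ⟨y3, hy3a, hy3b⟩ := hpick (-1) (-1) (Or.inr rfl) (Or.inr rfl)
  have hhalf : 1/(n:ℝ) ≠ -(1/(n:ℝ)) := by
    intro h
    have h2 : (1/(n:ℝ)) = 0 := by linarith
    exact (one_div_ne_zero hnne : 1/(n:ℝ) ≠ 0) h2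
  have hy1ne : x0 ≠ y1 := by
    intro h
    rw [← h] at hy1b
    rw [hw2 x0] at hy1b
    exact hhalf (by linarith [hy1b])
  have hy2ne : x0 ≠ y2 := by
    intro h
    rw [← h] at hy2a
    rw [hw1 x0] at hy2a
    exact hhalf (by linarith [hy2a])
  have hy3ne : x0 ≠ y3 := by
    intro h
    rw [← h] at hy3a
    rw [hw1 x0] at hy3a
    exact hhalf (by linarith [hy3a])
  -- final contradiction
  have hv2 : A x0 y1 = ((k:ℝ) + a - b - c) * (1/(n:ℝ)) := by
    rw [hOFF x0 y1 hy1ne, hy1a, hy1b]; ring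
  have hv3 : A x0 y2 = ((k:ℝ) - a + b - c) * (1/(n:ℝ)) := by
    rw [hOFF x0 y2 hy2ne, hy2a, hy2b]; ring
  have hv4 : A x0 y3 = ((k:ℝ) - a - b + c) * (1/(n:ℝ)) := by
    rw [hOFF x0 y3 hy3ne, hy3a, hy3b]; ring
  have hne23 : A x0 y1 ≠ A x0 y2 := by
    rw [hv2, hv3]
    intro h
    apply hab
    have h2 : ((k:ℝ) + a - b - c) = ((k:ℝ) - a + b - c) :=
      mul_right_cancel₀ (one_div_ne_zero hnne) h
    linarith [h2]
  have hne24 : A x0 y1 ≠ A x0 y3 := by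
    rw [hv2, hv4]
    intro h
    apply hac
    have h2 : ((k:ℝ) + a - b - c) = ((k:ℝ) - a - b + c) :=
      mul_right_cancel₀ (one_div_ne_zero hnne) h
    linarith [h2]
  have hne34 : A x0 y2 ≠ A x0 y3 := by
    rw [hv3, hv4]
    intro h
    apply hbc
    have h2 : ((k:ℝ) - a + b - c) = ((k:ℝ) - a - b + c) :=
      mul_right_cancel₀ (one_div_ne_zero hnne) h
    linarith [h2]
  rcases h01 x0 y1 with h2 | h2 <;> rcases h01 x0 y2 with h3 | h3 <;>
    rcases h01 x0 y3 with h4 | h4 <;>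
    first
      | exact hne23 (h2.trans h3.symm)
      | exact hne24 (h2.trans h4.symm)
      | exact hne34 (h3.trans h4.symm)

end helpers

/-- There is no connected `k`-regular graph on `n ≥ 4` vertices whose spectrum is
`{[k]^1, [λ₂]^1, [λ₃]^1, [λ₄]^{n-3}}` with four pairwise distinct eigenvalues,
i.e. no connected regular graph with four distinct eigenvalues of which at least
three are simple. -/
theorem stmt_0 :
    ¬ ∃ (n k : ℕ) (G : SimpleGraph (Fin n)) (l2 l3 l4 : ℝ),
      4 ≤ n ∧ G.Connected ∧ IsReg G k ∧
      (k : ℝ) ≠ l2 ∧ (k : ℝ) ≠ l3 ∧ (k : ℝ) ≠ l4 ∧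
      l2 ≠ l3 ∧ l2 ≠ l4 ∧ l3 ≠ l4 ∧
      spec G = {(k : ℝ), l2, l3} + Multiset.replicate (n - 3) l4 := by
  rintro ⟨n, k, G, l2, l3, l4, hn4, -, hreg, hk2, hk3, hk4, h23, h24, h34, hspec⟩
  exact main_contra k G l2 l3 l4 hn4 hreg hk2 hk3 hk4 h23 h24 h34 hspec
end

section
/- If a connected regular graph has four distinct eigenvalues, then it is walk-regular: for every r ≥ 0, the number of closed walks of length r starting at a vertex x (i.e., the diagonal entry (A^r)_{xx}) is independent of x. -/
open Polynomial Matrix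

noncomputable instance walkRegDec {n : ℕ} (G : SimpleGraph (Fin n)) : DecidableRel G.Adj :=
  Classical.decRel _

private lemma card_adj {n k : ℕ} {G : SimpleGraph (Fin n)} (hreg : IsReg G k) (z : Fin n) :
    (Finset.univ.filter (fun w => G.Adj z w)).card = k := by
  have h := hreg z
  rwa [show G.neighborSet z = ↑(Finset.univ.filter (fun w => G.Adj z w)) from by
        ext w; simp, Set.ncard_coe_finset] at h

private lemma adjm_apply {n : ℕ} (G : SimpleGraph (Fin n)) (x y : Fin n) :
    adjm G x y = if G.Adj x y then 1 else 0 := by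
  simp [adjm, SimpleGraph.adjMatrix_apply]

private lemma mulVec_adjm {n : ℕ} (G : SimpleGraph (Fin n)) (v : Fin n → ℝ) (z : Fin n) :
    ((adjm G) *ᵥ v) z = ∑ w ∈ Finset.univ.filter (fun w => G.Adj z w), v w := by
  have h : ∀ w, adjm G z w * v w = if G.Adj z w then v w else 0 := by
    intro w; by_cases h : G.Adj z w <;> simp [adjm_apply, h]
  simp only [Matrix.mulVec, dotProduct]
  rw [Finset.sum_congr rfl (fun w _ => h w), ← Finset.sum_filter]

/-- Eigenvectors for the eigenvalue `k` of a connected `k`-regular graph are constant. -/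
private lemma eig_const {n k : ℕ} {G : SimpleGraph (Fin n)}
    (hconn : G.Connected) (hreg : IsReg G k) (v : Fin n → ℝ)
    (hv : (adjm G) *ᵥ v = (k : ℝ) • v) (x y : Fin n) : v x = v y := by
  haveI : Nonempty (Fin n) := hconn.nonempty
  obtain ⟨x0, hx0⟩ := Finite.exists_max v
  have hsum : ∀ z : Fin n,
      ∑ w ∈ Finset.univ.filter (fun w => G.Adj z w), v w = (k : ℝ) * v z := by
    intro z
    have h1 : ((adjm G) *ᵥ v) z = (k : ℝ) * v z := by rw [hv]; simp
    rw [mulVec_adjm] at h1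
    exact h1
  have step : ∀ a b : Fin n, G.Adj a b → v a = v x0 → v b = v x0 := by
    intro a b hab ha
    by_contra hb
    have hblt : v b < v x0 := lt_of_le_of_ne (hx0 b) hb
    have hlt : ∑ w ∈ Finset.univ.filter (fun w => G.Adj a w), v w
        < ∑ _w ∈ Finset.univ.filter (fun w => G.Adj a w), v x0 := by
      apply Finset.sum_lt_sum (fun i _ => hx0 i)
      exact ⟨b, by simp [hab], hblt⟩
    rw [Finset.sum_const, card_adj hreg, nsmul_eq_mul] at hlt
    rw [hsum a, ha] at hlt
    exact lt_irrefl _ hlt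
  have reach0 : ∀ (a b : Fin n) (_w : G.Walk a b), v a = v x0 → v b = v x0 := by
    intro a b w
    induction w with
    | nil => exact id
    | cons h _p ih => intro ha; exact ih (step _ _ h ha)
  obtain ⟨wx⟩ := hconn x0 x
  obtain ⟨wy⟩ := hconn x0 y
  rw [reach0 _ _ wx rfl, reach0 _ _ wy rfl]

private lemma eval_charpoly_det {m : Type*} [Fintype m] [DecidableEq m]
    (A : Matrix m m ℝ) (t : ℝ) :
    A.charpoly.eval t = (t • (1 : Matrix m m ℝ) - A).det := by
  rw [Matrix.charpoly, ← Polynomial.coe_evalRingHom, RingHom.map_det]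
  congr 1
  ext i j
  by_cases h : i = j <;>
    simp [h, Matrix.charmatrix_apply, Matrix.one_apply, Matrix.diagonal_apply]

private lemma root_of_eigen {m : Type*} [Fintype m] [DecidableEq m]
    (A : Matrix m m ℝ) (t : ℝ) (v : m → ℝ) (hv : v ≠ 0) (h : A *ᵥ v = t • v) :
    A.charpoly.eval t = 0 := by
  rw [eval_charpoly_det, ← Matrix.exists_mulVec_eq_zero_iff]
  refine ⟨v, hv, ?_⟩
  rw [Matrix.sub_mulVec, Matrix.smul_mulVec, Matrix.one_mulVec, h, sub_self]

private lemma aeval_conj_unitary {m : Type*} [Fintype m] [DecidableEq m]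
    (U D : Matrix m m ℝ) (hU : U * star U = 1) (hU' : star U * U = 1) (p : ℝ[X]) :
    aeval (U * D * star U) p = U * aeval D p * star U := by
  have hpow : ∀ i : ℕ, (U * D * star U) ^ i = U * D ^ i * star U := by
    intro i
    induction i with
    | zero => simp [hU]
    | succ i ih =>
        rw [pow_succ, ih, pow_succ]
        calc U * D ^ i * star U * (U * D * star U)
            = U * D ^ i * ((star U * U) * (D * star U)) := by simp only [mul_assoc]
          _ = U * D ^ i * (D * star U) := by rw [hU', one_mul]
          _ = U * (D ^ i * D) * star U := by simp only [mul_assoc]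
  rw [Polynomial.aeval_eq_sum_range, Polynomial.aeval_eq_sum_range, Finset.mul_sum,
    Finset.sum_mul]
  exact Finset.sum_congr rfl fun i _ => by
    rw [hpow i, Matrix.mul_smul, Matrix.smul_mul]

/-- A real symmetric matrix is annihilated by the product of `(X - μ)` over its distinct
eigenvalues (the distinct roots of its characteristic polynomial). -/
private lemma aeval_distinct_roots_zero {m : Type*} [Fintype m] [DecidableEq m]
    (A : Matrix m m ℝ) (hA : A.IsHermitian) :
    aeval A (∏ μ ∈ A.charpoly.roots.toFinset, (X - C μ)) = 0 := by
  set p : ℝ[X] := ∏ μ ∈ A.charpoly.roots.toFinset, (X - C μ) with hp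
  have hroot : ∀ i, hA.eigenvalues i ∈ A.charpoly.roots.toFinset := by
    intro i
    rw [Multiset.mem_toFinset, Polynomial.mem_roots']
    refine ⟨A.charpoly_monic.ne_zero, ?_⟩
    apply root_of_eigen A _ (⇑(hA.eigenvectorBasis i))
    · intro h0
      apply hA.eigenvectorBasis.orthonormal.ne_zero i
      ext w
      exact congrFun h0 w
    · exact hA.mulVec_eigenvectorBasis i
  have hU : (hA.eigenvectorUnitary : Matrix m m ℝ)
      * star (hA.eigenvectorUnitary : Matrix m m ℝ) = 1 :=
    (Matrix.mem_unitaryGroup_iff).mp hA.eigenvectorUnitary.2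
  have hU' : star (hA.eigenvectorUnitary : Matrix m m ℝ)
      * (hA.eigenvectorUnitary : Matrix m m ℝ) = 1 :=
    (Matrix.mem_unitaryGroup_iff').mp hA.eigenvectorUnitary.2
  have hD : aeval (Matrix.diagonal (RCLike.ofReal ∘ hA.eigenvalues) : Matrix m m ℝ) p = 0 := by
    have hdd : (Matrix.diagonal (RCLike.ofReal ∘ hA.eigenvalues) : Matrix m m ℝ)
        = Matrix.diagonalAlgHom ℝ (RCLike.ofReal ∘ hA.eigenvalues) := rfl
    rw [hdd, Polynomial.aeval_algHom_apply]
    have hz : (aeval (RCLike.ofReal ∘ hA.eigenvalues : m → ℝ) p) = 0 := by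
      funext i
      rw [Polynomial.aeval_fn_apply]
      have : (RCLike.ofReal ∘ hA.eigenvalues : m → ℝ) i = hA.eigenvalues i := by
        simp [RCLike.ofReal_real_eq_id]
      rw [this, Pi.zero_apply, hp, map_prod]
      apply Finset.prod_eq_zero (hroot i)
      simp
    rw [hz, map_zero]
  conv_lhs => rw [hA.spectral_theorem, Unitary.conjStarAlgAut_apply]
  rw [aeval_conj_unitary _ _ hU hU', hD, Matrix.mul_zero, Matrix.zero_mul]

/-- A connected regular graph with exactly four distinct adjacency eigenvalues is
walk-regular: for every `r`, the diagonal entries of `A^r` are all equal. -/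
theorem stmt_3 {n k : ℕ} (G : SimpleGraph (Fin n))
    (hconn : G.Connected) (hreg : IsReg G k)
    (hfour : (spec G).toFinset.card = 4) :
    ∀ (r : ℕ) (x y : Fin n), ((adjm G) ^ r) x x = ((adjm G) ^ r) y y := by
  haveI : Nonempty (Fin n) := hconn.nonempty
  set A := adjm G with hAdef
  have hA : A.IsHermitian := by
    rw [Matrix.IsHermitian, Matrix.conjTranspose_eq_transpose_of_trivial]
    exact SimpleGraph.isSymm_adjMatrix (α := ℝ) G
  have h1 : ∀ x : Fin n, A x x = 0 := by
    intro x; rw [hAdef, adjm_apply, if_neg (G.irrefl)]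
  have h2 : ∀ x : Fin n, (A ^ 2) x x = (k : ℝ) := by
    intro x
    rw [pow_two, Matrix.mul_apply]
    have h : ∀ l, A x l * A l x = if G.Adj x l then (1:ℝ) else 0 := by
      intro l
      by_cases h : G.Adj x l
      · simp [hAdef, adjm_apply, h, G.adj_symm h]
      · simp [hAdef, adjm_apply, h, fun h' => h (G.adj_symm h')]
    rw [Finset.sum_congr rfl (fun l _ => h l), ← Finset.sum_filter, Finset.sum_const,
      card_adj hreg, nsmul_eq_mul, mul_one]
  have hones : A *ᵥ (fun _ => (1:ℝ)) = (k : ℝ) • (fun _ => (1:ℝ)) := by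
    funext z
    rw [hAdef, mulVec_adjm]
    simp [card_adj hreg]
  have hkS : (k : ℝ) ∈ (spec G).toFinset := by
    rw [Multiset.mem_toFinset, show spec G = A.charpoly.roots from rfl, Polynomial.mem_roots']
    refine ⟨A.charpoly_monic.ne_zero, ?_⟩
    exact root_of_eigen A _ _
      (fun h0 => one_ne_zero (congrFun h0 (Classical.arbitrary _))) hones
  set S := (spec G).toFinset with hS
  set p : ℝ[X] := ∏ μ ∈ S, (X - C μ) with hp
  set q : ℝ[X] := ∏ μ ∈ S.erase (k:ℝ), (X - C μ) with hq
  have hp0 : aeval A p = 0 := by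
    rw [hp, hS, show spec G = A.charpoly.roots from rfl]
    exact aeval_distinct_roots_zero A hA
  have hfac : p = (X - C (k:ℝ)) * q := (Finset.mul_prod_erase S _ hkS).symm
  have hqmonic : q.Monic :=
    Polynomial.monic_prod_of_monic _ _ fun μ _ => Polynomial.monic_X_sub_C μ
  have hpmonic : p.Monic :=
    Polynomial.monic_prod_of_monic _ _ fun μ _ => Polynomial.monic_X_sub_C μ
  have hqdeg : q.natDegree = 3 := by
    rw [hq, Polynomial.natDegree_prod _ _ fun μ _ => Polynomial.X_sub_C_ne_zero μ]
    simp [Polynomial.natDegree_X_sub_C, Finset.card_erase_of_mem hkS, hfour]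
  have hpdeg : p.natDegree = 4 := by
    rw [hp, Polynomial.natDegree_prod _ _ fun μ _ => Polynomial.X_sub_C_ne_zero μ]
    simp [Polynomial.natDegree_X_sub_C, hfour]
  set B : Matrix (Fin n) (Fin n) ℝ := aeval A q with hB
  have hAB : A * B = (k : ℝ) • B := by
    have h0 : (A - (k:ℝ) • 1) * B = 0 := by
      have h1' : aeval A p = aeval A (X - C (k:ℝ)) * aeval A q := by rw [hfac, _root_.map_mul]
      have hx : aeval A (X - C (k:ℝ)) = A - (k:ℝ) • 1 := by
        rw [_root_.map_sub, Polynomial.aeval_X, Polynomial.aeval_C,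
          Algebra.algebraMap_eq_smul_one]
      rw [hp0, hx, ← hB] at h1'
      exact h1'.symm
    rw [sub_mul, sub_eq_zero] at h0
    rw [h0, smul_mul_assoc, one_mul]
  have hcol : ∀ (x y j : Fin n), B x j = B y j := by
    intro x y j
    refine eig_const hconn hreg (fun i => B i j) ?_ x y
    funext i
    have hmv : (adjm G *ᵥ fun l => B l j) i = (A * B) i j := by
      rw [← hAdef]
      simp [Matrix.mulVec, dotProduct, Matrix.mul_apply]
    rw [hmv, hAB]
    simp
  have hAt : Aᵀ = A := by
    rw [← Matrix.conjTranspose_eq_transpose_of_trivial]; exact hA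
  have hBt : Bᵀ = B := by
    rw [hB, Polynomial.aeval_eq_sum_range, Matrix.transpose_sum]
    refine Finset.sum_congr rfl fun i _ => ?_
    rw [Matrix.transpose_smul, Matrix.transpose_pow, hAt]
  have hsymmB : ∀ x y : Fin n, B x y = B y x := by
    intro x y
    calc B x y = Bᵀ y x := (Matrix.transpose_apply B y x).symm
      _ = B y x := by rw [hBt]
  have hBdiag : ∀ x y : Fin n, B x x = B y y := by
    intro x y
    calc B x x = B y x := hcol x y x
      _ = B x y := hsymmB y x
      _ = B y y := hcol x y y
  have hq3 : q.coeff 3 = 1 := by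
    have := hqmonic.coeff_natDegree; rwa [hqdeg] at this
  have hp4 : p.coeff 4 = 1 := by
    have := hpmonic.coeff_natDegree; rwa [hpdeg] at this
  have hqs : B = ∑ i ∈ Finset.range 4, q.coeff i • A ^ i := by
    rw [hB, Polynomial.aeval_eq_sum_range, hqdeg]
  have hB3 : ∀ x : Fin n, B x x = q.coeff 0 + q.coeff 2 * (k:ℝ) + (A ^ 3) x x := by
    intro x
    rw [hqs, Matrix.sum_apply, Finset.sum_range_succ, Finset.sum_range_succ,
      Finset.sum_range_succ, Finset.sum_range_one]
    simp only [Matrix.smul_apply, smul_eq_mul, pow_zero, pow_one, Matrix.one_apply_eq,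
      h1 x, h2 x, hq3]
    ring
  have hps : ∑ i ∈ Finset.range 5, p.coeff i • A ^ i = 0 := by
    rw [← Polynomial.aeval_eq_sum_range' (n := 5) (by rw [hpdeg]; omega) A]
    exact hp0
  have hrec : ∀ (m : ℕ) (x : Fin n),
      (A ^ (m + 4)) x x = -∑ i ∈ Finset.range 4, p.coeff i * (A ^ (m + i)) x x := by
    intro m x
    have hkey : ∑ i ∈ Finset.range 5, p.coeff i • A ^ (m + i) = 0 := by
      have hmm : A ^ m * (∑ i ∈ Finset.range 5, p.coeff i • A ^ i) = 0 := by
        rw [hps, mul_zero]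
      rw [Finset.mul_sum] at hmm
      rw [← hmm]
      refine Finset.sum_congr rfl fun i _ => ?_
      rw [mul_smul_comm, pow_add]
    have h0 := Matrix.ext_iff.2 hkey x x
    rw [Matrix.sum_apply] at h0
    simp only [Matrix.smul_apply, smul_eq_mul] at h0
    rw [Finset.sum_range_succ, hp4, one_mul] at h0
    simp only [Matrix.zero_apply] at h0
    linarith
  intro r
  induction r using Nat.strong_induction_on with
  | _ r ih =>
    rcases lt_or_ge r 4 with hr | hr
    · interval_cases r
      · intro x y; simp
      · intro x y; rw [pow_one, h1 x, h1 y]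
      · intro x y; rw [h2 x, h2 y]
      · intro x y
        have hx := hB3 x
        have hy := hB3 y
        have hxy := hBdiag x y
        linarith
    · obtain ⟨m, rfl⟩ := Nat.exists_eq_add_of_le hr
      intro x y
      rw [Nat.add_comm 4 m, hrec m x, hrec m y]
      congr 1
      refine Finset.sum_congr rfl fun i hi => ?_
      rw [ih (m + i) (by have := Finset.mem_range.1 hi; omega) x y]
end

section
/- Let G be a connected walk-regular graph on n vertices of degree k with distinct eigenvalues k, λ₂, …, λ_t, and suppose some eigenvalue λ_j ≠ k has multiplicity 1. Then n is even and G admits a regular partition into halves with degrees ((k+λ_j)/2, (k−λ_j)/2): the vertex set splits into two parts of size n/2 such that every vertex has (k+λ_j)/2 neighbors in its own part and (k−λ_j)/2 neighbors in the other part. -/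
open Polynomial Matrix

lemma charpoly_conj_eq {m : Type*} [Fintype m] [DecidableEq m]
    (U D V : Matrix m m ℝ) (hUV : U * V = 1) :
    (U * D * V).charpoly = D.charpoly := by
  unfold Matrix.charpoly
  have hmap : (C : ℝ →+* ℝ[X]).mapMatrix U * (C : ℝ →+* ℝ[X]).mapMatrix V = 1 := by
    rw [← RingHom.map_mul, hUV, RingHom.map_one]
  have h : charmatrix (U * D * V) =
      (C : ℝ →+* ℝ[X]).mapMatrix U * charmatrix D * (C : ℝ →+* ℝ[X]).mapMatrix V := by
    unfold charmatrix
    rw [mul_sub, sub_mul]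
    congr 1
    · rw [mul_assoc, (scalar_commute (X : ℝ[X]) (Commute.all _) _).eq, ← mul_assoc, hmap, one_mul]
    · rw [RingHom.map_mul, RingHom.map_mul]
  rw [h, det_mul, det_mul]
  have : ((C : ℝ →+* ℝ[X]).mapMatrix U).det * ((C : ℝ →+* ℝ[X]).mapMatrix V).det = 1 := by
    rw [← det_mul, hmap, det_one]
  rw [mul_right_comm, ← det_mul, hmap, det_one, one_mul]

lemma charpoly_diag_eq {m : Type*} [Fintype m] [DecidableEq m] (d : m → ℝ) :
    (Matrix.diagonal d).charpoly = ∏ i, (X - C (d i)) := by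
  unfold Matrix.charpoly
  have : charmatrix (Matrix.diagonal d) = Matrix.diagonal (fun i => X - C (d i)) := by
    ext i j
    by_cases h : i = j
    · subst h; simp
    · simp [h, charmatrix_apply_ne _ _ _ h, Matrix.diagonal_apply_ne _ h]
  rw [this, det_diagonal]

lemma roots_prod_eq {m : Type*} [Fintype m] (d : m → ℝ) :
    (∏ i, (X - C (d i))).roots = Multiset.map d Finset.univ.val := by
  rw [← roots_multiset_prod_X_sub_C (Multiset.map d Finset.univ.val)]
  congr 1
  rw [Multiset.map_map]
  rfl

lemma myConjPow {m : Type*} [Fintype m] [DecidableEq m]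
    (U D V : Matrix m m ℝ) (hUV : U * V = 1) (hVU : V * U = 1) (r : ℕ) :
    (U * D * V) ^ r = U * D ^ r * V := by
  induction r with
  | zero => rw [pow_zero, pow_zero, Matrix.mul_one, hUV]
  | succ r ih =>
    rw [pow_succ, pow_succ, ih]
    calc U * D ^ r * V * (U * D * V) = U * D ^ r * (V * U) * D * V := by
          simp only [Matrix.mul_assoc]
      _ = U * (D ^ r * D) * V := by rw [hVU]; simp only [Matrix.mul_assoc, Matrix.one_mul]

lemma aeval_conj_diag {m : Type*} [Fintype m] [DecidableEq m]
    (U V : Matrix m m ℝ) (d : m → ℝ) (hUV : U * V = 1) (hVU : V * U = 1) (p : ℝ[X]) :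
    aeval (U * Matrix.diagonal d * V) p = U * Matrix.diagonal (fun i => p.eval (d i)) * V := by
  induction p using Polynomial.induction_on' with
  | add p q hp hq =>
    rw [map_add, hp, hq]
    have : (Matrix.diagonal fun i => (p + q).eval (d i)) =
        Matrix.diagonal (fun i => p.eval (d i)) + Matrix.diagonal (fun i => q.eval (d i)) := by
      ext i j; rcases eq_or_ne i j with h|h <;> simp [h]
    rw [this, Matrix.mul_add, Matrix.add_mul]
  | monomial r c =>
    rw [aeval_monomial, myConjPow U _ V hUV hVU]
    have hd : (Matrix.diagonal d) ^ r = Matrix.diagonal (fun i => d i ^ r) := by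
      rw [Matrix.diagonal_pow]; rfl
    have he : (Matrix.diagonal fun i => (monomial r c).eval (d i)) =
        c • Matrix.diagonal (fun i => d i ^ r) := by
      ext i j; rcases eq_or_ne i j with h|h <;> simp [h, eval_monomial]
    rw [hd, he, ← Algebra.smul_def, Matrix.mul_smul, Matrix.smul_mul]

lemma ncard_setOf {α : Type*} [Fintype α] (p : α → Prop) [DecidablePred p] :
    {x | p x}.ncard = (Finset.univ.filter p).card := by
  rw [Set.ncard_eq_toFinset_card', Set.toFinset_setOf]

lemma final_count {n k : ℕ} (hn : 0 < n) (G : SimpleGraph (Fin n)) [DecidableRel G.Adj] (u : Fin n → ℝ) (lj : ℝ)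
    (hne : lj ≠ (k : ℝ))
    (hdeg : ∀ v : Fin n, {w | G.Adj v w}.ncard = k)
    (hnorm : ∑ v, u v * u v = 1)
    (hconst : ∀ v w : Fin n, u v * u v = u w * u w)
    (heig : ∀ v : Fin n, ∑ w, (if G.Adj v w then u w else 0) = lj * u v) :
    Even n ∧
    ∃ V1 : Set (Fin n), 2 * V1.ncard = n ∧
      ∀ v : Fin n,
        2 * ({u | G.Adj v u ∧ (u ∈ V1 ↔ v ∈ V1)}.ncard : ℝ) = (k : ℝ) + lj ∧
        2 * ({u | G.Adj v u ∧ ¬(u ∈ V1 ↔ v ∈ V1)}.ncard : ℝ) = (k : ℝ) - lj := by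
  classical
  set v0 : Fin n := ⟨0, hn⟩ with hv0
  -- all squares equal 1/n
  have hsq : ∀ v, u v * u v = 1 / n := by
    intro v
    have h1 : ∑ w, u w * u w = ∑ _w : Fin n, u v * u v :=
      Finset.sum_congr rfl (fun w _ => (hconst v w).symm)
    rw [hnorm, Finset.sum_const, Finset.card_univ, Fintype.card_fin, nsmul_eq_mul] at h1
    have hn' : (n : ℝ) ≠ 0 := Nat.cast_ne_zero.mpr hn.ne'
    field_simp at h1 ⊢
    linarith
  set c : ℝ := Real.sqrt (1 / n) with hcdef
  have hc : 0 < c := Real.sqrt_pos.mpr (by positivity)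
  have hcc : c * c = 1 / n := Real.mul_self_sqrt (by positivity)
  have hval : ∀ v, u v = c ∨ u v = -c := by
    intro v
    have : u v * u v = c * c := by rw [hsq v, hcc]
    exact mul_self_eq_mul_self_iff.mp this
  have hu : ∀ v, u v = if 0 < u v then c else -c := by
    intro v
    rcases hval v with h | h
    · rw [h, if_pos hc]
    · rw [h, if_neg (by linarith)]
  -- degree as filter card
  have hdeg' : ∀ v : Fin n, (Finset.univ.filter (fun w => G.Adj v w)).card = k := by
    intro v
    rw [← ncard_setOf]
    exact hdeg v
  -- sum of u is zero
  have hsum0 : ∑ v, u v = 0 := by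
    have h1 : ∑ v, (lj * u v) = ∑ v, ∑ w, (if G.Adj v w then u w else 0) :=
      Finset.sum_congr rfl (fun v _ => (heig v).symm)
    rw [Finset.sum_comm] at h1
    have h2 : ∀ w : Fin n, ∑ v, (if G.Adj v w then u w else 0) = (k : ℝ) * u w := by
      intro w
      rw [← Finset.sum_filter]
      have hfe : Finset.univ.filter (fun v => G.Adj v w) =
          Finset.univ.filter (fun v => G.Adj w v) := by
        apply Finset.filter_congr
        intro x _
        simp [G.adj_comm]
      rw [hfe, Finset.sum_const, hdeg' w, nsmul_eq_mul]
    rw [Finset.sum_congr rfl (fun w _ => h2 w), ← Finset.mul_sum, ← Finset.mul_sum] at h1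
    by_contra hS
    exact hne (mul_right_cancel₀ hS h1)
  -- partition
  set T : Finset (Fin n) := Finset.univ.filter (fun v => 0 < u v) with hT
  set Tc : Finset (Fin n) := Finset.univ.filter (fun v => ¬ 0 < u v) with hTc
  have hTcard : T.card + Tc.card = n := by
    rw [hT, hTc, Finset.card_filter_add_card_filter_not, Finset.card_univ,
      Fintype.card_fin]
  have hsum_split : (T.card : ℝ) * c - (Tc.card : ℝ) * c = 0 := by
    have := hsum0
    rw [Finset.sum_congr rfl (fun v _ => hu v)] at this
    rw [Finset.sum_ite, Finset.sum_const, Finset.sum_const, nsmul_eq_mul, nsmul_eq_mul] at this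
    rw [← hT, ← hTc] at this
    linarith [this]
  have hTT : T.card = Tc.card := by
    have h0 : ((T.card : ℝ) - (Tc.card : ℝ)) * c = 0 := by ring_nf; linarith [hsum_split]
    have h1 : (T.card : ℝ) - (Tc.card : ℝ) = 0 := by
      rcases mul_eq_zero.mp h0 with h | h
      · exact h
      · exact absurd h hc.ne'
    have : (T.card : ℝ) = (Tc.card : ℝ) := by linarith
    exact_mod_cast this
  have h2T : 2 * T.card = n := by omega
  constructor
  · exact ⟨T.card, by omega⟩
  refine ⟨{v | 0 < u v}, ?_, ?_⟩
  · rw [ncard_setOf]; exact h2T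
  intro v
  set N : Finset (Fin n) := Finset.univ.filter (fun w => G.Adj v w) with hN
  set a : ℕ := (N.filter (fun w => (0 < u w) ↔ (0 < u v))).card with ha
  set b : ℕ := (N.filter (fun w => ¬((0 < u w) ↔ (0 < u v)))).card with hb
  have habk : a + b = k := by
    rw [ha, hb, Finset.card_filter_add_card_filter_not, hN, hdeg']
  have hsplit : ∑ w ∈ N, u w = lj * u v := by
    rw [hN, Finset.sum_filter, heig v]
  have hNsum : ∑ w ∈ N, u w
      = ∑ w ∈ N.filter (fun w => (0 < u w) ↔ (0 < u v)), u w
      + ∑ w ∈ N.filter (fun w => ¬((0 < u w) ↔ (0 < u v))), u w :=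
    (Finset.sum_filter_add_sum_filter_not N _ _).symm
  have hab : (a : ℝ) - (b : ℝ) = lj := by
    by_cases hv : 0 < u v
    · have huv : u v = c := by rw [hu v, if_pos hv]
      have hcw : ∀ w ∈ N.filter (fun w => (0 < u w) ↔ (0 < u v)), u w = c := by
        intro w hw
        rw [hu w, if_pos (((Finset.mem_filter.mp hw).2).mpr hv)]
      have hcw' : ∀ w ∈ N.filter (fun w => ¬((0 < u w) ↔ (0 < u v))), u w = -c := by
        intro w hw
        have := (Finset.mem_filter.mp hw).2
        rw [hu w, if_neg (by tauto)]
      have e1 : ∑ w ∈ N.filter (fun w => (0 < u w) ↔ (0 < u v)), u w = (a : ℝ) * c := by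
        rw [Finset.sum_congr rfl hcw, Finset.sum_const, nsmul_eq_mul, ha]
      have e2 : ∑ w ∈ N.filter (fun w => ¬((0 < u w) ↔ (0 < u v))), u w = (b : ℝ) * (-c) := by
        rw [Finset.sum_congr rfl hcw', Finset.sum_const, nsmul_eq_mul, hb]
      have h4 : (a : ℝ) * c + (b : ℝ) * (-c) = lj * c := by
        rw [← e1, ← e2, ← hNsum, hsplit, huv]
      have h5 : ((a : ℝ) - (b : ℝ)) * c = lj * c := by linear_combination h4
      exact mul_right_cancel₀ hc.ne' h5
    · have huv : u v = -c := by rw [hu v, if_neg hv]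
      have hcw : ∀ w ∈ N.filter (fun w => (0 < u w) ↔ (0 < u v)), u w = -c := by
        intro w hw
        have := (Finset.mem_filter.mp hw).2
        rw [hu w, if_neg (by tauto)]
      have hcw' : ∀ w ∈ N.filter (fun w => ¬((0 < u w) ↔ (0 < u v))), u w = c := by
        intro w hw
        have := (Finset.mem_filter.mp hw).2
        rw [hu w, if_pos (by tauto)]
      have e1 : ∑ w ∈ N.filter (fun w => (0 < u w) ↔ (0 < u v)), u w = (a : ℝ) * (-c) := by
        rw [Finset.sum_congr rfl hcw, Finset.sum_const, nsmul_eq_mul, ha]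
      have e2 : ∑ w ∈ N.filter (fun w => ¬((0 < u w) ↔ (0 < u v))), u w = (b : ℝ) * c := by
        rw [Finset.sum_congr rfl hcw', Finset.sum_const, nsmul_eq_mul, hb]
      have h4 : (a : ℝ) * (-c) + (b : ℝ) * c = lj * (-c) := by
        rw [← e1, ← e2, ← hNsum, hsplit, huv]
      have h5 : ((a : ℝ) - (b : ℝ)) * c = lj * c := by linear_combination -h4
      exact mul_right_cancel₀ hc.ne' h5
  have hka : (a : ℝ) + (b : ℝ) = (k : ℝ) := by exact_mod_cast congrArg (Nat.cast : ℕ → ℝ) habk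
  constructor
  · have hset : ({w | G.Adj v w ∧ ((w ∈ {x | 0 < u x}) ↔ (v ∈ {x | 0 < u x}))} :
        Set (Fin n)).ncard = a := by
      simp only [Set.mem_setOf_eq]
      rw [ncard_setOf, ha, hN, Finset.filter_filter]
    rw [hset]
    linarith
  · have hset : ({w | G.Adj v w ∧ ¬((w ∈ {x | 0 < u x}) ↔ (v ∈ {x | 0 < u x}))} :
        Set (Fin n)).ncard = b := by
      simp only [Set.mem_setOf_eq]
      rw [ncard_setOf, hb, hN, Finset.filter_filter]
    rw [hset]
    linarith


/-- Half-partition lemma: if `G` is a connected walk-regular `k`-regular graph on `n`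
vertices and `λⱼ ≠ k` is a simple eigenvalue, then `n` is even and the vertices can be
split into two halves so that every vertex has `(k+λⱼ)/2` neighbours in its own part
and `(k-λⱼ)/2` in the other part. -/
theorem stmt_4 {n k : ℕ} (G : SimpleGraph (Fin n))
    (hconn : G.Connected) (hreg : IsReg G k)
    (hwalk : ∀ (r : ℕ) (x y : Fin n), ((adjm G) ^ r) x x = ((adjm G) ^ r) y y)
    (lj : ℝ) (hmem : lj ∈ spec G) (hne : lj ≠ (k : ℝ))
    (hsimple : (spec G).count lj = 1) :
    Even n ∧
    ∃ V1 : Set (Fin n), 2 * V1.ncard = n ∧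
      ∀ v : Fin n,
        2 * ({u | G.Adj v u ∧ (u ∈ V1 ↔ v ∈ V1)}.ncard : ℝ) = (k : ℝ) + lj ∧
        2 * ({u | G.Adj v u ∧ ¬(u ∈ V1 ↔ v ∈ V1)}.ncard : ℝ) = (k : ℝ) - lj := by
  classical
  have hn : 0 < n := by
    have : Nonempty (Fin n) := hconn.nonempty
    exact Fin.pos_iff_nonempty.mpr this
  set A := adjm G with hAdef
  have hA : A.IsHermitian := by
    rw [Matrix.IsHermitian, conjTranspose_eq_transpose_of_trivial]
    exact SimpleGraph.isSymm_adjMatrix G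
  set U : Matrix (Fin n) (Fin n) ℝ := (hA.eigenvectorUnitary : Matrix (Fin n) (Fin n) ℝ) with hU
  set μ : Fin n → ℝ := hA.eigenvalues with hμ
  have hspec : A = U * Matrix.diagonal μ * star U := by
    have h := hA.spectral_theorem
    simpa using h
  have hUV : U * star U = 1 := by
    exact (Matrix.mem_unitaryGroup_iff).mp hA.eigenvectorUnitary.2
  have hVU : star U * U = 1 := by
    exact (Matrix.mem_unitaryGroup_iff').mp hA.eigenvectorUnitary.2
  have hsU : ∀ i j, (star U) i j = U j i := by
    intro i j
    simp [Matrix.star_apply]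
  have hAapp : ∀ v w, A v w = if G.Adj v w then 1 else 0 := by
    intro v w
    simp [hAdef, adjm]
  -- the roots of the charpoly are the eigenvalues
  have hroots : spec G = Multiset.map μ Finset.univ.val := by
    show A.charpoly.roots = _
    rw [hspec, charpoly_conj_eq U _ (star U) hUV, charpoly_diag_eq, roots_prod_eq]
  -- there is a unique index j with eigenvalue lj
  have hfil : (Finset.univ.filter (fun i => lj = μ i)).card = 1 := by
    rw [hroots, Multiset.count_map] at hsimple
    rw [Finset.card_def, Finset.filter_val]
    exact hsimple
  obtain ⟨j, hj⟩ := Finset.card_eq_one.mp hfil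
  have hmem' : ∀ i, lj = μ i ↔ i = j := by
    intro i
    constructor
    · intro h
      have hi : i ∈ Finset.univ.filter (fun i => lj = μ i) :=
        Finset.mem_filter.mpr ⟨Finset.mem_univ _, h⟩
      rw [hj] at hi
      exact Finset.mem_singleton.mp hi
    · intro h
      rw [h]
      have hjj : j ∈ Finset.univ.filter (fun i => lj = μ i) := by
        rw [hj]; exact Finset.mem_singleton_self j
      exact (Finset.mem_filter.mp hjj).2
  have hμj : μ j = lj := ((hmem' j).mpr rfl).symm
  -- the eigenvector
  set u : Fin n → ℝ := fun v => U v j with hu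
  -- norm one
  have hnorm : ∑ v, u v * u v = 1 := by
    have h := congrFun (congrFun hVU j) j
    rw [Matrix.mul_apply] at h
    simp only [Matrix.one_apply_eq] at h
    calc ∑ v, u v * u v = ∑ v, (star U) j v * U v j := by
          refine Finset.sum_congr rfl fun v _ => ?_
          rw [hsU]
      _ = 1 := h
  -- interpolation polynomial : spectral projector
  set f : Polynomial ℝ := Lagrange.interpolate (Finset.image μ Finset.univ) id
    (fun x => if x = lj then 1 else 0) with hf
  have heval : ∀ i, f.eval (μ i) = if i = j then 1 else 0 := by
    intro i
    have h := Lagrange.eval_interpolate_at_node (fun x => if x = lj then 1 else 0)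
      (Set.injOn_id _) (Finset.mem_image_of_mem μ (Finset.mem_univ i))
    simp only [id] at h
    rw [hf, h]
    by_cases hij : i = j
    · subst hij; rw [if_pos hμj, if_pos rfl]
    · rw [if_neg, if_neg hij]
      intro hcon
      exact hij ((hmem' i).mp hcon.symm)
  have hE : Polynomial.aeval A f = U * Matrix.diagonal (fun i => f.eval (μ i)) * star U := by
    rw [hspec]
    exact aeval_conj_diag U (star U) μ hUV hVU f
  have hEentry : ∀ v w, (Polynomial.aeval A f) v w = u v * u w := by
    intro v w
    rw [hE]
    have h1 : (U * Matrix.diagonal (fun i => f.eval (μ i)) * star U) v w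
        = ∑ i, U v i * (f.eval (μ i)) * U w i := by
      rw [Matrix.mul_apply]
      refine Finset.sum_congr rfl fun i _ => ?_
      rw [Matrix.mul_diagonal, hsU]
    rw [h1]
    have h2 : ∀ i : Fin n, U v i * (f.eval (μ i)) * U w i
        = if i = j then U v i * U w i else 0 := by
      intro i
      rw [heval i]
      by_cases hij : i = j
      · rw [if_pos hij, if_pos hij]; ring
      · rw [if_neg hij, if_neg hij]; ring
    rw [Finset.sum_congr rfl fun i _ => h2 i, Finset.sum_ite_eq' Finset.univ j
      (fun i => U v i * U w i), if_pos (Finset.mem_univ j)]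
  have hdiagE : ∀ v w : Fin n, (Polynomial.aeval A f) v v = (Polynomial.aeval A f) w w := by
    intro v w
    rw [Polynomial.aeval_eq_sum_range]
    rw [Matrix.sum_apply, Matrix.sum_apply]
    refine Finset.sum_congr rfl fun i _ => ?_
    rw [Matrix.smul_apply, Matrix.smul_apply, hwalk i v w]
  have hconst : ∀ v w : Fin n, u v * u v = u w * u w := by
    intro v w
    rw [← hEentry v v, ← hEentry w w]
    exact hdiagE v w
  -- eigenvalue equation
  have hAU : A * U = U * Matrix.diagonal μ := by
    calc A * U = U * Matrix.diagonal μ * (star U * U) := by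
          rw [hspec, Matrix.mul_assoc, Matrix.mul_assoc]
      _ = U * Matrix.diagonal μ := by rw [hVU, Matrix.mul_one]
  have heig : ∀ v : Fin n, ∑ w, (if G.Adj v w then u w else 0) = lj * u v := by
    intro v
    have h := congrFun (congrFun hAU v) j
    rw [Matrix.mul_apply, Matrix.mul_diagonal] at h
    have h' : ∑ w, (if G.Adj v w then u w else 0) = ∑ w, A v w * U w j := by
      refine Finset.sum_congr rfl fun w _ => ?_
      rw [hAapp, ite_mul, one_mul, zero_mul]
    rw [h', h, hμj]
    ring
  have hdeg : ∀ v : Fin n, {w | G.Adj v w}.ncard = k := fun v => hreg v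
  exact final_count hn G u lj hne hdeg hnorm hconst heig
end

section
/- Under the hypotheses of the half-partition lemma, n divides both ∏_{i≠j}(k−λ_i) + ∏_{i≠j}(λ_j−λ_i) and ∏_{i≠j}(k−λ_i) − ∏_{i≠j}(λ_j−λ_i), where the products run over all distinct eigenvalues λ_i with i ≠ j (including λ₁ = k in the second factor convention of the paper). -/
open Polynomial

open Matrix

section Helpers

variable {m : Type*} [Fintype m] [DecidableEq m]

lemma conj_charpoly (U D : Matrix m m ℝ) (h1 : U * star U = 1) :
    (U * D * star U).charpoly = D.charpoly := by
  unfold Matrix.charpoly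
  have hmap : ∀ (M N : Matrix m m ℝ), (M * N).map (C : ℝ → ℝ[X]) =
      M.map C * N.map C := fun M N => by
    simpa using (RingHom.mapMatrix (C : ℝ →+* ℝ[X])).map_mul M N
  have hone : (1 : Matrix m m ℝ).map (C : ℝ → ℝ[X]) = 1 := by
    simpa using (RingHom.mapMatrix (C : ℝ →+* ℝ[X])).map_one
  have h1' : U.map (C : ℝ → ℝ[X]) * (star U).map C = 1 := by
    rw [← hmap, h1, hone]
  have key : charmatrix (U * D * star U) =
      U.map C * charmatrix D * (star U).map C := by
    unfold charmatrix
    simp only [RingHom.mapMatrix_apply, Matrix.mul_sub, Matrix.sub_mul]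
    congr 1
    · rw [mul_assoc, (scalar_commute (X : ℝ[X]) (fun r' => Commute.all _ _)
        ((star U).map C)).eq, ← mul_assoc, h1', one_mul]
    · rw [hmap, hmap]
  rw [key, det_mul, det_mul, mul_comm, ← mul_assoc, ← det_mul, ← hmap,
    mul_eq_one_comm.mp h1, hone, det_one, one_mul]

lemma charpoly_diag {N : ℕ} (d : Fin N → ℝ) :
    (Matrix.diagonal d).charpoly = ∏ i, (X - C (d i)) := by
  rw [Matrix.charpoly_of_upperTriangular _ (Matrix.blockTriangular_diagonal d)]
  simp

lemma conj_aeval (U D : Matrix m m ℝ) (h1 : U * star U = 1) (p : ℝ[X]) :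
    aeval (U * D * star U) p = U * (aeval D p) * star U := by
  have h2 : star U * U = 1 := mul_eq_one_comm.mp h1
  have hpow : ∀ r : ℕ, (U * D * star U) ^ r = U * D ^ r * star U := by
    intro r
    induction r with
    | zero => simpa using h1.symm
    | succ r ih =>
        rw [pow_succ, ih, pow_succ]
        rw [show U * D ^ r * star U * (U * D * star U)
          = U * D ^ r * (star U * U) * D * star U by noncomm_ring]
        rw [h2, mul_one, ← mul_assoc, mul_assoc U (D ^ r) D]
  induction p using Polynomial.induction_on' with
  | add p q hp hq =>
      rw [map_add, hp, hq, map_add]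
      simp [Matrix.mul_add, Matrix.add_mul]
  | monomial r a =>
      simp only [aeval_monomial, hpow, Algebra.algebraMap_eq_smul_one, smul_mul_assoc,
        one_mul, Matrix.mul_smul, Matrix.smul_mul]

lemma aeval_diag {N : ℕ} (d : Fin N → ℝ) (p : ℝ[X]) :
    aeval (Matrix.diagonal d) p = Matrix.diagonal (fun i => p.eval (d i)) := by
  induction p using Polynomial.induction_on' with
  | add p q hp hq => rw [map_add, hp, hq, Matrix.diagonal_add]; simp
  | monomial r a =>
      rw [aeval_monomial, Algebra.algebraMap_eq_smul_one, smul_mul_assoc, one_mul,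
        Matrix.diagonal_pow, Matrix.smul_eq_diagonal_mul]
      simp [Matrix.diagonal_mul_diagonal, eval_monomial]

variable {m : Type*} [Fintype m] [DecidableEq m]

lemma aeval_int_map (M : Matrix m m ℤ) (w : ℤ[X]) :
    (aeval (M.map (Int.cast : ℤ → ℝ)) (w.map (algebraMap ℤ ℝ))) =
      (aeval M w).map (Int.cast : ℤ → ℝ) := by
  rw [aeval_map_algebraMap]
  exact Polynomial.aeval_algHom_apply ((Int.castRingHom ℝ).mapMatrix.toIntAlgHom) M w

end Helpers

/-- Under the hypotheses of the half-partition lemma, `n` divides both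
`∏_{i≠j}(k-λᵢ) + ∏_{i≠j}(λⱼ-λᵢ)` and `∏_{i≠j}(k-λᵢ) - ∏_{i≠j}(λⱼ-λᵢ)`, the
products running over the distinct eigenvalues other than `k` and `λⱼ`. -/
theorem stmt_5 {n k : ℕ} (G : SimpleGraph (Fin n))
    (hconn : G.Connected) (hreg : IsReg G k)
    (hwalk : ∀ (r : ℕ) (x y : Fin n), ((adjm G) ^ r) x x = ((adjm G) ^ r) y y)
    (lj : ℝ) (hmem : lj ∈ spec G) (hne : lj ≠ (k : ℝ))
    (hsimple : (spec G).count lj = 1) :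
    (∃ a : ℤ,
      (∏ mu ∈ (spec G).toFinset \ {(k : ℝ), lj}, ((k : ℝ) - mu)) +
        (∏ mu ∈ (spec G).toFinset \ {(k : ℝ), lj}, (lj - mu)) = (n : ℝ) * a) ∧
    (∃ b : ℤ,
      (∏ mu ∈ (spec G).toFinset \ {(k : ℝ), lj}, ((k : ℝ) - mu)) -
        (∏ mu ∈ (spec G).toFinset \ {(k : ℝ), lj}, (lj - mu)) = (n : ℝ) * b) := by
  classical
  letI instAdj : DecidableRel G.Adj := Classical.decRel _
  have hn0 : 0 < n := Fin.pos_iff_nonempty.mpr hconn.nonempty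
  have hnR : (0:ℝ) < n := by exact_mod_cast hn0
  set A : Matrix (Fin n) (Fin n) ℝ := adjm G with hAdef
  have hAeq : G.adjMatrix ℝ = A := rfl
  have hAapp : ∀ x y, A x y = if G.Adj x y then 1 else 0 := fun x y => rfl
  have hA : A.IsHermitian := by
    show Aᴴ = A
    ext i j
    simp only [Matrix.conjTranspose_apply, hAapp, star_trivial]
    simp [G.adj_comm j i]
  -- eigen data
  set lam : Fin n → ℝ := hA.eigenvalues with hlamdef
  set U : Matrix (Fin n) (Fin n) ℝ := (hA.eigenvectorUnitary : Matrix (Fin n) (Fin n) ℝ)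
    with hUdef
  have hU1 : U * star U = 1 := by
    rw [hUdef]
    exact Matrix.mem_unitaryGroup_iff.mp hA.eigenvectorUnitary.2
  have hspec : A = U * Matrix.diagonal lam * star U := by
    have h := hA.spectral_theorem
    rwa [RCLike.ofReal_real_eq_id, Function.id_comp] at h
  have hdeg : ∀ v : Fin n, G.degree v = k := by
    intro v
    have h := hreg v
    rwa [← Nat.card_coe_set_eq, Nat.card_eq_fintype_card,
      SimpleGraph.card_neighborSet_eq_degree] at h
  have hconst : ∀ v : Fin n → ℝ, A *ᵥ v = (k:ℝ) • v → ∀ x y, v x = v y := by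
    intro v hv x y
    have hL : G.lapMatrix ℝ *ᵥ v = 0 := by
      have h1 : (G.lapMatrix ℝ) *ᵥ v = G.degMatrix ℝ *ᵥ v - A *ᵥ v := by
        rw [SimpleGraph.lapMatrix, Matrix.sub_mulVec, hAeq]
      rw [h1, hv]
      funext z
      simp only [SimpleGraph.degMatrix, Pi.sub_apply, Pi.zero_apply, Pi.smul_apply,
        smul_eq_mul, Matrix.mulVec_diagonal]
      rw [hdeg z]
      ring
    have h0 := (G.lapMatrix_mulVec_eq_zero_iff_forall_reachable (x := v)).mp
      hL x y (hconn.preconnected x y)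
    exact h0
  -- characteristic polynomial and spectrum
  have hcp : A.charpoly = ∏ i, (X - C (lam i)) := by
    rw [hspec, conj_charpoly _ _ hU1, charpoly_diag]
  have hspecG : spec G = Multiset.map lam Finset.univ.val := by
    show A.charpoly.roots = _
    rw [hcp, show (∏ i, (X - C (lam i)))
        = ((Finset.univ.val.map lam).map (fun a => X - C a)).prod by
      rw [Multiset.map_map]; rfl]
    rw [Polynomial.roots_multiset_prod_X_sub_C]
  have hlammem : ∀ i, lam i ∈ spec G := by
    intro i
    rw [hspecG]
    exact Multiset.mem_map_of_mem _ (Finset.mem_univ_val i)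
  have hcpne : A.charpoly ≠ 0 := (Matrix.charpoly_monic A).ne_zero
  -- orthonormality of columns
  have hUorth : ∀ i i', (∑ x, U x i * U x i') = if i = i' then 1 else 0 := by
    intro i i'
    have h2 : star U * U = 1 := mul_eq_one_comm.mp hU1
    have h3 : (1 : Matrix (Fin n) (Fin n) ℝ) i i' = ∑ x, U x i * U x i' := by
      rw [← h2, Matrix.mul_apply]
      simp [Matrix.star_apply]
    rw [← h3, Matrix.one_apply]
  -- eigenvector columns
  have hcolfun : ∀ i, (fun x => U x i) = ⇑(hA.eigenvectorBasis i) := by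
    intro i; funext x; rw [hUdef]; rfl
  have hcol : ∀ i, A *ᵥ (fun x => U x i) = lam i • (fun x => U x i) := by
    intro i
    rw [hcolfun i]
    exact hA.mulVec_eigenvectorBasis i
  -- k is an eigenvalue
  have hkroot : A.charpoly.IsRoot (k:ℝ) := by
    have hdet : ((k:ℝ) • (1 : Matrix (Fin n) (Fin n) ℝ) - A).det = 0 := by
      rw [← Matrix.exists_mulVec_eq_zero_iff]
      refine ⟨fun _ => 1, ?_, ?_⟩
      · intro hcontra
        have := congrFun hcontra ⟨0, hn0⟩
        simp at this
      · funext z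
        simp only [Matrix.sub_mulVec, Pi.sub_apply, Matrix.smul_mulVec,
          Matrix.one_mulVec, Pi.smul_apply, smul_eq_mul, Pi.zero_apply, Pi.one_apply]
        rw [← hAeq, SimpleGraph.adjMatrix_mulVec_apply]
        have hs : ∑ u ∈ G.neighborFinset z, (1:ℝ) = (G.degree z : ℝ) := by
          rw [Finset.sum_const, nsmul_eq_mul, mul_one]; rfl
        rw [hs, hdeg z]
        ring
    have heval : A.charpoly.eval (k:ℝ) = ((k:ℝ) • (1 : Matrix (Fin n) (Fin n) ℝ) - A).det := by
      rw [Matrix.charpoly, ← Polynomial.coe_evalRingHom, RingHom.map_det]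
      congr 1
      ext i j
      by_cases hij : i = j
      · subst hij; simp [Matrix.charmatrix_apply_eq]
      · simp [Matrix.charmatrix_apply_ne _ _ _ hij, Matrix.one_apply_ne hij, hij]
    rw [Polynomial.IsRoot, heval, hdet]
  have hkmem : (k:ℝ) ∈ spec G := by
    show _ ∈ A.charpoly.roots
    exact (Polynomial.mem_roots hcpne).mpr hkroot
  -- unique index for lj
  obtain ⟨j0, hj0, hj0uniq⟩ : ∃ j0, lam j0 = lj ∧ ∀ i, lam i = lj → i = j0 := by
    have hcount : Multiset.count lj (Multiset.map lam Finset.univ.val) = 1 := by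
      rw [← hspecG]; exact hsimple
    rw [Multiset.count_map] at hcount
    obtain ⟨j0, hj0⟩ := Multiset.card_eq_one.mp hcount
    have hmemj0 : j0 ∈ Multiset.filter (fun i => lj = lam i) Finset.univ.val := by
      rw [hj0]; exact Multiset.mem_singleton_self j0
    rw [Multiset.mem_filter] at hmemj0
    refine ⟨j0, hmemj0.2.symm, fun i hi => ?_⟩
    have : i ∈ Multiset.filter (fun i => lj = lam i) Finset.univ.val := by
      rw [Multiset.mem_filter]
      exact ⟨Finset.mem_univ_val i, hi.symm⟩
    rw [hj0, Multiset.mem_singleton] at this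
    exact this
  -- an index for k and its uniqueness
  obtain ⟨i0, hi0⟩ : ∃ i0, lam i0 = (k:ℝ) := by
    rw [hspecG] at hkmem
    obtain ⟨i0, _, h⟩ := Multiset.mem_map.mp hkmem
    exact ⟨i0, h⟩
  have hkuniq : ∀ i, lam i = (k:ℝ) → i = i0 := by
    intro i hi
    by_contra hii
    -- two orthogonal constant eigenvectors
    have hc1 : ∀ x y, U x i = U y i :=
      fun x y => hconst _ ((hcol i).trans (by rw [hi])) x y
    have hc2 : ∀ x y, U x i0 = U y i0 :=
      fun x y => hconst _ ((hcol i0).trans (by rw [hi0])) x y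
    have horth := hUorth i i0
    rw [if_neg hii] at horth
    have hn1 := hUorth i i
    rw [if_pos rfl] at hn1
    have hn2 := hUorth i0 i0
    rw [if_pos rfl] at hn2
    set x0 : Fin n := ⟨0, hn0⟩
    have e1 : (∑ x, U x i * U x i0) = n * (U x0 i * U x0 i0) := by
      rw [Finset.sum_congr rfl (fun x _ => by rw [hc1 x x0, hc2 x x0])]
      simp [Finset.sum_const, mul_comm]
    have e2 : (∑ x, U x i * U x i) = n * (U x0 i * U x0 i) := by
      rw [Finset.sum_congr rfl (fun x _ => by rw [hc1 x x0])]
      simp [Finset.sum_const, mul_comm]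
    have e3 : (∑ x, U x i0 * U x i0) = n * (U x0 i0 * U x0 i0) := by
      rw [Finset.sum_congr rfl (fun x _ => by rw [hc2 x x0])]
      simp [Finset.sum_const, mul_comm]
    rw [e1] at horth
    rw [e2] at hn1
    rw [e3] at hn2
    have hu1 : U x0 i ≠ 0 := by
      intro h0; rw [h0] at hn1; simp at hn1
    have hu2 : U x0 i0 ≠ 0 := by
      intro h0; rw [h0] at hn2; simp at hn2
    exact (mul_ne_zero hu1 hu2)
      ((mul_eq_zero.mp horth).resolve_left (ne_of_gt hnR))
  have hij0 : i0 ≠ j0 := by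
    intro h
    rw [h, hj0] at hi0
    exact hne hi0
  -- diagonal entries of polynomials in A are constant
  have hdiagconst : ∀ p : ℝ[X], ∀ x y, (aeval A p) x x = (aeval A p) y y := by
    intro p x y
    have hsum := Polynomial.aeval_eq_sum_range (S := Matrix (Fin n) (Fin n) ℝ) (p := p) A
    rw [hsum, Matrix.sum_apply, Matrix.sum_apply]
    refine Finset.sum_congr rfl fun r _ => ?_
    rw [Matrix.smul_apply, Matrix.smul_apply, hwalk r x y]
  -- entries of conjugated diagonal matrices
  have hentry : ∀ (d : Fin n → ℝ) x y,
      (U * Matrix.diagonal d * star U) x y = ∑ i, d i * (U x i * U y i) := by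
    intro d x y
    rw [Matrix.mul_apply]
    refine Finset.sum_congr rfl fun i _ => ?_
    rw [Matrix.mul_diagonal]
    simp only [Matrix.star_apply, star_trivial]
    ring
  -- trace of conjugated diagonal matrices
  have htr : ∀ (d : Fin n → ℝ), (U * Matrix.diagonal d * star U).trace = ∑ i, d i := by
    intro d
    rw [Matrix.trace_mul_cycle, mul_eq_one_comm.mp hU1, one_mul,
      Matrix.trace_diagonal]
  -- the simple-eigenvalue projector
  set R : Finset ℝ := (spec G).toFinset with hRdef
  have hluniq : ∀ i, i ≠ j0 → lam i ≠ lj := fun i hij hl => hij (hj0uniq i hl)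
  set c : ℝ := ∏ mu ∈ R.erase lj, (lj - mu) with hcdef
  have hc0 : c ≠ 0 := by
    rw [hcdef]
    refine Finset.prod_ne_zero_iff.mpr fun mu hmu => ?_
    have := Finset.ne_of_mem_erase hmu
    intro h0
    apply this
    linarith [sub_eq_zero.mp h0]
  set q : ℝ[X] := C c⁻¹ * ∏ mu ∈ R.erase lj, (X - C mu) with hqdef
  have hqeval : ∀ i, q.eval (lam i) = if i = j0 then 1 else 0 := by
    intro i
    rw [hqdef]
    by_cases hij : i = j0
    · subst hij
      rw [if_pos rfl]
      rw [eval_mul, eval_C, eval_prod]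
      simp only [eval_sub, eval_X, eval_C, hj0]
      rw [← hcdef]
      exact inv_mul_cancel₀ hc0
    · rw [if_neg hij]
      rw [eval_mul, eval_prod]
      have hmem' : lam i ∈ R.erase lj := by
        rw [Finset.mem_erase]
        exact ⟨hluniq i hij, by rw [hRdef, Multiset.mem_toFinset]; exact hlammem i⟩
      rw [Finset.prod_eq_zero hmem' (by simp), mul_zero]
  -- u = the j0 eigen-column
  have hEform : aeval A q = U * Matrix.diagonal (fun i => if i = j0 then 1 else 0) * star U := by
    rw [hspec, conj_aeval _ _ hU1, aeval_diag]
    have : (fun i => q.eval (lam i)) = (fun i => if i = j0 then (1:ℝ) else 0) :=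
      funext hqeval
    rw [this]
  have hExy : ∀ x y, (aeval A q) x y = U x j0 * U y j0 := by
    intro x y
    rw [hEform, hentry]
    rw [Finset.sum_eq_single j0 (fun b _ hb => by rw [if_neg hb, zero_mul])
      (fun h => absurd (Finset.mem_univ j0) h), if_pos rfl, one_mul]
  have htrE : (aeval A q).trace = 1 := by
    rw [hEform, htr]
    simp
  have husq : ∀ x, (n : ℝ) * (U x j0 * U x j0) = 1 := by
    intro x
    have h1 : ∑ y, (aeval A q) y y = 1 := htrE
    have h2 : ∀ y : Fin n, (aeval A q) y y = U x j0 * U x j0 := by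
      intro y
      rw [hdiagconst q y x, hExy x x]
    rw [Finset.sum_congr rfl (fun y _ => h2 y), Finset.sum_const, Finset.card_univ,
      Fintype.card_fin, nsmul_eq_mul] at h1
    exact h1
  have hux0 : ∀ x, U x j0 ≠ 0 := by
    intro x h0
    have := husq x
    rw [h0] at this
    simp at this
  -- column sums of A
  have hcolsum : ∀ y, ∑ x, A x y = (k:ℝ) := by
    intro y
    have hflip : ∀ x, A x y = A y x := by
      intro x; rw [hAapp, hAapp]
      simp [G.adj_comm x y]
    rw [Finset.sum_congr rfl fun x _ => hflip x]
    have h1 : ∑ x, A y x = (A *ᵥ (fun _ => (1:ℝ))) y := by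
      simp [Matrix.mulVec, dotProduct]
    rw [h1, ← hAeq, SimpleGraph.adjMatrix_mulVec_apply]
    rw [Finset.sum_const, nsmul_eq_mul, mul_one]
    have h2 : (G.neighborFinset y).card = k := hdeg y
    exact_mod_cast congrArg (Nat.cast (R := ℝ)) h2
  -- sum of u is zero
  have husum : ∑ x, U x j0 = 0 := by
    have h2 : ∑ x, (A *ᵥ fun z => U z j0) x = (k:ℝ) * ∑ x, U x j0 := by
      simp only [Matrix.mulVec, dotProduct]
      rw [Finset.sum_comm, Finset.mul_sum]
      refine Finset.sum_congr rfl fun y _ => ?_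
      rw [← Finset.sum_mul, hcolsum y]
    have h3 : ∑ x, (A *ᵥ fun z => U z j0) x = lj * ∑ x, U x j0 := by
      rw [hcol j0]
      simp only [Pi.smul_apply, smul_eq_mul, hj0]
      rw [Finset.mul_sum]
    have h4 : ((k:ℝ) - lj) * ∑ x, U x j0 = 0 := by
      rw [sub_mul, ← h2, ← h3, sub_self]
    rcases mul_eq_zero.mp h4 with h | h
    · exact absurd (sub_eq_zero.mp h).symm hne
    · exact h
  -- all entries of u are ± the same value
  set x0 : Fin n := ⟨0, hn0⟩ with hx0def
  have hsq : ∀ x, U x j0 = U x0 j0 ∨ U x j0 = - U x0 j0 := by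
    intro x
    have h1 := husq x
    have h2 := husq x0
    have h3 : U x j0 * U x j0 = U x0 j0 * U x0 j0 :=
      mul_left_cancel₀ (ne_of_gt hnR) (h1.trans h2.symm)
    exact mul_self_eq_mul_self_iff.mp h3
  -- integer adjacency matrix
  set Az : Matrix (Fin n) (Fin n) ℤ := G.adjMatrix ℤ with hAzdef
  have hAz : Az.map (Int.cast : ℤ → ℝ) = A := by
    ext x y
    rw [Matrix.map_apply, hAapp, hAzdef, SimpleGraph.adjMatrix_apply]
    by_cases h : G.Adj x y <;> simp [h]
  -- lj is an integer
  obtain ⟨ljz, hljz⟩ : ∃ z : ℤ, lj = (z : ℝ) := by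
    set e : Fin n → ℤ := fun x => if U x j0 = U x0 j0 then 1 else -1 with hedef
    have he : ∀ x, U x j0 = (e x : ℝ) * U x0 j0 := by
      intro x
      by_cases h2 : U x j0 = U x0 j0
      · rw [hedef]; simp only [if_pos h2, Int.cast_one, one_mul]; exact h2
      · have h := (hsq x).resolve_left h2
        rw [hedef]; simp only [if_neg h2, Int.cast_neg, Int.cast_one, neg_mul, one_mul]
        exact h
    refine ⟨∑ y, (Az x0 y) * e y, ?_⟩
    have h5 : lj * U x0 j0 = (∑ y, (Az x0 y : ℝ) * (e y : ℝ)) * U x0 j0 := by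
      calc lj * U x0 j0 = (A *ᵥ fun z => U z j0) x0 := by
            rw [hcol j0]
            simp [hj0]
        _ = ∑ y, A x0 y * U y j0 := rfl
        _ = ∑ y, ((Az x0 y : ℝ) * (e y : ℝ)) * U x0 j0 := by
            refine Finset.sum_congr rfl fun y _ => ?_
            rw [he y, ← hAz, Matrix.map_apply]
            ring
        _ = (∑ y, (Az x0 y : ℝ) * (e y : ℝ)) * U x0 j0 := by rw [Finset.sum_mul]
    have h6 := mul_right_cancel₀ (hux0 x0) h5
    rw [h6]
    push_cast
    rfl
  -- a vertex with opposite sign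
  obtain ⟨y2, hy2⟩ : ∃ y2, U y2 j0 = - U x0 j0 := by
    by_contra hno
    push_neg at hno
    have hall : ∀ x, U x j0 = U x0 j0 := fun x => (hsq x).resolve_right (hno x)
    rw [Finset.sum_congr rfl fun x _ => hall x, Finset.sum_const, Finset.card_univ,
      Fintype.card_fin, nsmul_eq_mul] at husum
    rcases mul_eq_zero.mp husum with h | h
    · exact absurd h (ne_of_gt hnR)
    · exact hux0 x0 h
  -- the integer polynomial whose roots are the eigenvalues other than k and lj
  set S : Finset ℝ := R \ {(k:ℝ), lj} with hSdef
  set p : ℝ[X] := ∏ mu ∈ S, (X - C mu) with hpdef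
  set Pz : ℤ[X] := Az.charpoly with hPzdef
  have hPzmap : Pz.map (Int.castRingHom ℝ) = A.charpoly := by
    rw [hPzdef, ← hAz]
    exact (Matrix.charpoly_map Az (Int.castRingHom ℝ)).symm
  have hsplits : A.charpoly.Splits := by
    rw [hcp]
    exact Polynomial.Splits.prod fun i _ => Polynomial.Splits.X_sub_C _
  have haevalPz : ∀ mu ∈ R, (Polynomial.aeval mu) Pz = 0 := by
    intro mu hmu
    rw [Polynomial.aeval_def, ← Polynomial.eval_map]
    rw [show Pz.map (algebraMap ℤ ℝ) = A.charpoly from hPzmap]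
    exact Polynomial.isRoot_of_mem_roots (Multiset.mem_toFinset.mp hmu)
  have hroot_int : ∀ mu ∈ R, IsIntegral ℤ mu := by
    intro mu hmu
    exact ⟨Pz, Az.charpoly_monic, by
      simpa [Polynomial.aeval_def] using haevalPz mu hmu⟩
  have hSsub : ∀ mu ∈ S, mu ∈ R := fun mu hmu => (Finset.mem_sdiff.mp hmu).1
  have hSne : ∀ mu ∈ S, mu ≠ (k:ℝ) ∧ mu ≠ lj := by
    intro mu hmu
    have h := (Finset.mem_sdiff.mp hmu).2
    constructor
    · intro hbad; exact h (by rw [hbad]; exact Finset.mem_insert_self _ _)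
    · intro hbad; exact h (by rw [hbad]; exact Finset.mem_insert_of_mem (Finset.mem_singleton_self lj))
  -- the orbit decomposition
  have horbit : ∀ mu ∈ S, ((minpoly ℤ mu).map (Int.castRingHom ℝ)) =
      ∏ nu ∈ S.filter (fun nu => minpoly ℤ nu = minpoly ℤ mu), (X - C nu) := by
    intro mu hmu
    have hint : IsIntegral ℤ mu := hroot_int mu (hSsub mu hmu)
    have hqmonic : (minpoly ℤ mu).Monic := minpoly.monic hint
    have hqdvd : minpoly ℤ mu ∣ Pz :=
      minpoly.isIntegrallyClosed_dvd hint (haevalPz mu (hSsub mu hmu))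
    have hqmapdvd : (minpoly ℤ mu).map (Int.castRingHom ℝ) ∣ A.charpoly := by
      rw [← hPzmap]; exact Polynomial.map_dvd _ hqdvd
    have hqsplits : ((minpoly ℤ mu).map (Int.castRingHom ℝ)).Splits :=
      Polynomial.Splits.of_dvd hsplits hcpne hqmapdvd
    have hintQ : IsIntegral ℚ mu := hint.tower_top
    have hqq : minpoly ℚ mu = (minpoly ℤ mu).map (algebraMap ℤ ℚ) :=
      minpoly.isIntegrallyClosed_eq_field_fractions ℚ ℝ hint
    have hqqirr : Irreducible (minpoly ℚ mu) := minpoly.irreducible hintQ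
    have hqcast : (minpoly ℤ mu).map (Int.castRingHom ℝ)
        = (minpoly ℚ mu).map (algebraMap ℚ ℝ) := by
      rw [hqq, Polynomial.map_map]
      rw [show (algebraMap ℚ ℝ).comp (algebraMap ℤ ℚ) = Int.castRingHom ℝ from
        RingHom.ext_int _ _]
    have hsep : ((minpoly ℤ mu).map (Int.castRingHom ℝ)).Separable := by
      rw [hqcast]
      exact (hqqirr.separable).map
    have hnodup := Polynomial.nodup_roots hsep
    have hmapne : (minpoly ℤ mu).map (Int.castRingHom ℝ) ≠ 0 :=
      (hqmonic.map _).ne_zero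
    have hrootsset : ((minpoly ℤ mu).map (Int.castRingHom ℝ)).roots.toFinset
        = S.filter (fun nu => minpoly ℤ nu = minpoly ℤ mu) := by
      ext nu
      rw [Multiset.mem_toFinset, Finset.mem_filter, Polynomial.mem_roots hmapne]
      constructor
      · rintro hnu
        have haevalnu : (Polynomial.aeval nu) (minpoly ℤ mu) = 0 := by
          rw [Polynomial.aeval_def, ← Polynomial.eval_map]; exact hnu
        have hnuint : IsIntegral ℤ nu := ⟨minpoly ℤ mu, hqmonic, by
          simpa [Polynomial.aeval_def] using haevalnu⟩
        have hd1 : minpoly ℤ nu ∣ minpoly ℤ mu :=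
          minpoly.isIntegrallyClosed_dvd hnuint haevalnu
        have hnuintQ : IsIntegral ℚ nu := hnuint.tower_top
        have hqqnu : minpoly ℚ nu = (minpoly ℤ nu).map (algebraMap ℤ ℚ) :=
          minpoly.isIntegrallyClosed_eq_field_fractions ℚ ℝ hnuint
        have hd2 : minpoly ℚ nu ∣ minpoly ℚ mu := by
          rw [hqq, hqqnu]
          exact Polynomial.map_dvd _ hd1
        have heqQ : minpoly ℚ nu = minpoly ℚ mu :=
          Polynomial.eq_of_monic_of_associated (minpoly.monic hnuintQ) (minpoly.monic hintQ)
            ((minpoly.irreducible hnuintQ).associated_of_dvd hqqirr hd2)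
        have heqZ : minpoly ℤ nu = minpoly ℤ mu := by
          have h := heqQ
          rw [hqqnu, hqq] at h
          exact Polynomial.map_injective _ (IsFractionRing.injective ℤ ℚ) h
        have hnotbase : ∀ (z : ℤ), nu = (z:ℝ) → mu = (z:ℝ) := by
          intro z hz
          have h1 : minpoly ℤ nu = X - C z := by
            rw [hz, show ((z:ℝ)) = algebraMap ℤ ℝ z by simp]
            exact minpoly.eq_X_sub_C_of_algebraMap_inj z
              (fun a b hab => Int.cast_injective
                (show ((a:ℤ):ℝ) = ((b:ℤ):ℝ) from hab))
          have h2 : minpoly ℤ mu = X - C z := by rw [← heqZ, h1]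
          have h3 : (Polynomial.aeval mu) (minpoly ℤ mu) = 0 := minpoly.aeval ℤ mu
          rw [h2] at h3
          simp only [map_sub, Polynomial.aeval_X, Polynomial.aeval_C] at h3
          have : mu - (z:ℝ) = 0 := by
            simpa using h3
          linarith
        have hnuR : nu ∈ R := by
          rw [hRdef, Multiset.mem_toFinset]
          show nu ∈ A.charpoly.roots
          rw [Polynomial.mem_roots hcpne]
          obtain ⟨w, hw⟩ := hqmapdvd
          rw [Polynomial.IsRoot, hw, Polynomial.eval_mul, hnu, zero_mul]
        refine ⟨?_, heqZ⟩
        rw [hSdef, Finset.mem_sdiff]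
        refine ⟨hnuR, ?_⟩
        intro hbad
        rcases Finset.mem_insert.mp hbad with h | h
        · have : mu = (k:ℝ) := by
            have := hnotbase k (by rw [h]; push_cast; ring)
            push_cast at this ⊢
            exact this
          exact (hSne mu hmu).1 this
        · rw [Finset.mem_singleton] at h
          have : mu = lj := by
            have := hnotbase ljz (by rw [h]; exact hljz)
            rw [this, hljz]
          exact (hSne mu hmu).2 this
      · rintro ⟨hnuS, hnuq⟩
        have h3 : (Polynomial.aeval nu) (minpoly ℤ nu) = 0 := minpoly.aeval ℤ nu
        rw [hnuq] at h3
        rw [Polynomial.aeval_def, Polynomial.eval₂_eq_eval_map] at h3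
        rw [Polynomial.IsRoot,
          show (Int.castRingHom ℝ) = algebraMap ℤ ℝ from (algebraMap_int_eq ℝ).symm]
        exact h3
    have hfact := Polynomial.Splits.eq_prod_roots_of_monic hqsplits (hqmonic.map _)
    rw [hfact]
    rw [← hrootsset]
    rw [Finset.prod_eq_multiset_prod]
    congr 1
    rw [Multiset.toFinset_val, Multiset.dedup_eq_self.mpr hnodup]
  -- assemble the integer polynomial
  set Fz : Finset ℤ[X] := S.image (fun mu => minpoly ℤ mu) with hFzdef
  set pz : ℤ[X] := ∏ qz ∈ Fz, qz with hpzdef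
  have hpmap : pz.map (Int.castRingHom ℝ) = p := by
    rw [hpzdef, Polynomial.map_prod, hpdef]
    rw [← Finset.prod_fiberwise_of_maps_to (g := fun mu => minpoly ℤ mu)
      (fun mu hmu => Finset.mem_image_of_mem _ hmu) (fun mu => X - C mu)]
    refine Finset.prod_congr rfl fun qz hqz => ?_
    obtain ⟨mu, hmu, rfl⟩ := Finset.mem_image.mp hqz
    exact horbit mu hmu
  have hNmap : ∀ x y, (aeval A p) x y = (((aeval Az pz) x y : ℤ) : ℝ) := by
    intro x y
    have h1 : (aeval Az pz).map (Int.cast : ℤ → ℝ) = aeval A p := by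
      rw [← hAz, ← hpmap]
      rw [show (Polynomial.map (Int.castRingHom ℝ) pz) = pz.map (algebraMap ℤ ℝ) by
        rw [algebraMap_int_eq]]
      exact (aeval_int_map Az pz).symm
    rw [← h1, Matrix.map_apply]
  have hpevalzero : ∀ i, i ≠ i0 → i ≠ j0 → p.eval (lam i) = 0 := by
    intro i h1 h2
    have hmemS : lam i ∈ S := by
      rw [hSdef, Finset.mem_sdiff]
      refine ⟨by rw [hRdef, Multiset.mem_toFinset]; exact hlammem i, ?_⟩
      intro hbad
      rcases Finset.mem_insert.mp hbad with h | h
      · exact h1 (hkuniq i h)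
      · rw [Finset.mem_singleton] at h
        exact h2 (hj0uniq i h)
    rw [hpdef, eval_prod]
    exact Finset.prod_eq_zero hmemS (by simp)
  have hNform : aeval A p = U * Matrix.diagonal (fun i => p.eval (lam i)) * star U := by
    rw [hspec, conj_aeval _ _ hU1, aeval_diag]
  have hNxy : ∀ x y, (aeval A p) x y =
      p.eval ((k:ℝ)) * (U x i0 * U y i0) + p.eval lj * (U x j0 * U y j0) := by
    intro x y
    rw [hNform, hentry]
    have hterm : ∀ i, p.eval (lam i) * (U x i * U y i)
        = (if i = i0 then p.eval (k:ℝ) * (U x i0 * U y i0) else 0)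
          + (if i = j0 then p.eval lj * (U x j0 * U y j0) else 0) := by
      intro i
      by_cases h1 : i = i0
      · subst h1
        rw [if_pos rfl, if_neg hij0, add_zero, hi0]
      · by_cases h2 : i = j0
        · subst h2
          rw [if_neg h1, if_pos rfl, zero_add, hj0]
        · rw [if_neg h1, if_neg h2, hpevalzero i h1 h2, zero_mul, add_zero]
    rw [Finset.sum_congr rfl fun i _ => hterm i, Finset.sum_add_distrib]
    rw [Finset.sum_ite_eq' Finset.univ i0 (fun _ => p.eval (k:ℝ) * (U x i0 * U y i0)),
      Finset.sum_ite_eq' Finset.univ j0 (fun _ => p.eval lj * (U x j0 * U y j0))]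
    simp
  -- the constant eigenvector column
  have hc2 : ∀ x y, U x i0 = U y i0 :=
    fun x y => hconst _ ((hcol i0).trans (by rw [hi0])) x y
  have hu0sq : (n:ℝ) * (U x0 i0 * U x0 i0) = 1 := by
    have h := hUorth i0 i0
    rw [if_pos rfl] at h
    rw [Finset.sum_congr rfl (fun y _ => by rw [hc2 y x0]), Finset.sum_const,
      Finset.card_univ, Fintype.card_fin, nsmul_eq_mul] at h
    exact h
  -- final goals
  have hgoalK : (∏ mu ∈ S, ((k:ℝ) - mu)) = p.eval (k:ℝ) := by
    rw [hpdef, eval_prod]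
    exact Finset.prod_congr rfl fun mu _ => by simp
  have hgoalL : (∏ mu ∈ S, (lj - mu)) = p.eval lj := by
    rw [hpdef, eval_prod]
    exact Finset.prod_congr rfl fun mu _ => by simp
  rw [hgoalK, hgoalL]
  constructor
  · refine ⟨(aeval Az pz) x0 x0, ?_⟩
    have h1 := hNxy x0 x0
    have h2 := hNmap x0 x0
    have h3 := husq x0
    rw [h2] at h1
    linear_combination (-(p.eval (k:ℝ))) * hu0sq + (-(p.eval lj)) * h3 + (-(n:ℝ)) * h1
  · refine ⟨(aeval Az pz) x0 y2, ?_⟩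
    have h1 := hNxy x0 y2
    have h2 := hNmap x0 y2
    have h3 := husq x0
    rw [h2, hy2, hc2 y2 x0] at h1
    linear_combination (-(p.eval (k:ℝ))) * hu0sq + (p.eval lj) * h3 + (-(n:ℝ)) * h1
end

section
/- For s, t ≥ 2, the graph K_{s,s} ⊛ J_t is a connected (st+t−1)-regular graph on 2st vertices with spectrum {[st+t−1]^1, [−st+t−1]^1, [t−1]^{2s−2}, [−1]^{2s(t−1)}}, which has exactly four distinct eigenvalues, exactly two of them simple, and has −1 as a (non-simple) eigenvalue. -/
open Polynomial

/-- The clique blow-up `G ⊛ J_t`: every vertex of `G` is replaced by a `t`-clique, and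
two cliques are completely joined iff the corresponding vertices are adjacent. -/
def blowup {V : Type*} (G : SimpleGraph V) (t : ℕ) : SimpleGraph (V × Fin t) where
  Adj x y := G.Adj x.1 y.1 ∨ (x.1 = y.1 ∧ x.2 ≠ y.2)
  symm := by
    constructor
    rintro ⟨u, i⟩ ⟨v, j⟩ (h | ⟨h, hij⟩)
    · exact Or.inl h.symm
    · exact Or.inr ⟨h.symm, hij.symm⟩
  loopless := by constructor; rintro ⟨u, i⟩ (h | ⟨-, h⟩) <;> simp_all

/-- all-ones matrix -/
noncomputable def Jm (n : ℕ) : Matrix (Fin n) (Fin n) ℝ := Matrix.of fun _ _ => 1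

/-- diagonalizer of `Jm n` -/
noncomputable def Rm (n : ℕ) [NeZero n] : Matrix (Fin n) (Fin n) ℝ :=
  Matrix.of fun i k => if k = 0 then 1 else if i = 0 then 1 else if i = k then -1 else 0

noncomputable def RmInv (n : ℕ) [NeZero n] : Matrix (Fin n) (Fin n) ℝ :=
  Matrix.of fun k j => (n : ℝ)⁻¹ - (if k = 0 then 0 else if k = j then 1 else 0)

noncomputable def dJ (n : ℕ) [NeZero n] : Fin n → ℝ := fun i => if i = 0 then n else 0

lemma Rm_rowsum (n : ℕ) [NeZero n] (i : Fin n) :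
    ∑ k, Rm n i k = if i = 0 then (n : ℝ) else 0 := by
  by_cases hi : i = 0
  · simp [hi, Rm]
  · have h : ∀ k : Fin n, Rm n i k = (if k = 0 then (1:ℝ) else 0) + (if k = i then -1 else 0) := by
      intro k
      simp only [Rm, Matrix.of_apply]
      rcases eq_or_ne k 0 with hk | hk
      · subst hk; simp [Ne.symm hi, hi]
      · simp only [hk, if_neg, hi]
        rcases eq_or_ne k i with h2 | h2
        · subst h2; simp [hi, hk]
        · have h3 : i ≠ k := fun h => h2 h.symm
          simp [hk, hi, h2, h3]
    rw [Finset.sum_congr rfl fun k _ => h k, Finset.sum_add_distrib]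
    simp [hi, Finset.sum_ite_eq']

lemma Rm_colsum (n : ℕ) [NeZero n] (j : Fin n) :
    ∑ k, Rm n k j = if j = 0 then (n : ℝ) else 0 := by
  by_cases hj : j = 0
  · simp [hj, Rm]
  · have h : ∀ k : Fin n, Rm n k j = (if k = 0 then (1:ℝ) else 0) + (if k = j then -1 else 0) := by
      intro k
      simp only [Rm, Matrix.of_apply, hj]
      rcases eq_or_ne k 0 with hk | hk
      · subst hk; simp [hj, Ne.symm hj]
      · simp only [hk, if_neg]
        rcases eq_or_ne k j with h2 | h2 <;> simp [h2, hk, hj]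
    rw [Finset.sum_congr rfl fun k _ => h k, Finset.sum_add_distrib]
    simp [hj, Finset.sum_ite_eq']

lemma Jm_mul_Rm (n : ℕ) [NeZero n] : Jm n * Rm n = Rm n * Matrix.diagonal (dJ n) := by
  ext i j
  rw [Matrix.mul_apply, Matrix.mul_diagonal]
  simp only [Jm, Matrix.of_apply, one_mul]
  rw [Rm_colsum]
  by_cases hj : j = 0 <;> simp [hj, dJ, Rm]

lemma Rm_mul_RmInv (n : ℕ) [NeZero n] : Rm n * RmInv n = 1 := by
  have hn : (n : ℝ) ≠ 0 := Nat.cast_ne_zero.mpr (NeZero.ne n)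
  ext i j
  rw [Matrix.mul_apply]
  have h : ∀ k : Fin n, Rm n i k * RmInv n k j
      = Rm n i k * (n : ℝ)⁻¹ - (if k = j then Rm n i k * (if j = 0 then 0 else 1) else 0) := by
    intro k
    simp only [RmInv, Matrix.of_apply, mul_sub]
    congr 1
    rcases eq_or_ne k j with h2 | h2
    · subst h2; simp
    · simp only [h2, if_neg]
      rcases eq_or_ne k 0 with hk | hk <;> simp [hk, h2]
  rw [Finset.sum_congr rfl fun k _ => h k, Finset.sum_sub_distrib, ← Finset.sum_mul, Rm_rowsum,
    Finset.sum_ite_eq']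
  simp only [Finset.mem_univ, if_true]
  by_cases hi : i = 0 <;> by_cases hj : j = 0
  · subst hi hj; simp [hn, Matrix.one_apply]
  · subst hi
    simp [hj, Rm, Matrix.one_apply, Ne.symm hj, hn]
  · subst hj; simp [hi, Rm, Matrix.one_apply, hi]
  · rcases eq_or_ne i j with h2 | h2
    · subst h2; simp [hi, hj, Rm, Matrix.one_apply]
    · simp [hi, hj, h2, Rm, Matrix.one_apply]

lemma RmInv_mul_Rm (n : ℕ) [NeZero n] : RmInv n * Rm n = 1 := by
  have hn : (n : ℝ) ≠ 0 := Nat.cast_ne_zero.mpr (NeZero.ne n)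
  ext i j
  rw [Matrix.mul_apply]
  have h : ∀ k : Fin n, RmInv n i k * Rm n k j
      = (n : ℝ)⁻¹ * Rm n k j - (if k = i then (if i = 0 then 0 else 1) * Rm n k j else 0) := by
    intro k
    simp only [RmInv, Matrix.of_apply, sub_mul]
    congr 1
    rcases eq_or_ne k i with h2 | h2
    · subst h2; simp
    · simp only [Ne.symm h2, h2, if_neg]
      rcases eq_or_ne i 0 with hk | hk <;> simp [hk, h2, Ne.symm h2]
  rw [Finset.sum_congr rfl fun k _ => h k, Finset.sum_sub_distrib, ← Finset.mul_sum, Rm_colsum,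
    Finset.sum_ite_eq']
  simp only [Finset.mem_univ, if_true]
  by_cases hi : i = 0 <;> by_cases hj : j = 0
  · subst hi hj; simp [hn, Matrix.one_apply]
  · subst hi; simp [hj, Rm, Matrix.one_apply, Ne.symm hj]
  · subst hj; simp [hi, Rm, Matrix.one_apply, hi, hn]
  · rcases eq_or_ne i j with h2 | h2
    · subst h2; simp [hi, hj, Rm, Matrix.one_apply]
    · simp [hi, hj, h2, Rm, Matrix.one_apply, Ne.symm h2]

lemma charpoly_similar {n : Type*} [Fintype n] [DecidableEq n]
    (M P Pi D : Matrix n n ℝ) (h1 : P * Pi = 1) (hM : M * P = P * D) :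
    M.charpoly = D.charpoly := by
  have hMe : M = P * D * Pi := by
    calc M = M * (P * Pi) := by rw [h1, mul_one]
    _ = (M * P) * Pi := by rw [mul_assoc]
    _ = P * D * Pi := by rw [hM]
  have hcm : ∀ A : Matrix n n ℝ, Matrix.charmatrix A
      = (X : ℝ[X]) • (1 : Matrix n n ℝ[X]) - A.map C := by
    intro A
    ext i j
    rw [Matrix.charmatrix_apply]
    rcases eq_or_ne i j with h | h <;>
      simp [h, Matrix.one_apply, Matrix.diagonal_apply, Matrix.map_apply]
  have hmul1 : (P.map C) * (Pi.map C) = (1 : Matrix n n ℝ[X]) := by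
    rw [← Matrix.map_mul, h1]
    ext i j
    rcases eq_or_ne i j with h | h <;> simp [h, Matrix.one_apply, Matrix.map_apply]
  have key : Matrix.charmatrix M = (P.map C) * Matrix.charmatrix D * (Pi.map C) := by
    rw [hcm, hcm, hMe]
    rw [Matrix.mul_sub, Matrix.sub_mul]
    congr 1
    · rw [mul_smul_comm, mul_one, smul_mul_assoc, hmul1]
    · rw [← Matrix.map_mul, ← Matrix.map_mul]
  rw [Matrix.charpoly, Matrix.charpoly, key, Matrix.det_mul, Matrix.det_mul]
  have hdet : (P.map C).det * (Pi.map C).det = 1 := by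
    rw [← Matrix.det_mul, hmul1, Matrix.det_one]
  calc (P.map C).det * (Matrix.charmatrix D).det * (Pi.map C).det
      = ((P.map C).det * (Pi.map C).det) * (Matrix.charmatrix D).det := by ring
  _ = (Matrix.charmatrix D).det := by rw [hdet, one_mul]

lemma charpoly_diagonal {n : Type*} [Fintype n] [DecidableEq n] (d : n → ℝ) :
    (Matrix.diagonal d).charpoly = ∏ i, (X - C (d i)) := by
  have : Matrix.charmatrix (Matrix.diagonal d) = Matrix.diagonal (fun i => X - C (d i)) := by
    ext i j : 2
    rcases eq_or_ne i j with h | h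
    · subst h; simp [Matrix.charmatrix_apply_eq, Matrix.diagonal_apply_eq]
    · simp [Matrix.charmatrix_apply_ne _ _ _ h, Matrix.diagonal_apply_ne _ h]
  rw [Matrix.charpoly, this, Matrix.det_diagonal]

lemma roots_prod_diag {n : Type*} [Fintype n] [DecidableEq n] (d : n → ℝ) :
    (∏ i, (X - C (d i))).roots = (Finset.univ.val.map d) := by
  have : (∏ i, (X - C (d i))) = ((Finset.univ.val.map d).map fun a => X - C a).prod := by
    rw [Multiset.map_map, Finset.prod_eq_multiset_prod]
    rfl
  rw [this, Polynomial.roots_multiset_prod_X_sub_C]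

lemma bind_replicate {α : Type*} (m : Multiset α) (k : ℕ) (c : ℝ) :
    (m.bind fun _ => Multiset.replicate k c) = Multiset.replicate (Multiset.card m * k) c := by
  induction m using Multiset.induction with
  | empty => simp
  | cons a m ih =>
    rw [Multiset.cons_bind, ih, Multiset.card_cons]
    rw [← Multiset.replicate_add]
    congr 1
    ring

lemma map_univ_fin (n : ℕ) [NeZero n] (f : Fin n → ℝ) (c : ℝ)
    (hf : ∀ i : Fin n, i ≠ 0 → f i = c) :
    (Finset.univ.val.map f : Multiset ℝ) = f 0 ::ₘ Multiset.replicate (n - 1) c := by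
  have h0 : (Finset.univ : Finset (Fin n)).val
      = (0 : Fin n) ::ₘ (Finset.univ.erase 0).val := by
    conv_lhs => rw [← Finset.insert_erase (Finset.mem_univ (0 : Fin n))]
    exact Finset.insert_val_of_notMem (Finset.notMem_erase _ _)
  rw [h0, Multiset.map_cons]
  congr 1
  rw [Multiset.map_congr rfl fun x hx => hf x (Finset.ne_of_mem_erase hx)]
  rw [Multiset.map_const', ← Finset.card_def, Finset.card_erase_of_mem (Finset.mem_univ _)]
  simp

lemma map_univ_prod {α β : Type*} [Fintype α] [Fintype β] (g : α × β → ℝ) :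
    ((Finset.univ : Finset (α × β)).val.map g)
      = (Finset.univ : Finset α).val.bind
          (fun a => (Finset.univ : Finset β).val.map (fun b => g (a, b))) := by
  rw [← Finset.univ_product_univ, Finset.product_val]
  show Multiset.map g (Multiset.product _ _) = _
  rw [Multiset.product, Multiset.map_bind]
  simp [Multiset.map_map, Function.comp]

open Matrix Finset Kronecker

/-- the equivalence between `Fin 2 × Fin s` and `Fin s ⊕ Fin s` -/
def e0 (s : ℕ) : Fin 2 × Fin s ≃ Fin s ⊕ Fin s where
  toFun x := if x.1 = 0 then Sum.inl x.2 else Sum.inr x.2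
  invFun w := Sum.elim (fun i => (0, i)) (fun i => (1, i)) w
  left_inv := by rintro ⟨b, i⟩; fin_cases b <;> simp
  right_inv := by rintro (i | i) <;> simp

lemma adjm_blowup_eq (s t : ℕ) [NeZero s] [NeZero t] :
    adjm (blowup (completeBipartiteGraph (Fin s) (Fin s)) t)
      = Matrix.reindex ((e0 s).prodCongr (Equiv.refl (Fin t)))
          ((e0 s).prodCongr (Equiv.refl (Fin t)))
        (((1 + (Jm 2 - 1) ⊗ₖ Jm s) ⊗ₖ Jm t) - 1) := by
  ext x y
  rw [Matrix.reindex_apply, Matrix.submatrix_apply]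
  obtain ⟨⟨⟨b, a⟩, k⟩, rfl⟩ := ((e0 s).prodCongr (Equiv.refl (Fin t))).surjective x
  obtain ⟨⟨⟨c, a'⟩, k'⟩, rfl⟩ := ((e0 s).prodCongr (Equiv.refl (Fin t))).surjective y
  rw [Equiv.symm_apply_apply, Equiv.symm_apply_apply]
  have hK : (completeBipartiteGraph (Fin s) (Fin s)).Adj (e0 s (b,a)) (e0 s (c,a')) ↔ b ≠ c := by
    fin_cases b <;> fin_cases c <;>
      simp [e0, completeBipartiteGraph, show (1 : Fin 2) ≠ 0 by decide]
  have he : e0 s (b,a) = e0 s (c,a') ↔ (b = c ∧ a = a') := by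
    rw [Equiv.apply_eq_iff_eq, Prod.ext_iff]
  have hadj : (blowup (completeBipartiteGraph (Fin s) (Fin s)) t).Adj
      ((e0 s).prodCongr (Equiv.refl (Fin t)) ((b,a),k)) ((e0 s).prodCongr (Equiv.refl (Fin t)) ((c,a'),k'))
      ↔ (b ≠ c ∨ ((b = c ∧ a = a') ∧ k ≠ k')) := by
    show ((completeBipartiteGraph (Fin s) (Fin s)).Adj _ _ ∨ (_ ∧ _)) ↔ _
    simp only [Equiv.prodCongr_apply, Prod.map, Equiv.refl_apply]
    rw [hK, he]
  rw [adjm]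
  rw [SimpleGraph.adjMatrix_apply]
  simp only [hadj]
  rcases eq_or_ne b c with hbc | hbc
  · subst hbc
    rcases eq_or_ne a a' with haa | haa
    · subst haa
      rcases eq_or_ne k k' with hkk | hkk
      · subst hkk
        simp [Matrix.sub_apply, Matrix.one_apply, Jm]
      · simp [Matrix.sub_apply, Matrix.one_apply, Jm, hkk]
    · have : ((b,a),k) ≠ ((b,a'),k') := by simp [haa]
      simp [Matrix.sub_apply, Matrix.one_apply, Jm, haa, this]
  · have h1 : ((b,a),k) ≠ ((c,a'),k') := by simp [hbc]
    have h2 : (b,a) ≠ (c,a') := by simp [hbc]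
    simp [Matrix.sub_apply, Matrix.one_apply, Jm, hbc, h1, h2]

noncomputable def eig (s t : ℕ) [NeZero s] [NeZero t] : (Fin 2 × Fin s) × Fin t → ℝ :=
  fun p => (1 + (dJ 2 p.1.1 - 1) * dJ s p.1.2) * dJ t p.2 - 1

lemma spec_blowup (s t : ℕ) [NeZero s] [NeZero t] :
    spec (blowup (completeBipartiteGraph (Fin s) (Fin s)) t)
      = (Finset.univ : Finset ((Fin 2 × Fin s) × Fin t)).val.map (eig s t) := by
  rw [spec, adjm_blowup_eq, Matrix.charpoly_reindex]
  have hdiag : ((1 + (Jm 2 - 1) ⊗ₖ Jm s) ⊗ₖ Jm t - 1 :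
      Matrix ((Fin 2 × Fin s) × Fin t) _ ℝ).charpoly
      = (Matrix.diagonal (eig s t)).charpoly := by
    apply charpoly_similar _ ((Rm 2 ⊗ₖ Rm s) ⊗ₖ Rm t) ((RmInv 2 ⊗ₖ RmInv s) ⊗ₖ RmInv t)
    · rw [← Matrix.mul_kronecker_mul, ← Matrix.mul_kronecker_mul, Rm_mul_RmInv, Rm_mul_RmInv,
        Rm_mul_RmInv, Matrix.one_kronecker_one, Matrix.one_kronecker_one]
    · have hE : (Jm 2 - 1) * Rm 2 = Rm 2 * (Matrix.diagonal (dJ 2) - 1) := by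
        rw [Matrix.sub_mul, Matrix.mul_sub, Jm_mul_Rm, one_mul, mul_one]
      have step1 : (1 + (Jm 2 - 1) ⊗ₖ Jm s) * (Rm 2 ⊗ₖ Rm s)
          = (Rm 2 ⊗ₖ Rm s) * (1 + (Matrix.diagonal (dJ 2) - 1) ⊗ₖ Matrix.diagonal (dJ s)) := by
        rw [Matrix.add_mul, Matrix.mul_add, one_mul, mul_one, ← Matrix.mul_kronecker_mul,
          hE, Jm_mul_Rm, Matrix.mul_kronecker_mul]
      calc ((1 + (Jm 2 - 1) ⊗ₖ Jm s) ⊗ₖ Jm t - 1) * ((Rm 2 ⊗ₖ Rm s) ⊗ₖ Rm t)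
          = ((1 + (Jm 2 - 1) ⊗ₖ Jm s) * (Rm 2 ⊗ₖ Rm s)) ⊗ₖ (Jm t * Rm t)
            - (Rm 2 ⊗ₖ Rm s) ⊗ₖ Rm t := by
            rw [Matrix.sub_mul, one_mul, ← Matrix.mul_kronecker_mul]
      _ = (((Rm 2 ⊗ₖ Rm s) * (1 + (Matrix.diagonal (dJ 2) - 1) ⊗ₖ Matrix.diagonal (dJ s)))
            ⊗ₖ (Rm t * Matrix.diagonal (dJ t))) - (Rm 2 ⊗ₖ Rm s) ⊗ₖ Rm t := by
            rw [step1, Jm_mul_Rm]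
      _ = ((Rm 2 ⊗ₖ Rm s) ⊗ₖ Rm t) *
            (((1 + (Matrix.diagonal (dJ 2) - 1) ⊗ₖ Matrix.diagonal (dJ s))
              ⊗ₖ Matrix.diagonal (dJ t)) - 1) := by
            rw [Matrix.mul_sub, mul_one, Matrix.mul_kronecker_mul]
      _ = ((Rm 2 ⊗ₖ Rm s) ⊗ₖ Rm t) * Matrix.diagonal (eig s t) := by
            congr 1
            have h1 : (Matrix.diagonal (dJ 2) - 1 : Matrix (Fin 2) (Fin 2) ℝ)
                = Matrix.diagonal (fun b => dJ 2 b - 1) := by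
              rw [← Matrix.diagonal_one, Matrix.diagonal_sub]
            rw [h1, Matrix.diagonal_kronecker_diagonal]
            have h2 : (1 + Matrix.diagonal (fun (p : Fin 2 × Fin s) => (dJ 2 p.1 - 1) * dJ s p.2))
                = Matrix.diagonal (fun p => 1 + (dJ 2 p.1 - 1) * dJ s p.2) := by
              rw [← Matrix.diagonal_one, Matrix.diagonal_add]
            rw [h2, Matrix.diagonal_kronecker_diagonal, ← Matrix.diagonal_one,
              Matrix.diagonal_sub]
            rfl
  rw [hdiag, _root_.charpoly_diagonal, roots_prod_diag]

lemma map_eig_eq (s t : ℕ) [NeZero s] [NeZero t] :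
    ((Finset.univ : Finset ((Fin 2 × Fin s) × Fin t)).val.map (eig s t))
      = ({((s:ℝ)*t + t - 1), (-(s:ℝ)*t + t - 1)} : Multiset ℝ)
          + Multiset.replicate (2*s-2) ((t:ℝ)-1)
          + Multiset.replicate (2*s*(t-1)) (-1 : ℝ) := by
  have hcardst : Multiset.card (Finset.univ : Finset (Fin 2 × Fin s)).val = 2 * s := by
    rw [← Finset.card_def, Finset.card_univ, Fintype.card_prod, Fintype.card_fin, Fintype.card_fin]
  have hcard2 : Multiset.card (Finset.univ : Finset (Fin 2)).val = 2 := by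
    rw [← Finset.card_def, Finset.card_univ, Fintype.card_fin]
  have step1 : ((Finset.univ : Finset ((Fin 2 × Fin s) × Fin t)).val.map (eig s t))
      = (Finset.univ : Finset (Fin 2 × Fin s)).val.map
          (fun w => (1 + (dJ 2 w.1 - 1) * dJ s w.2) * (t:ℝ) - 1)
        + Multiset.replicate (2*s*(t-1)) (-1 : ℝ) := by
    rw [map_univ_prod]
    have h1 : ∀ w ∈ (Finset.univ : Finset (Fin 2 × Fin s)).val,
        ((Finset.univ : Finset (Fin t)).val.map (fun k => eig s t (w, k)))
          = ({(1 + (dJ 2 w.1 - 1) * dJ s w.2) * (t:ℝ) - 1} : Multiset ℝ)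
            + Multiset.replicate (t-1) (-1 : ℝ) := by
      intro w _
      rw [map_univ_fin t _ (-1) (fun k hk => by simp [eig, dJ, hk]), ← Multiset.singleton_add]
      congr 2
    rw [Multiset.bind_congr h1, Multiset.bind_add, Multiset.bind_singleton,
      bind_replicate, hcardst]
  have step2 : (Finset.univ : Finset (Fin 2 × Fin s)).val.map
          (fun w => (1 + (dJ 2 w.1 - 1) * dJ s w.2) * (t:ℝ) - 1)
      = (Finset.univ : Finset (Fin 2)).val.map
          (fun b => (1 + (dJ 2 b - 1) * (s:ℝ)) * (t:ℝ) - 1)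
        + Multiset.replicate (2*(s-1)) ((t:ℝ) - 1) := by
    rw [map_univ_prod]
    have h1 : ∀ b ∈ (Finset.univ : Finset (Fin 2)).val,
        ((Finset.univ : Finset (Fin s)).val.map
            (fun a => (1 + (dJ 2 b - 1) * dJ s a) * (t:ℝ) - 1))
          = ({(1 + (dJ 2 b - 1) * (s:ℝ)) * (t:ℝ) - 1} : Multiset ℝ)
            + Multiset.replicate (s-1) ((t:ℝ) - 1) := by
      intro b _
      rw [map_univ_fin s _ ((t:ℝ)-1) (fun a ha => by simp [dJ, ha]), ← Multiset.singleton_add]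
      congr 2
    rw [Multiset.bind_congr h1, Multiset.bind_add, Multiset.bind_singleton,
      bind_replicate, hcard2]
  have step3 : (Finset.univ : Finset (Fin 2)).val.map
        (fun b => (1 + (dJ 2 b - 1) * (s:ℝ)) * (t:ℝ) - 1)
      = ({((s:ℝ)*t + t - 1), (-(s:ℝ)*t + t - 1)} : Multiset ℝ) := by
    rw [map_univ_fin 2 _ ((1 + (dJ 2 1 - 1) * (s:ℝ)) * (t:ℝ) - 1)
      (fun i hi => by fin_cases i <;> first | exact absurd rfl hi | rfl)]
    rw [Multiset.replicate_one]
    have h0 : (1 + (dJ 2 0 - 1) * (s:ℝ)) * (t:ℝ) - 1 = (s:ℝ)*t + t - 1 := by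
      simp [dJ]; ring
    have h1 : (1 + (dJ 2 1 - 1) * (s:ℝ)) * (t:ℝ) - 1 = -(s:ℝ)*t + t - 1 := by
      have : (1 : Fin 2) ≠ 0 := by decide
      simp [dJ, this]; ring
    rw [h0, h1]
    rfl
  rw [step1, step2, step3]
  have : 2*(s-1) = 2*s-2 := by omega
  rw [this, add_assoc]

lemma blowup_reg (s t : ℕ) [NeZero s] [NeZero t] :
    IsReg (blowup (completeBipartiteGraph (Fin s) (Fin s)) t) (s * t + t - 1) := by
  rintro ⟨u, i⟩
  classical
  set K := completeBipartiteGraph (Fin s) (Fin s)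
  set Nu : Finset (Fin s ⊕ Fin s) := Finset.univ.filter (fun w => K.Adj u w) with hNu
  have hset : (blowup K t).neighborSet (u, i)
      = ↑((Nu ×ˢ (Finset.univ : Finset (Fin t))) ∪ ({u} ×ˢ (Finset.univ.erase i))) := by
    ext ⟨w, j⟩
    have hAdj : ((blowup K t).Adj (u,i) (w,j)) ↔ (K.Adj u w ∨ (u = w ∧ i ≠ j)) := Iff.rfl
    rw [SimpleGraph.mem_neighborSet, Finset.mem_coe, Finset.mem_union, Finset.mem_product,
      Finset.mem_product, Finset.mem_filter, Finset.mem_singleton, Finset.mem_erase, hAdj]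
    simp only [Finset.mem_univ, true_and, and_true]
    constructor
    · rintro (h | ⟨rfl, hij⟩)
      · exact Or.inl h
      · exact Or.inr ⟨rfl, Ne.symm hij⟩
    · rintro (h | ⟨rfl, hj⟩)
      · exact Or.inl h
      · exact Or.inr ⟨rfl, Ne.symm hj⟩
  rw [hset, Set.ncard_coe_finset]
  have hdisj : Disjoint (Nu ×ˢ (Finset.univ : Finset (Fin t)))
      ({u} ×ˢ (Finset.univ.erase i)) := by
    rw [Finset.disjoint_left]
    rintro ⟨w, j⟩ hw hw'
    simp only [Finset.mem_product, Finset.mem_filter, hNu, Finset.mem_singleton] at hw hw'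
    exact K.irrefl (hw'.1 ▸ hw.1.2)
  rw [Finset.card_union_of_disjoint hdisj, Finset.card_product, Finset.card_product,
    Finset.card_singleton, Finset.card_univ, Fintype.card_fin,
    Finset.card_erase_of_mem (Finset.mem_univ i), Finset.card_univ, Fintype.card_fin]
  have hNcard : Nu.card = s := by
    rcases u with a | a
    · have : Nu = Finset.univ.image Sum.inr := by
        ext w
        rcases w with b | b <;>
          simp [hNu, K, completeBipartiteGraph]
      rw [this, Finset.card_image_of_injective _ Sum.inr_injective, Finset.card_univ,
        Fintype.card_fin]
    · have : Nu = Finset.univ.image Sum.inl := by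
        ext w
        rcases w with b | b <;>
          simp [hNu, K, completeBipartiteGraph]
      rw [this, Finset.card_image_of_injective _ Sum.inl_injective, Finset.card_univ,
        Fintype.card_fin]
  rw [hNcard]
  have ht : 1 ≤ t := Nat.one_le_iff_ne_zero.mpr (NeZero.ne t)
  omega

lemma blowup_conn (s t : ℕ) [NeZero s] [NeZero t] :
    (blowup (completeBipartiteGraph (Fin s) (Fin s)) t).Connected := by
  set K := completeBipartiteGraph (Fin s) (Fin s)
  have hadj : ∀ (a b : Fin s) (i j : Fin t),
      (blowup K t).Adj (Sum.inl a, i) (Sum.inr b, j) := by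
    intro a b i j
    exact Or.inl (by simp [K, completeBipartiteGraph])
  constructor
  · intro x y
    rcases x with ⟨a | a, i⟩ <;> rcases y with ⟨b | b, j⟩
    · exact ((hadj a 0 i 0).reachable).trans ((hadj b 0 j 0).reachable).symm
    · exact (hadj a b i j).reachable
    · exact ((hadj b a j i).reachable).symm
    · exact ((hadj 0 a 0 i).reachable).symm.trans ((hadj 0 b 0 j).reachable)


/-- For `s, t ≥ 2`, `K_{s,s} ⊛ J_t` is a connected `(st+t-1)`-regular graph on `2st`
vertices with spectrum `{[st+t-1]^1, [-st+t-1]^1, [t-1]^{2s-2}, [-1]^{2s(t-1)}}`;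
it has exactly four distinct eigenvalues, exactly two of them simple,
and `-1` is a non-simple eigenvalue. -/
theorem stmt_8 (s t : ℕ) (hs : 2 ≤ s) (ht : 2 ≤ t) :
    (blowup (completeBipartiteGraph (Fin s) (Fin s)) t).Connected ∧
    IsReg (blowup (completeBipartiteGraph (Fin s) (Fin s)) t) (s * t + t - 1) ∧
    spec (blowup (completeBipartiteGraph (Fin s) (Fin s)) t) =
      {((s : ℝ) * t + t - 1 : ℝ), (-(s : ℝ) * t + t - 1 : ℝ)} +
        Multiset.replicate (2 * s - 2) ((t : ℝ) - 1) +
        Multiset.replicate (2 * s * (t - 1)) (-1 : ℝ) ∧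
    (spec (blowup (completeBipartiteGraph (Fin s) (Fin s)) t)).toFinset.card = 4 ∧
    (spec (blowup (completeBipartiteGraph (Fin s) (Fin s)) t)).count
      ((s : ℝ) * t + t - 1) = 1 ∧
    (spec (blowup (completeBipartiteGraph (Fin s) (Fin s)) t)).count
      (-(s : ℝ) * t + t - 1) = 1 ∧
    2 ≤ (spec (blowup (completeBipartiteGraph (Fin s) (Fin s)) t)).count (-1 : ℝ) := by
  haveI : NeZero s := ⟨by omega⟩
  haveI : NeZero t := ⟨by omega⟩
  have hspec : spec (blowup (completeBipartiteGraph (Fin s) (Fin s)) t) =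
      {((s : ℝ) * t + t - 1 : ℝ), (-(s : ℝ) * t + t - 1 : ℝ)} +
        Multiset.replicate (2 * s - 2) ((t : ℝ) - 1) +
        Multiset.replicate (2 * s * (t - 1)) (-1 : ℝ) := by
    rw [spec_blowup, map_eig_eq]
  have hs' : (2:ℝ) ≤ (s:ℝ) := by exact_mod_cast hs
  have ht' : (2:ℝ) ≤ (t:ℝ) := by exact_mod_cast ht
  set A := ((s : ℝ) * t + t - 1 : ℝ) with hA
  set B := (-(s : ℝ) * t + t - 1 : ℝ) with hB
  set Cc := ((t : ℝ) - 1 : ℝ) with hC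
  have hAB : A ≠ B := by rw [hA, hB]; intro h; nlinarith
  have hAC : A ≠ Cc := by rw [hA, hC]; intro h; nlinarith
  have hAD : A ≠ -1 := by rw [hA]; intro h; nlinarith
  have hBC : B ≠ Cc := by rw [hB, hC]; intro h; nlinarith
  have hBD : B ≠ -1 := by rw [hB]; intro h; nlinarith
  have hCD : Cc ≠ -1 := by rw [hC]; intro h; nlinarith
  have hn1 : 2 * s - 2 ≠ 0 := by omega
  have hn2 : 2 * s * (t - 1) ≠ 0 :=
    Nat.mul_ne_zero (Nat.mul_ne_zero (by omega) (by omega)) (by omega)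
  refine ⟨blowup_conn s t, blowup_reg s t, hspec, ?_, ?_, ?_, ?_⟩
  · have htf : (spec (blowup (completeBipartiteGraph (Fin s) (Fin s)) t)).toFinset
        = {A, B, Cc, -1} := by
      rw [hspec]
      ext x
      simp only [Multiset.toFinset_add, Finset.mem_union, Multiset.mem_toFinset,
        Multiset.mem_replicate, Multiset.insert_eq_cons, Multiset.mem_cons,
        Multiset.mem_singleton, Finset.mem_insert, Finset.mem_singleton, hn1, hn2,
        ne_eq, not_false_eq_true, true_and]
      tauto
    rw [htf]
    rw [Finset.card_insert_of_notMem (by simp [hAB, hAC, hAD]),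
      Finset.card_insert_of_notMem (by simp [hBC, hBD]),
      Finset.card_insert_of_notMem (by simp [hCD]), Finset.card_singleton]
  · rw [hspec]
    simp [Multiset.count_cons, Multiset.count_singleton, Multiset.count_replicate,
      hAB, hAC, hAD, Ne.symm hAC, Ne.symm hAD, hn1, hn2]
  · rw [hspec]
    simp [Multiset.count_cons, Multiset.count_singleton, Multiset.count_replicate,
      hAB.symm, hBC, hBD, Ne.symm hBC, Ne.symm hBD, hn1, hn2]
  · have hcnt : (spec (blowup (completeBipartiteGraph (Fin s) (Fin s)) t)).count (-1 : ℝ)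
        = 2 * s * (t - 1) := by
      rw [hspec]
      simp [Multiset.count_cons, Multiset.count_singleton, Multiset.count_replicate,
        Ne.symm hAD, Ne.symm hBD, Ne.symm hCD, hAD, hBD, hCD]
    rw [hcnt]
    have h1 : 1 ≤ t - 1 := by omega
    calc (2:ℕ) = 2 * 1 * 1 := by norm_num
    _ ≤ 2 * s * (t - 1) := Nat.mul_le_mul (Nat.mul_le_mul_left 2 (by omega)) h1
end

section
/- Let k, α ∈ ℝ, n, m ∈ ℤ with β ≠ −1, where k + α + (n−2−m)β − m = 0 and k² + α² + (n−2−m)β² + m = kn. Then n − k − α − 2 ≠ 0, β = (kn − k² − k − α² − α)/(n − k − α − 2), and m = n − 1 + (n−k−1)(n−2α−2)/(k² + (2−n)k + α² + 2α − n + 2). -/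
/-- From the trace equations of a `k`-regular graph on `n` vertices with spectrum
`{[k]^1, [α]^1, [β]^{n-2-m}, [-1]^m}` (the four eigenvalues pairwise distinct,
`2 ≤ m ≤ n-4`), one gets `n - k - α - 2 ≠ 0`, the formula for `β`, and the formula
for `m` (whose denominator is nonzero). -/
theorem stmt_11 (k a b : ℝ) (n m : ℤ)
    (hm1 : 2 ≤ m) (hm2 : m ≤ n - 4)
    (hka : k ≠ a) (hkb : k ≠ b) (hab : a ≠ b)
    (hk : k ≠ -1) (ha : a ≠ -1) (hb : b ≠ -1)
    (h1 : k + a + ((n : ℝ) - 2 - m) * b - m = 0)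
    (h2 : k ^ 2 + a ^ 2 + ((n : ℝ) - 2 - m) * b ^ 2 + m = k * n) :
    (n : ℝ) - k - a - 2 ≠ 0 ∧
    b = (k * n - k ^ 2 - k - a ^ 2 - a) / ((n : ℝ) - k - a - 2) ∧
    k ^ 2 + (2 - (n : ℝ)) * k + a ^ 2 + 2 * a - n + 2 ≠ 0 ∧
    (m : ℝ) = (n : ℝ) - 1 +
      ((n : ℝ) - k - 1) * ((n : ℝ) - 2 * a - 2) /
        (k ^ 2 + (2 - (n : ℝ)) * k + a ^ 2 + 2 * a - n + 2) := by
  have hb1 : b + 1 ≠ 0 := fun h => hb (by linarith)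
  have key1 : ((n : ℝ) - 2 - m) * (b + 1) = (n : ℝ) - k - a - 2 := by
    linear_combination h1
  have key2 : ((n : ℝ) - 2 - m) * b * (b + 1)
      = k * n - k ^ 2 - k - a ^ 2 - a := by
    linear_combination h1 + h2
  have hD : k * n - k ^ 2 - k - a ^ 2 - a = b * ((n : ℝ) - k - a - 2) := by
    linear_combination b * key1 - key2
  have hne : (n : ℝ) - k - a - 2 ≠ 0 := by
    intro h0
    have h3 : (a + 1) * (k - a) = 0 := by
      linear_combination hD + (b - k) * h0
    rcases mul_eq_zero.mp h3 with h | h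
    · exact ha (by linarith)
    · exact hka (by linarith)
  have hEeq : k ^ 2 + (2 - (n : ℝ)) * k + a ^ 2 + 2 * a - n + 2
      = -((b + 1) * ((n : ℝ) - k - a - 2)) := by
    linear_combination key2 - b * key1
  have hE : k ^ 2 + (2 - (n : ℝ)) * k + a ^ 2 + 2 * a - n + 2 ≠ 0 := by
    rw [hEeq]
    exact neg_ne_zero.mpr (mul_ne_zero hb1 hne)
  refine ⟨hne, ?_, hE, ?_⟩
  · field_simp
    linear_combination -hD
  · rw [← sub_eq_iff_eq_add', eq_div_iff hE]
    linear_combination (-((n : ℝ) - 2 - m)) * hEeq + ((n : ℝ) - k - a - 2) * key1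
end

section
/- There is no connected k-regular graph with spectrum {[k]^1, [−1]^1, [α]^m, [β]^{n−2−m}} where α and β are non-integral (quadratic irrational conjugates) and 2 ≤ m ≤ n−4: the forced values n = 2k, α = (−1+√(2k+1))/2, β = (−1−√(2k+1))/2 together with the half-partition common-neighbor formula yield |N(u)∩N(v)| = k/2 − 1 for adjacent u, v in the same part, which is not an integer since k must be odd (as (k−1)/2 ∈ ℤ). -/
open Polynomial

section AuxiliaryLemmas
open Matrix

section helpers
variable {n : ℕ}

lemma my_charmatrix_conj (P B Q : Matrix (Fin n) (Fin n) ℝ) (h1 : P * Q = 1) :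
    charmatrix (P * B * Q) =
      (C : ℝ →+* ℝ[X]).mapMatrix P * charmatrix B * (C : ℝ →+* ℝ[X]).mapMatrix Q := by
  unfold charmatrix
  rw [Matrix.mul_sub, Matrix.sub_mul]
  congr 1
  · have h2 : ((C : ℝ →+* ℝ[X]).mapMatrix P) * ((C : ℝ →+* ℝ[X]).mapMatrix Q) = 1 := by
      rw [← _root_.map_mul, h1, _root_.map_one]
    have hs : (Matrix.scalar (Fin n)) (X : ℝ[X]) = (X : ℝ[X]) • (1 : Matrix (Fin n) (Fin n) ℝ[X]) := by
      ext i j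
      simp [Matrix.scalar_apply, Matrix.smul_apply, Matrix.one_apply, Matrix.diagonal_apply]
    rw [hs, mul_smul_comm, mul_one, smul_mul_assoc, h2]
  · rw [← _root_.map_mul, ← _root_.map_mul]

lemma my_charpoly_conj {P B Q : Matrix (Fin n) (Fin n) ℝ} (h1 : P * Q = 1) :
    (P * B * Q).charpoly = B.charpoly := by
  have h2 : ((C : ℝ →+* ℝ[X]).mapMatrix P) * ((C : ℝ →+* ℝ[X]).mapMatrix Q) = 1 := by
    rw [← _root_.map_mul, h1, _root_.map_one]
  unfold Matrix.charpoly
  rw [my_charmatrix_conj P B Q h1, det_mul, det_mul]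
  calc ((C : ℝ →+* ℝ[X]).mapMatrix P).det * (charmatrix B).det * ((C : ℝ →+* ℝ[X]).mapMatrix Q).det
      = (charmatrix B).det * (((C : ℝ →+* ℝ[X]).mapMatrix P).det * ((C : ℝ →+* ℝ[X]).mapMatrix Q).det) := by ring
    _ = (charmatrix B).det := by rw [← det_mul, h2, det_one, mul_one]

lemma my_charpoly_diagonal (v : Fin n → ℝ) :
    (Matrix.diagonal v).charpoly = ∏ i, (X - C (v i)) := by
  have : charmatrix (Matrix.diagonal v) = Matrix.diagonal (fun i => (X : ℝ[X]) - C (v i)) := by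
    ext i j
    by_cases h : i = j
    · subst h; simp
    · simp [charmatrix_apply_ne _ _ _ h, Matrix.diagonal_apply_ne _ h]
  rw [Matrix.charpoly, this, det_diagonal]

lemma herm_charpoly {A : Matrix (Fin n) (Fin n) ℝ} (hA : A.IsHermitian) :
    A.charpoly = ∏ i, (X - C (hA.eigenvalues i)) := by
  have hspec := hA.spectral_theorem
  rw [Unitary.conjStarAlgAut_apply] at hspec
  have h1 : (hA.eigenvectorUnitary : Matrix (Fin n) (Fin n) ℝ) * star (hA.eigenvectorUnitary : Matrix (Fin n) (Fin n) ℝ) = 1 :=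
    Matrix.mem_unitaryGroup_iff.mp hA.eigenvectorUnitary.2
  calc A.charpoly = ((hA.eigenvectorUnitary : Matrix (Fin n) (Fin n) ℝ) *
        Matrix.diagonal (RCLike.ofReal ∘ hA.eigenvalues) *
        star (hA.eigenvectorUnitary : Matrix (Fin n) (Fin n) ℝ)).charpoly := by rw [← hspec]
    _ = (Matrix.diagonal (RCLike.ofReal ∘ hA.eigenvalues)).charpoly := my_charpoly_conj h1
    _ = ∏ i, (X - C (hA.eigenvalues i)) := by
        rw [RCLike.ofReal_real_eq_id]
        exact my_charpoly_diagonal _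

lemma herm_trace {A : Matrix (Fin n) (Fin n) ℝ} (hA : A.IsHermitian) :
    A.trace = ∑ i, hA.eigenvalues i ∧ (A * A).trace = ∑ i, (hA.eigenvalues i)^2 := by
  have hspec := hA.spectral_theorem
  rw [Unitary.conjStarAlgAut_apply] at hspec
  set U := (hA.eigenvectorUnitary : Matrix (Fin n) (Fin n) ℝ) with hU
  have h1 : U * star U = 1 := Matrix.mem_unitaryGroup_iff.mp hA.eigenvectorUnitary.2
  have h2 : star U * U = 1 := Matrix.mem_unitaryGroup_iff'.mp hA.eigenvectorUnitary.2
  set D := Matrix.diagonal (RCLike.ofReal ∘ hA.eigenvalues : Fin n → ℝ) with hD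
  constructor
  · conv_lhs => rw [hspec]
    rw [Matrix.trace_mul_cycle, h2, one_mul, hD, Matrix.trace_diagonal]
    simp
  · have : A * A = U * (D * D) * star U := by
      rw [hspec]; rw [show U * D * star U * (U * D * star U) = U * (D * (star U * U) * D) * star U by
        simp only [Matrix.mul_assoc], h2]
      simp only [Matrix.mul_one, Matrix.mul_assoc]
    conv_lhs => rw [this]
    rw [Matrix.trace_mul_cycle, h2, one_mul, hD, Matrix.diagonal_mul_diagonal, Matrix.trace_diagonal]
    simp [pow_two]

lemma unique_index {ev : Fin n → ℝ} {T : Multiset ℝ} (h : Finset.univ.val.map ev = T) (c : ℝ)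
    (hc : T.count c = 1) : ∃ i₀, ev i₀ = c ∧ ∀ j, ev j = c → j = i₀ := by
  classical
  rw [← h, Multiset.count_map] at hc
  obtain ⟨i₀, hi₀⟩ := Multiset.card_eq_one.mp hc
  have hmem : ∀ j : Fin n, (c = ev j) ↔ j ∈ ({i₀} : Multiset (Fin n)) := by
    intro j
    rw [← hi₀, Multiset.mem_filter]
    constructor
    · intro hc2; exact ⟨by simp, hc2⟩
    · intro hc2; exact hc2.2
  have h0 : ev i₀ = c := by
    have := (hmem i₀).mpr (Multiset.mem_singleton_self i₀)
    exact this.symm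
  exact ⟨i₀, h0, fun j hj => Multiset.mem_singleton.mp ((hmem j).mp hj.symm)⟩

end helpers

section eig
variable {n : ℕ} {A : Matrix (Fin n) (Fin n) ℝ}

noncomputable def wfn (hA : A.IsHermitian) (i : Fin n) : Fin n → ℝ :=
  (WithLp.equiv 2 _) (hA.eigenvectorBasis i)

lemma wfn_mulVec (hA : A.IsHermitian) (i : Fin n) :
    A *ᵥ wfn hA i = hA.eigenvalues i • wfn hA i :=
  hA.mulVec_eigenvectorBasis i

lemma wfn_dot (hA : A.IsHermitian) (i j : Fin n) :
    wfn hA i ⬝ᵥ wfn hA j = if i = j then 1 else 0 := by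
  have h := orthonormal_iff_ite.mp hA.eigenvectorBasis.orthonormal i j
  rw [PiLp.inner_apply] at h
  simpa [RCLike.inner_apply, dotProduct, wfn, mul_comm] using h

lemma wfn_expansion (hA : A.IsHermitian) (y : Fin n → ℝ) :
    ∑ i, (wfn hA i ⬝ᵥ y) • wfn hA i = y := by
  set E := WithLp.linearEquiv 2 ℝ (Fin n → ℝ) with hE
  have hs := hA.eigenvectorBasis.sum_repr (E.symm y)
  have := congrArg E hs
  rw [map_sum] at this
  have hrepr : ∀ i, hA.eigenvectorBasis.repr (E.symm y) i = wfn hA i ⬝ᵥ y := by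
    intro i
    rw [OrthonormalBasis.repr_apply_apply, PiLp.inner_apply]
    simp [RCLike.inner_apply, dotProduct, wfn]
    exact Finset.sum_congr rfl fun x _ => mul_comm _ _
  calc ∑ i, (wfn hA i ⬝ᵥ y) • wfn hA i
      = ∑ i, E (hA.eigenvectorBasis.repr (E.symm y) i • hA.eigenvectorBasis i) := by
        refine Finset.sum_congr rfl fun i _ => ?_
        rw [_root_.map_smul, hrepr]
        rfl
    _ = E (E.symm y) := this
    _ = y := E.apply_symm_apply y

lemma wfn_eig_unique (hA : A.IsHermitian) {y : Fin n → ℝ} {μ : ℝ} (hy : A *ᵥ y = μ • y)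
    (i₀ : Fin n) (hu : ∀ i, i ≠ i₀ → hA.eigenvalues i ≠ μ) :
    y = (wfn hA i₀ ⬝ᵥ y) • wfn hA i₀ := by
  have hAt : Aᵀ = A := by
    have := hA
    rwa [Matrix.IsHermitian, Matrix.conjTranspose_eq_transpose_of_trivial] at this
  have hzero : ∀ i, i ≠ i₀ → wfn hA i ⬝ᵥ y = 0 := by
    intro i hi
    have h1 : (A *ᵥ wfn hA i) ⬝ᵥ y = hA.eigenvalues i * (wfn hA i ⬝ᵥ y) := by
      rw [wfn_mulVec, smul_dotProduct]
      rfl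
    have h2 : (A *ᵥ wfn hA i) ⬝ᵥ y = μ * (wfn hA i ⬝ᵥ y) := by
      have hv : wfn hA i ᵥ* A = A *ᵥ wfn hA i := by
        calc wfn hA i ᵥ* A = wfn hA i ᵥ* Aᵀ := by rw [hAt]
          _ = A *ᵥ wfn hA i := Matrix.vecMul_transpose A (wfn hA i)
      rw [← hv, ← Matrix.dotProduct_mulVec, hy, dotProduct_smul]
      rfl
    have := h1.symm.trans h2
    rcases mul_eq_mul_right_iff.mp this with h | h
    · exact absurd h (hu i hi)
    · exact h
  have hsum : ∑ i, (wfn hA i ⬝ᵥ y) • wfn hA i = (wfn hA i₀ ⬝ᵥ y) • wfn hA i₀ :=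
    Finset.sum_eq_single i₀ (fun b _ hb => by rw [hzero b hb, zero_smul])
      (fun h => absurd (Finset.mem_univ i₀) h)
  exact (wfn_expansion hA y).symm.trans hsum

lemma diag_formula (hA : A.IsHermitian) (c : ℝ) (u : Fin n) :
    (A * A + A + c • (1 : Matrix (Fin n) (Fin n) ℝ)) u u =
      ∑ i, ((hA.eigenvalues i)^2 + hA.eigenvalues i + c) * (wfn hA i u)^2 := by
  set B := A * A + A + c • (1 : Matrix (Fin n) (Fin n) ℝ) with hB
  have hBw : ∀ i, B *ᵥ wfn hA i = ((hA.eigenvalues i)^2 + hA.eigenvalues i + c) • wfn hA i := by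
    intro i
    rw [hB, Matrix.add_mulVec, Matrix.add_mulVec, ← Matrix.mulVec_mulVec, wfn_mulVec,
      Matrix.mulVec_smul, wfn_mulVec, Matrix.smul_mulVec, Matrix.one_mulVec]
    funext v
    simp only [Pi.add_apply, Pi.smul_apply, smul_eq_mul]
    ring
  have he : (Pi.single u 1 : Fin n → ℝ) = ∑ i, (wfn hA i u) • wfn hA i := by
    rw [← wfn_expansion hA (Pi.single u 1)]
    refine Finset.sum_congr rfl fun i _ => ?_
    congr 1
    simp [dotProduct, Pi.single_apply]
  have hBu : B u u = (B *ᵥ Pi.single u 1) u := by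
    simp [Matrix.mulVec, dotProduct, Pi.single_apply]
  rw [hBu, he]
  have : B *ᵥ (∑ i, (wfn hA i u) • wfn hA i) = ∑ i, (wfn hA i u) • (B *ᵥ wfn hA i) := by
    rw [show ∀ x, B *ᵥ x = B.mulVecLin x from fun _ => rfl, map_sum]
    refine Finset.sum_congr rfl fun i _ => ?_
    rw [_root_.map_smul]
    rfl
  rw [this]
  rw [Finset.sum_apply]
  refine Finset.sum_congr rfl fun i _ => ?_
  rw [hBw]
  simp only [Pi.smul_apply, smul_eq_mul]
  ring
end eig

lemma rat_int_of_integral {x : ℚ} (h : IsIntegral ℤ ((x : ℝ))) : ∃ z : ℤ, (z : ℚ) = x := by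
  have h1 : IsIntegral ℤ x := by
    have hx : algebraMap ℚ ℝ x = (x : ℝ) := rfl
    rw [← hx] at h
    exact (isIntegral_algebraMap_iff ((algebraMap ℚ ℝ).injective)).mp h
  exact IsIntegrallyClosed.isIntegral_iff.mp h1

lemma quad_coeffs {p : ℝ[X]} {p0 : ℤ[X]} (hp : p = p0.map (Int.castRingHom ℝ))
    (hmono : p0.Monic) {α β : ℝ}
    (hsplits : p.Splits)
    (hroots : ∀ x : ℝ, p.IsRoot x → (∃ z : ℤ, (z : ℝ) = x) ∨ x = α ∨ x = β)
    (hα : p.IsRoot α)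
    (hirrα : ∀ z : ℤ, (z : ℝ) ≠ α) (hαβ : α ≠ β) :
    ∃ a b : ℤ, (a : ℝ) = α + β ∧ (b : ℝ) = α * β := by
  have hpmonic : p.Monic := by rw [hp]; exact hmono.map _
  have hpne : p ≠ 0 := hpmonic.ne_zero
  have hcomp : (algebraMap ℚ ℝ).comp (Int.castRingHom ℚ) = Int.castRingHom ℝ :=
    Subsingleton.elim _ _
  have hroot_int : ∀ x : ℝ, p.IsRoot x → IsIntegral ℤ x := by
    intro x hx
    exact ⟨p0, hmono, by
      rw [eval₂_eq_eval_map,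
        show (algebraMap ℤ ℝ) = Int.castRingHom ℝ from Subsingleton.elim _ _, ← hp]
      exact hx⟩
  have hintα : IsIntegral ℤ α := hroot_int α hα
  have hirratα : ∀ r : ℚ, algebraMap ℚ ℝ r ≠ α := by
    intro r hr
    have : IsIntegral ℤ ((r : ℝ)) := by rw [show ((r:ℝ)) = algebraMap ℚ ℝ r from rfl, hr]; exact hintα
    obtain ⟨z, hz⟩ := rat_int_of_integral this
    refine hirrα z ?_
    rw [← hr, ← hz]
    norm_cast
  have hintQα : IsIntegral ℚ α := hintα.tower_top
  set q : ℚ[X] := minpoly ℚ α with hqdef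
  have hqmonic : q.Monic := minpoly.monic hintQα
  have hdvd : q ∣ p0.map (Int.castRingHom ℚ) := by
    apply minpoly.dvd ℚ α
    rw [aeval_def, eval₂_eq_eval_map, Polynomial.map_map, hcomp, ← hp]
    exact hα
  set qR : ℝ[X] := q.map (algebraMap ℚ ℝ) with hqRdef
  have hpmap : p = (p0.map (Int.castRingHom ℚ)).map (algebraMap ℚ ℝ) := by
    rw [Polynomial.map_map, hcomp, hp]
  have hqRdvd : qR ∣ p := by rw [hpmap]; exact Polynomial.map_dvd _ hdvd
  have hqRroots_le : qR.roots ≤ p.roots := Polynomial.roots.le_of_dvd hpne hqRdvd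
  have hqRsplits : qR.Splits :=
    Polynomial.Splits.of_dvd hsplits hpne hqRdvd
  have hqRmonic : qR.Monic := hqmonic.map _
  have hqRne : qR ≠ 0 := hqRmonic.ne_zero
  have hsep : qR.Separable :=
    (PerfectField.separable_of_irreducible (minpoly.irreducible hintQα)).map
  have hnodup : qR.roots.Nodup := Polynomial.nodup_roots hsep
  have hαroot : α ∈ qR.roots := by
    rw [mem_roots hqRne]
    show qR.eval α = 0
    rw [hqRdef, eval_map, ← aeval_def]
    exact minpoly.aeval ℚ α
  have hnorat : ∀ x : ℝ, x ∈ qR.roots → ∀ z : ℤ, (z : ℝ) ≠ x := by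
    intro x hx z hzx
    have hxr : qR.eval x = 0 := isRoot_of_mem_roots hx
    have hqz : q.IsRoot ((z : ℚ)) := by
      have : qR.eval ((z:ℚ) : ℝ) = algebraMap ℚ ℝ (q.eval (z:ℚ)) := by
        rw [hqRdef, eval_map]
        exact Polynomial.eval₂_at_apply _ _
      rw [show ((z:ℚ):ℝ) = x by exact_mod_cast hzx, hxr] at this
      exact ((map_eq_zero_iff _ (algebraMap ℚ ℝ).injective).mp this.symm)
    have hXdvd : (X - Polynomial.C ((z:ℚ))) ∣ q := dvd_iff_isRoot.mpr hqz
    have hassoc : Associated (X - Polynomial.C ((z:ℚ))) q :=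
      (irreducible_X_sub_C ((z:ℚ))).associated_of_dvd (minpoly.irreducible hintQα) hXdvd
    have hqeq : q = X - Polynomial.C ((z:ℚ)) :=
      (Polynomial.eq_of_monic_of_associated hqmonic (monic_X_sub_C _) hassoc.symm)
    have : aeval α q = 0 := minpoly.aeval ℚ α
    rw [hqeq] at this
    simp only [map_sub, aeval_X, aeval_C] at this
    have : α = algebraMap ℚ ℝ ((z:ℚ)) := by linarith [sub_eq_zero.mp this]
    exact hirratα _ this.symm
  have hrootsin : ∀ x : ℝ, x ∈ qR.roots → x = α ∨ x = β := by
    intro x hx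
    have hxp : x ∈ p.roots := Multiset.mem_of_le hqRroots_le hx
    have hxr : p.IsRoot x := isRoot_of_mem_roots hxp
    rcases hroots x hxr with ⟨z, hz⟩ | h | h
    · exact absurd hz (hnorat x hx z)
    · exact Or.inl h
    · exact Or.inr h
  -- Show β ∈ qR.roots; otherwise qR = X - C α gives α "rational".
  have hβroot : β ∈ qR.roots := by
    by_contra hβ
    have hsingle : qR.roots = {α} := by
      apply Multiset.ext.mpr
      intro x
      by_cases hx1 : x = α
      · subst hx1
        rw [Multiset.count_singleton_self]
        exact le_antisymm (Multiset.nodup_iff_count_le_one.mp hnodup x) (Multiset.one_le_count_iff_mem.mpr hαroot)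
      · rw [Multiset.count_singleton, if_neg hx1]
        rw [Multiset.count_eq_zero]
        intro hmem
        rcases hrootsin x hmem with h | h
        · exact hx1 h
        · exact hβ (h ▸ hmem)
    have hqReq : qR = X - Polynomial.C α := by
      have := hqRsplits.eq_prod_roots_of_monic hqRmonic
      rw [hsingle] at this
      simpa using this
    have hcoeff : qR.coeff 0 = algebraMap ℚ ℝ (q.coeff 0) := by rw [hqRdef, Polynomial.coeff_map]
    apply hirratα (-(q.coeff 0))
    rw [map_neg, ← hcoeff, hqReq]
    simp
  have hpair : qR.roots = {α, β} := by
    apply Multiset.ext.mpr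
    intro x
    have hc2 : Multiset.count x ({α, β} : Multiset ℝ) = (if x = α then 1 else 0) + (if x = β then 1 else 0) := by
      rw [show ({α, β} : Multiset ℝ) = α ::ₘ {β} from rfl, Multiset.count_cons, Multiset.count_singleton]
      ring
    by_cases hx1 : x = α
    · subst hx1
      rw [hc2, if_pos rfl, if_neg hαβ]
      exact le_antisymm (Multiset.nodup_iff_count_le_one.mp hnodup x)
        (Multiset.one_le_count_iff_mem.mpr hαroot) |>.trans (by ring)
    · by_cases hx2 : x = β
      · subst hx2
        rw [hc2, if_neg hx1, if_pos rfl]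
        exact le_antisymm (Multiset.nodup_iff_count_le_one.mp hnodup x)
          (Multiset.one_le_count_iff_mem.mpr hβroot) |>.trans (by ring)
      · rw [hc2, if_neg hx1, if_neg hx2]
        rw [Multiset.count_eq_zero]
        intro hmem
        rcases hrootsin x hmem with h | h
        · exact hx1 h
        · exact hx2 h
  have hqRfact : qR = (X - Polynomial.C α) * (X - Polynomial.C β) := by
    have := hqRsplits.eq_prod_roots_of_monic hqRmonic
    rw [hpair] at this
    simpa [Multiset.map_cons, Multiset.prod_cons, mul_assoc] using this
  -- coefficients give rational values of α*β and α+β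
  have hb : α * β = algebraMap ℚ ℝ (q.coeff 0) := by
    have h1 : qR.coeff 0 = algebraMap ℚ ℝ (q.coeff 0) := by rw [hqRdef, Polynomial.coeff_map]
    have h2 : qR.coeff 0 = α * β := by rw [hqRfact]; simp [coeff_zero_eq_eval_zero]
    rw [← h1, h2]
  have ha : (1 - α) * (1 - β) = algebraMap ℚ ℝ (q.eval 1) := by
    have h1 : qR.eval 1 = algebraMap ℚ ℝ (q.eval 1) := by
      rw [hqRdef, eval_map, show (1:ℝ) = algebraMap ℚ ℝ 1 by simp]
      exact Polynomial.eval₂_at_apply _ _ |>.trans (by simp)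
    have h2 : qR.eval 1 = (1 - α) * (1 - β) := by rw [hqRfact]; simp
    rw [← h1, h2]
  -- β is also integral
  have hβp : p.IsRoot β := by
    exact isRoot_of_mem_roots (Multiset.mem_of_le hqRroots_le hβroot)
  have hintβ : IsIntegral ℤ β := hroot_int β hβp
  have hsumval : α + β = algebraMap ℚ ℝ (1 + q.coeff 0 - q.eval 1) := by
    rw [map_sub, map_add, ← hb, ← ha]
    push_cast
    ring
  obtain ⟨az, haz⟩ := rat_int_of_integral (x := 1 + q.coeff 0 - q.eval 1)
    (by rw [show ((1 + q.coeff 0 - q.eval 1 : ℚ) : ℝ) = α + β from hsumval.symm]; exact hintα.add hintβ)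
  obtain ⟨bz, hbz⟩ := rat_int_of_integral (x := q.coeff 0)
    (by rw [show ((q.coeff 0 : ℚ) : ℝ) = α * β from hb.symm]; exact hintα.mul hintβ)
  refine ⟨az, bz, ?_, ?_⟩
  · rw [hsumval, ← haz, eq_ratCast]; norm_cast
  · rw [hb, ← hbz, eq_ratCast]; norm_cast



set_option maxHeartbeats 1000000 in
/-- There is no connected `k`-regular graph with spectrum
`{[k]^1, [-1]^1, [α]^m, [β]^{n-2-m}}` where `α` and `β` are not integers and
`2 ≤ m ≤ n - 4`. -/
theorem stmt_13 :
    ¬ ∃ (n k m : ℕ) (G : SimpleGraph (Fin n)) (al be : ℝ),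
      G.Connected ∧ IsReg G k ∧
      2 ≤ m ∧ m ≤ n - 4 ∧
      (∀ z : ℤ, (z : ℝ) ≠ al) ∧ (∀ z : ℤ, (z : ℝ) ≠ be) ∧
      spec G = {(k : ℝ), (-1 : ℝ)} + Multiset.replicate m al +
        Multiset.replicate (n - 2 - m) be := by
  rintro ⟨n, k, m, G, α, β, hconn, hreg, hm2, hmn, hzα, hzβ, hspec⟩
  classical
  have hn6 : 6 ≤ n := by omega
  set m₂ := n - 2 - m with hm₂def
  have hnm : n = m + m₂ + 2 := by omega
  have hm₂2 : 2 ≤ m₂ := by omega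
  letI : DecidableRel G.Adj := Classical.decRel _
  set A := adjm G with hAdef
  have hAeq : A = G.adjMatrix ℝ := rfl
  have hA : A.IsHermitian := by
    rw [Matrix.IsHermitian, Matrix.conjTranspose_eq_transpose_of_trivial, hAeq]
    exact SimpleGraph.isSymm_adjMatrix G
  set ev := hA.eigenvalues with hev
  set T : Multiset ℝ := {(k : ℝ), (-1 : ℝ)} + Multiset.replicate m α + Multiset.replicate m₂ β
    with hT
  have hspecT : A.charpoly.roots = T := hspec
  have hroots : Finset.univ.val.map ev = T := by
    have h2 : A.charpoly = (Multiset.map (fun a => X - C a) (Finset.univ.val.map ev)).prod := by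
      rw [herm_charpoly hA, Finset.prod_eq_multiset_prod, Multiset.map_map]
      rfl
    rw [← hspecT, h2, Polynomial.roots_multiset_prod_X_sub_C]
  -- degrees
  have hdeg : ∀ v : Fin n, G.degree v = k := fun v => by
    rw [← hreg v, Set.ncard_eq_toFinset_card']; rfl
  have hk1 : 1 ≤ k := by
    have hv : (⟨0, by omega⟩ : Fin n) ≠ ⟨1, by omega⟩ := by simp [Fin.ext_iff]
    obtain ⟨p⟩ := hconn.preconnected ⟨0, by omega⟩ ⟨1, by omega⟩
    have hnn : ¬ p.Nil := SimpleGraph.Walk.not_nil_of_ne hv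
    have hadj := p.adj_snd hnn
    have := (G.degree_pos_iff_exists_adj _).mpr ⟨_, hadj⟩
    rw [hdeg] at this
    omega
  -- distinctness facts
  have hkα : (k : ℝ) ≠ α := by exact_mod_cast hzα k
  have hkβ : (k : ℝ) ≠ β := by exact_mod_cast hzβ k
  have h1α : (-1 : ℝ) ≠ α := by exact_mod_cast hzα (-1)
  have h1β : (-1 : ℝ) ≠ β := by exact_mod_cast hzβ (-1)
  have hk1' : (k : ℝ) ≠ -1 := by
    have : (0:ℝ) ≤ (k:ℝ) := Nat.cast_nonneg k
    linarith
  -- counts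
  have hck : T.count (k : ℝ) = 1 := by
    rw [hT]
    rw [Multiset.count_add, Multiset.count_add, Multiset.count_replicate, Multiset.count_replicate]
    rw [if_neg (fun h => hkα h.symm), if_neg (fun h => hkβ h.symm)]
    rw [show ({(k:ℝ), (-1:ℝ)} : Multiset ℝ) = (k:ℝ) ::ₘ {(-1:ℝ)} from rfl,
      Multiset.count_cons_self, Multiset.count_singleton, if_neg hk1']
  have hc1 : T.count (-1 : ℝ) = 1 := by
    rw [hT]
    rw [Multiset.count_add, Multiset.count_add, Multiset.count_replicate, Multiset.count_replicate]
    rw [if_neg (fun h => h1α h.symm), if_neg (fun h => h1β h.symm)]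
    rw [show ({(k:ℝ), (-1:ℝ)} : Multiset ℝ) = (k:ℝ) ::ₘ {(-1:ℝ)} from rfl,
      Multiset.count_cons, Multiset.count_singleton, if_pos rfl, if_neg (fun h => hk1' h.symm)]
  obtain ⟨i₀, hi₀, hi₀u⟩ := unique_index hroots _ hck
  obtain ⟨i₁, hi₁, hi₁u⟩ := unique_index hroots _ hc1
  have hi01 : i₀ ≠ i₁ := by
    intro h
    rw [h, hi₁] at hi₀
    exact hk1' hi₀.symm
  have hall : ∀ i, ev i = (k:ℝ) ∨ ev i = -1 ∨ ev i = α ∨ ev i = β := by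
    intro i
    have hmem : ev i ∈ T := by
      rw [← hroots]
      exact Multiset.mem_map_of_mem ev (Finset.mem_val.mpr (Finset.mem_univ i))
    rw [hT] at hmem
    rcases Multiset.mem_add.mp hmem with h | h
    · rcases Multiset.mem_add.mp h with h | h
      · rcases Multiset.mem_cons.mp h with h | h
        · exact Or.inl h
        · exact Or.inr (Or.inl (Multiset.mem_singleton.mp h))
      · exact Or.inr (Or.inr (Or.inl (Multiset.eq_of_mem_replicate h)))
    · exact Or.inr (Or.inr (Or.inr (Multiset.eq_of_mem_replicate h)))
  -- trace equations
  have hsum_ev : ∑ i, ev i = (k:ℝ) + (-1) + m * α + m₂ * β := by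
    rw [Finset.sum_eq_multiset_sum, hroots, hT]
    rw [Multiset.sum_add, Multiset.sum_add, Multiset.sum_replicate, Multiset.sum_replicate,
      show ({(k:ℝ), (-1:ℝ)} : Multiset ℝ) = (k:ℝ) ::ₘ {(-1:ℝ)} from rfl,
      Multiset.sum_cons, Multiset.sum_singleton]
    push_cast
    ring
  have hsum_ev2 : ∑ i, (ev i)^2 = (k:ℝ)^2 + 1 + m * α^2 + m₂ * β^2 := by
    have h1 : Finset.univ.val.map (fun i => (ev i)^2) = T.map (fun x => x^2) := by
      rw [← hroots, Multiset.map_map]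
      rfl
    rw [Finset.sum_eq_multiset_sum, h1, hT]
    rw [Multiset.map_add, Multiset.map_add, Multiset.map_replicate, Multiset.map_replicate,
      show ({(k:ℝ), (-1:ℝ)} : Multiset ℝ) = (k:ℝ) ::ₘ {(-1:ℝ)} from rfl,
      Multiset.map_cons, Multiset.map_singleton,
      Multiset.sum_add, Multiset.sum_add, Multiset.sum_replicate, Multiset.sum_replicate,
      Multiset.sum_cons, Multiset.sum_singleton]
    push_cast
    ring
  have htr0 : A.trace = 0 := by rw [hAeq]; exact SimpleGraph.trace_adjMatrix ℝ G
  have htr2 : (A * A).trace = (n : ℝ) * k := by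
    have hdiag : ∀ v : Fin n, (A * A) v v = (k : ℝ) := by
      intro v
      rw [hAeq, SimpleGraph.adjMatrix_mul_self_apply_self, hdeg v]
    have htr : (A * A).trace = ∑ v : Fin n, (A * A) v v := rfl
    rw [htr, Finset.sum_congr rfl (fun v _ => hdiag v), Finset.sum_const, Finset.card_univ,
      Fintype.card_fin, nsmul_eq_mul]
  have T1 : (k:ℝ) + (-1) + m * α + m₂ * β = 0 := by
    rw [← hsum_ev, ← (herm_trace hA).1, htr0]
  have T2 : (k:ℝ)^2 + 1 + m * α^2 + m₂ * β^2 = (n:ℝ) * k := by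
    rw [← hsum_ev2, ← (herm_trace hA).2, htr2]
  -- integrality
  set p0 : Polynomial ℤ := (G.adjMatrix ℤ).charpoly with hp0
  have hpmap : A.charpoly = p0.map (Int.castRingHom ℝ) := by
    have hAmap : A = (G.adjMatrix ℤ).map (Int.castRingHom ℝ) := by
      ext i j
      simp [hAeq, SimpleGraph.adjMatrix_apply, Matrix.map_apply, apply_ite]
    rw [hAmap, Matrix.charpoly_map]
  have hcharne : A.charpoly ≠ 0 := (Matrix.charpoly_monic A).ne_zero
  have hcardT : Multiset.card T = n := by
    rw [hT]
    simp [Multiset.card_replicate]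
    omega
  have hsplits : A.charpoly.Splits := by
    rw [Polynomial.splits_iff_card_roots, hspecT, hcardT, Matrix.charpoly_natDegree_eq_dim,
      Fintype.card_fin]
  have hrootT : ∀ x : ℝ, A.charpoly.IsRoot x → (∃ z : ℤ, (z:ℝ) = x) ∨ x = α ∨ x = β := by
    intro x hx
    have : x ∈ T := by
      rw [← hspecT]
      exact (Polynomial.mem_roots hcharne).mpr hx
    rw [hT] at this
    rcases Multiset.mem_add.mp this with h | h
    · rcases Multiset.mem_add.mp h with h | h
      · rcases Multiset.mem_cons.mp h with h | h
        · exact Or.inl ⟨(k:ℤ), by exact_mod_cast h.symm⟩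
        · exact Or.inl ⟨-1, by exact_mod_cast (Multiset.mem_singleton.mp h).symm⟩
      · exact Or.inr (Or.inl (Multiset.eq_of_mem_replicate h))
    · exact Or.inr (Or.inr (Multiset.eq_of_mem_replicate h))
  have hαT : α ∈ T := by
    rw [hT]
    refine Multiset.mem_add.mpr (Or.inl (Multiset.mem_add.mpr (Or.inr ?_)))
    exact Multiset.mem_replicate.mpr ⟨by omega, rfl⟩
  have hαroot : A.charpoly.IsRoot α := Polynomial.isRoot_of_mem_roots (by rw [hspecT]; exact hαT)
  have hintα : IsIntegral ℤ α := ⟨p0, Matrix.charpoly_monic _, by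
    rw [eval₂_eq_eval_map, show (algebraMap ℤ ℝ) = Int.castRingHom ℝ from Subsingleton.elim _ _,
      ← hpmap]
    exact hαroot⟩
  have hirratα : ∀ r : ℚ, (r:ℝ) ≠ α := by
    intro r hr
    obtain ⟨z, hz⟩ := rat_int_of_integral (x := r) (by rw [hr]; exact hintα)
    refine hzα z ?_
    rw [← hr, ← hz]
    norm_cast
  -- case α = β is impossible
  have hαβ : α ≠ β := by
    intro h
    have hmm : ((m:ℝ) + m₂) ≠ 0 := by
      have : (2:ℝ) ≤ (m:ℝ) := by exact_mod_cast hm2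
      have : (0:ℝ) ≤ (m₂:ℝ) := Nat.cast_nonneg _
      linarith
    refine hirratα ((1 - (k:ℚ)) / ((m:ℚ) + m₂)) ?_
    rw [← h] at T1
    push_cast
    field_simp
    linarith [T1]
  -- quadratic coefficients
  obtain ⟨az, bz, haz, hbz⟩ := quad_coeffs hpmap (Matrix.charpoly_monic _) hsplits hrootT hαroot hzα hαβ
  -- m₂ = m
  have hm₂m : m₂ = m := by
    by_contra hne
    have hmm : (m:ℝ) - m₂ ≠ 0 := by
      intro h
      have h2 : (m:ℝ) = (m₂:ℝ) := sub_eq_zero.mp h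
      have h3 : m = m₂ := by exact_mod_cast h2
      exact hne h3.symm
    refine hirratα ((1 - (k:ℚ) - (m₂:ℚ) * az) / ((m:ℚ) - m₂)) ?_
    have hβval : β = (az:ℝ) - α := by linarith [haz]
    rw [hβval] at T1
    push_cast
    field_simp
    linarith [T1]
  rw [hm₂m] at T1 T2 hnm
  have hn2m : n = 2*m + 2 := by omega
  -- integer equations
  have E1 : (k:ℤ) - 1 + m * az = 0 := by
    have R1 : (k:ℝ) - 1 + m * az = 0 := by
      rw [haz]
      linear_combination T1
    exact_mod_cast R1
  have E2 : (k:ℤ)^2 + 1 + m * (az^2 - 2*bz) = (2*m+2) * k := by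
    have hp2 : α^2 + β^2 = (az:ℝ)^2 - 2*(bz:ℝ) := by rw [haz, hbz]; ring
    have hcast : (n:ℝ) = 2*(m:ℝ) + 2 := by rw [hn2m]; push_cast; ring
    have R2 : (k:ℝ)^2 + 1 + m * ((az:ℝ)^2 - 2*bz) = (2*(m:ℝ)+2) * k := by
      rw [← hcast]
      linear_combination T2 - (m:ℝ) * hp2
    exact_mod_cast R2
  have hDpos : 1 ≤ az^2 - 4*bz := by
    have hDr : (az:ℝ)^2 - 4*bz = (α - β)^2 := by rw [haz, hbz]; ring
    have hne : α - β ≠ 0 := sub_ne_zero.mpr hαβ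
    have h0 : (0:ℝ) < (α - β)^2 := by positivity
    rw [← hDr] at h0
    have : (0:ℤ) < az^2 - 4*bz := by exact_mod_cast h0
    omega
  have hmz2 : (2:ℤ) ≤ (m:ℤ) := by exact_mod_cast hm2
  have hkz1 : (1:ℤ) ≤ (k:ℤ) := by exact_mod_cast hk1
  rcases show az ≤ -2 ∨ az = -1 ∨ az = 0 ∨ 1 ≤ az by omega with hcase | hcase | hcase | hcase
  · -- az ≤ -2 : discriminant would be nonpositive
    have hK : (k:ℤ) = 1 - m * az := by linarith
    rw [hK] at E2
    have hfac : (m:ℤ) * (2*bz - (m*az^2 + az^2 + 2*m*az - 2)) = 0 := by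
      linear_combination -E2
    have h2b : 2*bz = m*az^2 + az^2 + 2*m*az - 2 := by
      rcases mul_eq_zero.mp hfac with h | h
      · exfalso; omega
      · linarith
    have hprod : (0:ℤ) ≤ 2*(m:ℤ) * (az * (az + 2)) := by
      have h1 : (0:ℤ) ≤ az * (az + 2) := by
        nlinarith [mul_nonneg (by omega : (0:ℤ) ≤ -az) (by omega : (0:ℤ) ≤ -(az+2))]
      have h2 : (0:ℤ) ≤ 2*(m:ℤ) := by omega
      exact mul_nonneg h2 h1
    have h4 : (4:ℤ) ≤ az * az := by nlinarith
    nlinarith [hDpos, h2b, hprod, h4]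
  · -- az = -1 : structural contradiction
    rw [hcase] at E1 E2 haz
    have hsum1 : α + β = -1 := by rw [← haz]; norm_num
    have hKm : (k:ℤ) = m + 1 := by linarith
    rw [hKm] at E2
    have hfac : (m:ℤ) * (2*bz + m + 1) = 0 := by linear_combination -E2
    have h2bz : 2*bz = -(m:ℤ) - 1 := by
      rcases mul_eq_zero.mp hfac with h | h
      · exfalso; omega
      · linarith
    -- now the eigenvector half-partition argument
    set c₀ : ℝ := (bz : ℝ) with hc₀
    have hprodα : α * β = c₀ := hbz.symm
    have hqα : α^2 + α + c₀ = 0 := by linear_combination α * hsum1 - hprodα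
    have hqβ : β^2 + β + c₀ = 0 := by linear_combination β * hsum1 - hprodα
    have hbzne : c₀ ≠ 0 := by
      have h1 : bz ≠ 0 := by omega
      have h2 : (bz:ℝ) ≠ 0 := Int.cast_ne_zero.mpr h1
      rw [hc₀]
      exact h2
    have hone : A *ᵥ (fun _ : Fin n => (1:ℝ)) = (k:ℝ) • (fun _ : Fin n => (1:ℝ)) := by
      funext v
      have h1 : (A *ᵥ (fun _ : Fin n => (1:ℝ))) v = (G.adjMatrix ℝ *ᵥ Function.const _ (1:ℝ)) v := rfl
      rw [h1, SimpleGraph.adjMatrix_mulVec_const_apply, hdeg v]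
      simp
    have h1prop := wfn_eig_unique hA hone i₀ (fun i hi h => hi (hi₀u i h))
    set cc := wfn hA i₀ ⬝ᵥ (fun _ : Fin n => (1:ℝ)) with hccdef
    have hu₀ : (0:ℕ) < n := by omega
    set u₀ : Fin n := ⟨0, hu₀⟩ with hu₀def
    have hccne : cc ≠ 0 := by
      intro h
      have := congrFun h1prop u₀
      rw [h, zero_smul] at this
      simpa using this
    have hwi₀ : ∀ u, wfn hA i₀ u = 1 / cc := by
      intro u
      have hcu := congrFun h1prop u
      rw [Pi.smul_apply, smul_eq_mul] at hcu
      rw [eq_div_iff hccne]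
      linarith [hcu]
    have hq0 : ∀ i, i ≠ i₀ → i ≠ i₁ → (ev i)^2 + ev i + c₀ = 0 := by
      intro i h0 h1
      rcases hall i with h | h | h | h
      · exact absurd (hi₀u i h) h0
      · exact absurd (hi₁u i h) h1
      · rw [h]; exact hqα
      · rw [h]; exact hqβ
    have hBdiag : ∀ u, (k:ℝ) + c₀ =
        ((k:ℝ)^2 + (k:ℝ) + c₀) * (1/cc)^2 + c₀ * (wfn hA i₁ u)^2 := by
      intro u
      have hd := diag_formula hA c₀ u
      have hLHS : (A*A + A + c₀ • (1 : Matrix (Fin n) (Fin n) ℝ)) u u = (k:ℝ) + c₀ := by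
        rw [Matrix.add_apply, Matrix.add_apply, Matrix.smul_apply, Matrix.one_apply_eq]
        have hAA : (A*A) u u = (k:ℝ) := by
          rw [hAeq, SimpleGraph.adjMatrix_mul_self_apply_self, hdeg u]
        have hA0 : A u u = 0 := by
          rw [hAeq, SimpleGraph.adjMatrix_apply, if_neg (G.irrefl)]
        rw [hAA, hA0]
        simp
      rw [hLHS] at hd
      have hvan : ∀ x ∈ Finset.univ, x ∉ ({i₀, i₁} : Finset (Fin n)) →
          ((ev x)^2 + ev x + c₀) * (wfn hA x u)^2 = 0 := by
        intro x _ hx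
        simp only [Finset.mem_insert, Finset.mem_singleton] at hx
        push_neg at hx
        rw [hq0 x hx.1 hx.2, zero_mul]
      rw [hd, ← Finset.sum_subset (Finset.subset_univ ({i₀, i₁} : Finset (Fin n))) hvan]
      rw [Finset.sum_pair hi01, hi₀, hi₁, hwi₀ u]
      ring
    have hnormx : ∑ u, (wfn hA i₁ u)^2 = 1 := by
      have hdot := wfn_dot hA i₁ i₁
      rw [if_pos rfl] at hdot
      rw [← hdot]
      exact Finset.sum_congr rfl fun u _ => by rw [pow_two]
    have hconst : ∀ u, (wfn hA i₁ u)^2 = (wfn hA i₁ u₀)^2 := by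
      intro u
      have h1 := hBdiag u
      have h2 := hBdiag u₀
      have h3 : c₀ * (wfn hA i₁ u)^2 = c₀ * (wfn hA i₁ u₀)^2 := by linarith
      exact mul_left_cancel₀ hbzne h3
    have hxu₀ : (wfn hA i₁ u₀)^2 = 1 / n := by
      have hsc : ∑ u : Fin n, (wfn hA i₁ u)^2 = (n : ℝ) * (wfn hA i₁ u₀)^2 := by
        rw [Finset.sum_congr rfl (fun u _ => hconst u), Finset.sum_const, Finset.card_univ,
          Fintype.card_fin, nsmul_eq_mul]
      rw [hnormx] at hsc
      have hnne : (n:ℝ) ≠ 0 := by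
        have : (0:ℝ) < (n:ℝ) := by exact_mod_cast hu₀
        linarith
      field_simp
      linarith [hsc]
    have hxne : wfn hA i₁ u₀ ≠ 0 := by
      intro h
      rw [h] at hxu₀
      have : (0:ℝ) < 1/(n:ℝ) := by positivity
      simp at hxu₀
      exact absurd hxu₀.symm (by positivity)
    have hdich : ∀ u, wfn hA i₁ u = wfn hA i₁ u₀ ∨ wfn hA i₁ u = -(wfn hA i₁ u₀) :=
      fun u => sq_eq_sq_iff_eq_or_eq_neg.mp (hconst u)
    have hAx : A *ᵥ wfn hA i₁ = (-1:ℝ) • wfn hA i₁ := by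
      have h := wfn_mulVec hA i₁
      rw [show hA.eigenvalues i₁ = (-1:ℝ) from hi₁] at h
      exact h
    have hsum_nb : ∑ v ∈ G.neighborFinset u₀, wfn hA i₁ v = - wfn hA i₁ u₀ := by
      have hc := congrFun hAx u₀
      rw [Pi.smul_apply, smul_eq_mul] at hc
      have hl : (A *ᵥ wfn hA i₁) u₀ = ∑ v ∈ G.neighborFinset u₀, wfn hA i₁ v :=
        SimpleGraph.adjMatrix_mulVec_apply _ _ _
      rw [hl] at hc
      rw [hc]
      ring
    set N := G.neighborFinset u₀ with hN
    set S₁ := N.filter (fun v => wfn hA i₁ v = wfn hA i₁ u₀) with hS₁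
    set S₂ := N.filter (fun v => ¬ wfn hA i₁ v = wfn hA i₁ u₀) with hS₂
    have hsplit : ∑ v ∈ S₁, wfn hA i₁ v + ∑ v ∈ S₂, wfn hA i₁ v
        = ∑ v ∈ N, wfn hA i₁ v :=
      Finset.sum_filter_add_sum_filter_not N _ _
    have hS₁sum : ∑ v ∈ S₁, wfn hA i₁ v = (S₁.card : ℝ) * wfn hA i₁ u₀ := by
      rw [Finset.sum_congr rfl (fun v hv => (Finset.mem_filter.mp hv).2), Finset.sum_const,
        nsmul_eq_mul]
    have hS₂sum : ∑ v ∈ S₂, wfn hA i₁ v = - ((S₂.card : ℝ) * wfn hA i₁ u₀) := by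
      have hS₂v : ∀ v ∈ S₂, wfn hA i₁ v = -(wfn hA i₁ u₀) := by
        intro v hv
        rcases hdich v with h | h
        · exact absurd h (Finset.mem_filter.mp hv).2
        · exact h
      rw [Finset.sum_congr rfl hS₂v, Finset.sum_const, nsmul_eq_mul]
      ring
    have hcards : S₁.card + S₂.card = k := by
      rw [hS₁, hS₂, Finset.card_filter_add_card_filter_not]
      exact hdeg u₀
    have hkey : ((S₁.card : ℝ) - S₂.card) * wfn hA i₁ u₀ = (-1) * wfn hA i₁ u₀ := by
      rw [hS₁sum, hS₂sum, hsum_nb] at hsplit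
      ring_nf
      ring_nf at hsplit
      linarith [hsplit]
    have hdiff : (S₁.card : ℝ) - S₂.card = -1 := mul_right_cancel₀ hxne hkey
    have hdiffz : (S₁.card : ℤ) - S₂.card = -1 := by exact_mod_cast hdiff
    omega
  · -- az = 0
    rw [hcase] at E1 E2 haz
    have hkk : (k:ℤ) = 1 := by linarith
    rw [hkk] at E2
    have hfac : (2*(m:ℤ)) * (bz + 1) = 0 := by linear_combination -E2
    have hb1 : bz = -1 := by
      rcases mul_eq_zero.mp hfac with h | h
      · exfalso; omega
      · linarith
    have hsum0 : α + β = 0 := by rw [← haz]; norm_num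
    have hprod1 : α * β = -1 := by rw [← hbz, hb1]; norm_num
    have hfac2 : (α - 1) * (α + 1) = 0 := by linear_combination α * hsum0 - hprod1
    rcases mul_eq_zero.mp hfac2 with h | h
    · exact hzα 1 (by push_cast; linarith)
    · exact hzα (-1) (by push_cast; linarith)
  · -- 1 ≤ az
    have h2 : (2:ℤ) ≤ m * az := by nlinarith
    linarith

end AuxiliaryLemmas
end

section
/- Let n, k, α be integers with 3 ≤ k ≤ n−2, α ≥ 1, and β = −(k(n−k)+(k−1)α−1)/((n−2)α+k−1) ≤ −2 a (rational) number such that c := −2(1+α)(1+β)/n is a positive integer. Then c < 4. -/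
/-- If `3 ≤ k ≤ n-2`, `α ≥ 1`, `β = -(k(n-k)+(k-1)α-1)/((n-2)α+k-1) ≤ -2`, and
`c = -2(1+α)(1+β)/n` is a positive integer, then `c < 4`. -/
theorem stmt_14 (n k a : ℤ) (hk1 : 3 ≤ k) (hk2 : k ≤ n - 2) (ha : 1 ≤ a)
    (b : ℝ)
    (hb : b = -((k : ℝ) * ((n : ℝ) - k) + ((k : ℝ) - 1) * a - 1) /
      (((n : ℝ) - 2) * a + k - 1))
    (hb2 : b ≤ -2)
    (c : ℤ) (hc : (c : ℝ) = -2 * (1 + (a : ℝ)) * (1 + b) / n) (hcpos : 0 < c) :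
    c < 4 := by
  have hk1' : (3:ℝ) ≤ (k:ℝ) := by exact_mod_cast hk1
  have hk2' : (k:ℝ) ≤ (n:ℝ) - 2 := by
    have : ((k:ℝ)) ≤ ((n - 2 : ℤ) : ℝ) := by exact_mod_cast hk2
    push_cast at this; linarith
  have ha' : (1:ℝ) ≤ (a:ℝ) := by exact_mod_cast ha
  have hD : 0 < ((n:ℝ) - 2) * a + k - 1 := by nlinarith
  have hN : 0 < (n:ℝ) := by nlinarith
  have key : (c:ℝ) * ((n:ℝ) * (((n:ℝ) - 2) * a + k - 1)) =
      2 * (1 + (a:ℝ)) * ((n:ℝ) - k - 1) * ((k:ℝ) - a) := by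
    rw [hc, hb]
    have hX := div_mul_cancel₀ (-((k:ℝ) * ((n:ℝ) - k) + ((k:ℝ) - 1) * a - 1)) hD.ne'
    rw [div_mul_eq_mul_div, div_eq_iff hN.ne']
    linear_combination (-2 * (1 + (a:ℝ)) * n) * hX
  have hc1 : (1:ℝ) ≤ (c:ℝ) := by exact_mod_cast hcpos
  have hKA : 0 < (k:ℝ) - a := by
    by_contra h
    push_neg at h
    nlinarith [mul_pos hN hD,
      mul_nonneg (by linarith : (0:ℝ) ≤ (c:ℝ) - 1) (mul_pos hN hD).le,
      mul_nonneg (by nlinarith : (0:ℝ) ≤ 2 * (1 + (a:ℝ)) * ((n:ℝ) - k - 1))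
        (by linarith : (0:ℝ) ≤ (a:ℝ) - k)]
  have h1 : (1 + (a:ℝ)) * ((k:ℝ) - a) ≤ ((n:ℝ) - 2) * a + k - 2 := by
    nlinarith [mul_le_mul_of_nonneg_left hk2' (by linarith : (0:ℝ) ≤ (a:ℝ))]
  have hlt : (c:ℝ) < 4 := by
    nlinarith [mul_pos hN hD, mul_pos hKA hD]
  exact_mod_cast hlt
end
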